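/- arXiv:1505.01014 — 6 statements merged into one kernel-verified Lean document; each statement's English description precedes it below -/
import Mathlib

section
/- Duality for height-one multiple zeta values: for all integers r, k ≥ 1, ζ(1,...,1,k+1) with r−1 leading ones equals ζ(1,...,1,r+1) with k−1 leading ones. -/
open scoped BigOperators

/-- The multiple zeta value ζ(k₁,…,k_r) = ∑_{0<m₁<⋯<m_r} ∏ 1/m_i^{k_i}. -/
noncomputable def mzeta (ks : List ℕ) : ℝ :=
  ∑' f : {f : Fin ks.length → ℕ+ // StrictMono f},
    ∏ i : Fin ks.length, (1 : ℝ) / ((f.1 i : ℕ) : ℝ) ^ ks.get i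

/-- The multiple zeta-star value ζ*(k₁,…,k_r) = ∑_{0<m₁≤⋯≤m_r} ∏ 1/m_i^{k_i}. -/
noncomputable def mzetaStar (ks : List ℕ) : ℝ :=
  ∑' f : {f : Fin ks.length → ℕ+ // Monotone f},
    ∏ i : Fin ks.length, (1 : ℝ) / ((f.1 i : ℕ) : ℝ) ^ ks.get i

open scoped ENNReal

namespace HtOne

/-! ### The connector `1/(m+n choose m)` and the telescoping transport relation
(Seki–Yamamoto connected-sum method). -/

noncomputable def cc (m n : ℕ) : ℝ≥0∞ := (((m+n).choose m : ℕ) : ℝ≥0∞)⁻¹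

lemma inv_nat_eq_ofReal {j : ℕ} (h : 0 < j) : ((j:ℝ≥0∞))⁻¹ = ENNReal.ofReal (1/(j:ℝ)) := by
  rw [one_div, ENNReal.ofReal_inv_of_pos (by positivity), ENNReal.ofReal_natCast]

lemma cc_symm (m n : ℕ) : cc m n = cc n m := by
  unfold cc
  rw [Nat.add_comm n m, ← Nat.choose_symm (Nat.le_add_right m n)]
  simp

lemma cc_zero_right (m : ℕ) : cc m 0 = 1 := by simp [cc]

lemma choose_lb (m n : ℕ) (hn : 1 ≤ n) : m + 1 ≤ (m+n).choose m := by
  induction n with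
  | zero => omega
  | succ n ih =>
    rcases Nat.eq_or_lt_of_le hn with h | h
    · simp [← h]
    · exact le_trans (ih (by omega)) (Nat.choose_le_choose m (by omega))

lemma cc_le (m n : ℕ) (hn : 1 ≤ n) : cc m n ≤ (((m+1 : ℕ)):ℝ≥0∞)⁻¹ := by
  unfold cc
  exact ENNReal.inv_le_inv.mpr (by exact_mod_cast choose_lb m n hn)

lemma key_id (m n : ℕ) (hn : 1 ≤ n) :
    ((n:ℝ≥0∞))⁻¹ * cc m n =
      ((n:ℝ≥0∞))⁻¹ * cc (m+1) n + (((m+1:ℕ)):ℝ≥0∞)⁻¹ * cc (m+1) n := by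
  have hnat : (m+1) * ((m+1)+n).choose (m+1) = (m+n+1) * ((m+n).choose m) := by
    have h0 := Nat.add_one_mul_choose_eq (m+n) m
    have h1 : (m+n).succ.choose m.succ = ((m+1)+n).choose (m+1) := by
      congr 1; omega
    rw [h1] at h0
    calc (m+1) * ((m+1)+n).choose (m+1) = ((m+1)+n).choose (m+1) * (m+1) := mul_comm _ _
      _ = (m+n).succ * (m+n).choose m := h0.symm
      _ = (m+n+1) * ((m+n).choose m) := rfl
  have ha : 0 < (m+n).choose m := Nat.choose_pos (Nat.le_add_right m n)
  have hb : 0 < ((m+1)+n).choose (m+1) := Nat.choose_pos (Nat.le_add_right _ n)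
  unfold cc
  rw [inv_nat_eq_ofReal hn, inv_nat_eq_ofReal ha, inv_nat_eq_ofReal hb,
    inv_nat_eq_ofReal (by omega : 0 < m+1),
    ← ENNReal.ofReal_mul (by positivity), ← ENNReal.ofReal_mul (by positivity),
    ← ENNReal.ofReal_mul (by positivity), ← ENNReal.ofReal_add (by positivity) (by positivity)]
  congr 1
  have hnR : (0:ℝ) < n := by exact_mod_cast hn
  have haR : (0:ℝ) < ((m+n).choose m : ℝ) := by exact_mod_cast ha
  have hbR : (0:ℝ) < (((m+1)+n).choose (m+1) : ℝ) := by exact_mod_cast hb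
  have hnatR : ((m:ℝ)+1) * (((m+1)+n).choose (m+1) : ℝ)
      = ((m:ℝ)+(n:ℝ)+1) * ((m+n).choose m : ℝ) := by exact_mod_cast hnat
  have hm1 : ((m+1:ℕ):ℝ) = (m:ℝ)+1 := by push_cast; ring
  rw [hm1]
  field_simp
  linear_combination hnatR

lemma transport (n p : ℕ) (hn : 1 ≤ n) :
    ∑' i:ℕ, (((p+1+i : ℕ)):ℝ≥0∞)⁻¹ * cc (p+1+i) n = ((n:ℝ≥0∞))⁻¹ * cc p n := by
  set t : ℕ → ℝ≥0∞ := fun m => ((m:ℕ):ℝ≥0∞)⁻¹ * cc m n with ht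
  set a : ℕ → ℝ≥0∞ := fun m => ((n:ℝ≥0∞))⁻¹ * cc m n with ha
  have hstep : ∀ m, a m = a (m+1) + t (m+1) := fun m => key_id m n hn
  have hpartial : ∀ N, a p = (∑ i ∈ Finset.range N, t (p+1+i)) + a (p+N) := by
    intro N
    induction N with
    | zero => simp
    | succ N ih =>
      rw [Finset.sum_range_succ, ih, hstep (p+N),
        show p + 1 + N = p + N + 1 from by omega,
        add_comm (a (p+N+1)) (t (p+N+1)), ← add_assoc]
      rfl
  have htend0 : Filter.Tendsto (fun N => a (p+N)) Filter.atTop (nhds 0) := by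
    apply tendsto_of_tendsto_of_tendsto_of_le_of_le (g := fun _ => 0)
      (h := fun N : ℕ => ((N:ℝ≥0∞))⁻¹) tendsto_const_nhds ENNReal.tendsto_inv_nat_nhds_zero
    · intro N; exact zero_le
    · intro N
      calc a (p+N) ≤ 1 * (((p+N+1 : ℕ)):ℝ≥0∞)⁻¹ := by
            apply mul_le_mul
            · exact ENNReal.inv_le_one.mpr (by exact_mod_cast Nat.one_le_cast.mpr hn)
            · exact cc_le _ _ hn
            · exact zero_le
            · exact zero_le
        _ ≤ ((N:ℝ≥0∞))⁻¹ := by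
            rw [one_mul]
            exact ENNReal.inv_le_inv.mpr (by exact_mod_cast (by omega : N ≤ p + N + 1))
  have htend : Filter.Tendsto (fun N => (∑ i ∈ Finset.range N, t (p+1+i)) + a (p+N))
      Filter.atTop (nhds ((∑' i:ℕ, t (p+1+i)) + 0)) :=
    Filter.Tendsto.add (ENNReal.tendsto_nat_tsum _) htend0
  have heq : (fun N => (∑ i ∈ Finset.range N, t (p+1+i)) + a (p+N)) = fun _ => a p :=
    funext fun N => (hpartial N).symm
  rw [heq] at htend
  have := tendsto_nhds_unique tendsto_const_nhds htend
  rw [add_zero] at this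
  exact this.symm

/-! ### The nested-sum operator `H` -/

noncomputable def H (F : ℕ → ℝ≥0∞) : ℕ → ℕ → ℝ≥0∞
  | 0, p => F p
  | (j+1), p => ∑' i:ℕ, (((p+1+i : ℕ)):ℝ≥0∞)⁻¹ * H F j (p+1+i)

lemma H_zero (F : ℕ → ℝ≥0∞) (p : ℕ) : H F 0 p = F p := rfl
lemma H_succ (F : ℕ → ℝ≥0∞) (j p : ℕ) :
    H F (j+1) p = ∑' i:ℕ, (((p+1+i : ℕ)):ℝ≥0∞)⁻¹ * H F j (p+1+i) := rfl

lemma H_congr_gt {F G : ℕ → ℝ≥0∞} (j : ℕ) : ∀ p, (∀ q, p < q → F q = G q) →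
    H F (j+1) p = H G (j+1) p := by
  induction j with
  | zero =>
    intro p h
    rw [H_succ, H_succ]
    exact tsum_congr fun i => by rw [H_zero, H_zero, h _ (by omega)]
  | succ j ih =>
    intro p h
    rw [H_succ, H_succ]
    exact tsum_congr fun i => by rw [ih (p+1+i) (fun q hq => h q (by omega))]

lemma H_mul (a : ℝ≥0∞) (F : ℕ → ℝ≥0∞) (j : ℕ) : ∀ p,
    H (fun q => a * F q) j p = a * H F j p := by
  induction j with
  | zero => intro p; rfl
  | succ j ih =>
    intro p
    rw [H_succ, H_succ, ← ENNReal.tsum_mul_left]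
    exact tsum_congr fun i => by rw [ih]; ring

lemma H_tsum {ι : Type*} (F : ι → ℕ → ℝ≥0∞) (j : ℕ) : ∀ p,
    H (fun q => ∑' x, F x q) j p = ∑' x, H (F x) j p := by
  induction j with
  | zero => intro p; rfl
  | succ j ih =>
    intro p
    rw [H_succ]
    calc ∑' i:ℕ, (((p+1+i : ℕ)):ℝ≥0∞)⁻¹ * H (fun q => ∑' x, F x q) j (p+1+i)
        = ∑' (i:ℕ) (x:ι), (((p+1+i : ℕ)):ℝ≥0∞)⁻¹ * H (F x) j (p+1+i) := by
          exact tsum_congr fun i => by rw [ih, ENNReal.tsum_mul_left]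
      _ = ∑' (x:ι) (i:ℕ), (((p+1+i : ℕ)):ℝ≥0∞)⁻¹ * H (F x) j (p+1+i) :=
          ENNReal.tsum_comm
      _ = ∑' x, H (F x) (j+1) p := rfl

lemma H_swap (G : ℕ → ℕ → ℝ≥0∞) (b q : ℕ) (a : ℕ) : ∀ p,
    H (fun m => H (G m) b q) a p = H (fun n => H (fun m' => G m' n) a p) b q := by
  induction a with
  | zero => intro p; rfl
  | succ a ih =>
    intro p
    rw [H_succ]
    calc ∑' i:ℕ, (((p+1+i : ℕ)):ℝ≥0∞)⁻¹ * H (fun m => H (G m) b q) a (p+1+i)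
        = ∑' i:ℕ, (((p+1+i : ℕ)):ℝ≥0∞)⁻¹ *
            H (fun n => H (fun m' => G m' n) a (p+1+i)) b q := by
          exact tsum_congr fun i => by rw [ih]
      _ = ∑' i:ℕ, H (fun n => (((p+1+i : ℕ)):ℝ≥0∞)⁻¹ *
            H (fun m' => G m' n) a (p+1+i)) b q := by
          exact tsum_congr fun i => (H_mul _ _ _ _).symm
      _ = H (fun n => ∑' i:ℕ, (((p+1+i : ℕ)):ℝ≥0∞)⁻¹ *
            H (fun m' => G m' n) a (p+1+i)) b q := (H_tsum _ _ _).symm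
      _ = H (fun n => H (fun m' => G m' n) (a+1) p) b q := rfl

lemma H_step (F : ℕ → ℝ≥0∞) (j : ℕ) : ∀ p,
    H F (j+1) p = H (fun q => ∑' i:ℕ, (((q+1+i : ℕ)):ℝ≥0∞)⁻¹ * F (q+1+i)) j p := by
  induction j with
  | zero => intro p; rfl
  | succ j ih =>
    intro p
    rw [H_succ, H_succ (fun q => _)]
    exact tsum_congr fun i => by rw [ih]

lemma claimA (m : ℕ) (hm : 1 ≤ m) (k : ℕ) :
    H (fun n => cc m n) k 0 = (((m:ℕ):ℝ≥0∞)⁻¹)^k := by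
  induction k with
  | zero => rw [H_zero, cc_zero_right, pow_zero]
  | succ k ih =>
    rw [H_step]
    have hcong : ∀ q : ℕ, (∑' i:ℕ, (((q+1+i : ℕ)):ℝ≥0∞)⁻¹ * cc m (q+1+i))
        = ((m:ℕ):ℝ≥0∞)⁻¹ * cc m q := by
      intro q
      calc ∑' i:ℕ, (((q+1+i : ℕ)):ℝ≥0∞)⁻¹ * cc m (q+1+i)
          = ∑' i:ℕ, (((q+1+i : ℕ)):ℝ≥0∞)⁻¹ * cc (q+1+i) m := by
            exact tsum_congr fun i => by rw [cc_symm]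
        _ = ((m:ℝ≥0∞))⁻¹ * cc q m := transport m q hm
        _ = ((m:ℕ):ℝ≥0∞)⁻¹ * cc m q := by rw [cc_symm]
    calc H (fun q => ∑' i:ℕ, (((q+1+i : ℕ)):ℝ≥0∞)⁻¹ * cc m (q+1+i)) k 0
        = H (fun q => ((m:ℕ):ℝ≥0∞)⁻¹ * cc m q) k 0 := by
          exact congrArg (fun F => H F k 0) (funext hcong)
      _ = ((m:ℕ):ℝ≥0∞)⁻¹ * H (fun n => cc m n) k 0 := H_mul _ _ _ _
      _ = (((m:ℕ):ℝ≥0∞)⁻¹)^(k+1) := by rw [ih, ← pow_succ']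

/-- The ENNReal-valued height-one MZV `ζ(1,…,1,k+1)` with `r-1` ones. -/
noncomputable def E (r k : ℕ) : ℝ≥0∞ := H (fun m => (((m:ℕ):ℝ≥0∞)⁻¹)^k) r 0

lemma E_symm (r k : ℕ) (hr : 1 ≤ r) (hk : 1 ≤ k) : E r k = E k r := by
  obtain ⟨r', rfl⟩ : ∃ r', r = r' + 1 := ⟨r - 1, by omega⟩
  obtain ⟨k', rfl⟩ : ∃ k', k = k' + 1 := ⟨k - 1, by omega⟩
  unfold E
  rw [H_congr_gt r' 0 (fun q hq => (claimA q hq (k'+1)).symm),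
    H_swap (fun m n => cc m n) (k'+1) 0 (r'+1) 0]
  apply H_congr_gt
  intro q hq
  calc H (fun m' => cc m' q) (r'+1) 0 = H (fun m' => cc q m') (r'+1) 0 := by
        exact congrArg (fun F => H F _ 0) (funext fun m' => cc_symm m' q)
    _ = (((q:ℕ):ℝ≥0∞)⁻¹)^(r'+1) := claimA q hq (r'+1)

/-! ### Chain sums over strictly monotone tuples equal `H` -/

abbrev Ch (n p : ℕ) : Type := {f : Fin n → ℕ+ // StrictMono f ∧ ∀ i, p < (f i : ℕ)}

def chOne (p : ℕ) : ℕ ≃ Ch 1 p where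
  toFun i := ⟨fun _ => ⟨p+1+i, by omega⟩, Subsingleton.strictMono _, fun _ => by
    simp; omega⟩
  invFun f := (f.1 0 : ℕ) - (p+1)
  left_inv i := by simp
  right_inv f := by
    obtain ⟨f, hf, hp⟩ := f
    apply Subtype.ext
    funext l
    have h0 := hp 0
    have hl : l = 0 := Subsingleton.elim _ _
    subst hl
    apply PNat.coe_injective
    simp
    omega

def chStepFun (j p : ℕ) (x : Σ i : ℕ, Ch (j+1) (p+1+i)) : Ch (j+2) p :=
  ⟨Fin.cons (α := fun _ => ℕ+) (Nat.toPNat (p+1+x.1) (by omega)) x.2.1, by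
    constructor
    · rw [Fin.strictMono_iff_lt_succ]
      intro l
      refine Fin.cases ?_ ?_ l
      · exact x.2.2.2 0
      · intro l'
        rw [← Fin.succ_castSucc]
        simpa using x.2.2.1 (Fin.castSucc_lt_succ (i := l'))
    · intro l
      refine Fin.cases ?_ ?_ l
      · show p < p+1+x.1; omega
      · intro l'
        simp only [Fin.cons_succ]
        have := x.2.2.2 l'
        omega⟩

lemma chStepFun_fst (j p : ℕ) (x : Σ i : ℕ, Ch (j+1) (p+1+i)) :
    (chStepFun j p x).1 = Fin.cons (α := fun _ => ℕ+) (Nat.toPNat (p+1+x.1) (by omega)) x.2.1 := rfl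

def chStepInv (j p : ℕ) (f : Ch (j+2) p) : Σ i : ℕ, Ch (j+1) (p+1+i) :=
  ⟨(f.1 0 : ℕ) - (p+1),
    ⟨Fin.tail f.1, by
      constructor
      · intro a b hab
        exact f.2.1 (Fin.succ_lt_succ_iff.mpr hab)
      · intro l
        have h0 := f.2.2 0
        have hlt : (f.1 0 : ℕ) < (f.1 l.succ : ℕ) := f.2.1 (Fin.succ_pos l)
        simp only [Fin.tail]
        omega⟩⟩

lemma chStepFun_injective (j p : ℕ) : Function.Injective (chStepFun j p) := by
  rintro ⟨i, g, hg⟩ ⟨i', g', hg'⟩ h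
  have hv := congrArg Subtype.val h
  simp only [chStepFun] at hv
  have h0 := congrFun hv 0
  simp only [Fin.cons_zero] at h0
  have hi : i = i' := by
    have : p+1+i = p+1+i' := congrArg (fun x : ℕ+ => (x:ℕ)) h0
    omega
  subst hi
  have htail : g = g' := by
    have := congrArg Fin.tail hv
    simpa [Fin.tail_cons] using this
  subst htail
  rfl

lemma chStep_right_inv (j p : ℕ) (f : Ch (j+2) p) : chStepFun j p (chStepInv j p f) = f := by
  obtain ⟨f, hf, hp⟩ := f
  apply Subtype.ext
  simp only [chStepFun, chStepInv]
  funext l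
  refine Fin.cases ?_ ?_ l
  · rw [Fin.cons_zero]
    apply PNat.coe_injective
    have := hp 0
    simp [Nat.toPNat]
    omega
  · intro l'
    rw [Fin.cons_succ]
    rfl

def chStep (j p : ℕ) : (Σ i : ℕ, Ch (j+1) (p+1+i)) ≃ Ch (j+2) p where
  toFun := chStepFun j p
  invFun := chStepInv j p
  left_inv x := chStepFun_injective j p (chStep_right_inv j p (chStepFun j p x))
  right_inv := chStep_right_inv j p

lemma chain_sum (F : ℕ → ℝ≥0∞) (j : ℕ) : ∀ p : ℕ,
    ∑' f : Ch (j+1) p, (∏ i, (((f.1 i : ℕ)):ℝ≥0∞)⁻¹) * F ((f.1 (Fin.last j) : ℕ))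
      = H F (j+1) p := by
  induction j with
  | zero =>
    intro p
    rw [← Equiv.tsum_eq (chOne p)]
    refine tsum_congr fun i => ?_
    simp [chOne, H, Fin.last]
  | succ j ih =>
    intro p
    rw [← Equiv.tsum_eq (chStep j p), ENNReal.tsum_sigma']
    rw [H_succ]
    refine tsum_congr fun i => ?_
    rw [← ih (p+1+i), ← ENNReal.tsum_mul_left]
    refine tsum_congr fun g => ?_
    have hprod : (∏ l : Fin (j+2), ((((chStep j p ⟨i, g⟩).1 l : ℕ)):ℝ≥0∞)⁻¹)
        = (((p+1+i:ℕ)):ℝ≥0∞)⁻¹ * ∏ l : Fin (j+1), (((g.1 l : ℕ)):ℝ≥0∞)⁻¹ := by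
      show (∏ l : Fin (j+2), ((((chStepFun j p ⟨i, g⟩).1 l : ℕ)):ℝ≥0∞)⁻¹) = _
      rw [chStepFun_fst, Fin.prod_univ_succ]
      congr 1
    have hlast : ((chStep j p ⟨i, g⟩).1 (Fin.last (j+1)) : ℕ) = (g.1 (Fin.last j) : ℕ) := by
      show ((chStepFun j p ⟨i, g⟩).1 (Fin.last (j+1)) : ℕ) = _
      rw [chStepFun_fst, ← Fin.succ_last, Fin.cons_succ]
    rw [hprod, hlast]
    ring

/-! ### Bridge from real tsums to ENNReal -/

lemma tsum_nonneg_toReal {ι : Type*} (g : ι → ℝ) (hg : ∀ i, 0 ≤ g i) :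
    ∑' i, g i = (∑' i, ENNReal.ofReal (g i)).toReal := by
  by_cases h : Summable g
  · rw [← ENNReal.ofReal_tsum_of_nonneg hg h, ENNReal.toReal_ofReal (tsum_nonneg hg)]
  · rw [tsum_eq_zero_of_not_summable h]
    have htop : (∑' i, ENNReal.ofReal (g i)) = ⊤ := by
      by_contra hne
      apply h
      have h2 : Summable (fun i => (g i).toNNReal) :=
        ENNReal.tsum_coe_ne_top_iff_summable.mp hne
      have h3 : Summable (fun i => ((g i).toNNReal : ℝ)) := NNReal.summable_coe.mpr h2
      refine h3.congr fun i => Real.coe_toNNReal _ (hg i)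
    simp [htop]

lemma ofReal_term (m : ℕ+) (e : ℕ) :
    ENNReal.ofReal ((1:ℝ) / ((m:ℕ):ℝ) ^ e) = (((m:ℕ):ℝ≥0∞))⁻¹ ^ e := by
  have hm : (0:ℝ) < ((m:ℕ):ℝ) := by exact_mod_cast m.pos
  rw [one_div, ENNReal.ofReal_inv_of_pos (by positivity), ENNReal.ofReal_pow (le_of_lt hm),
    ENNReal.ofReal_natCast, ENNReal.inv_pow]

def chAll (n : ℕ) : Ch (n+1) 0 ≃ {f : Fin (n+1) → ℕ+ // StrictMono f} :=
  ⟨fun f => ⟨f.1, f.2.1⟩, fun f => ⟨f.1, f.2, fun i => (f.1 i).pos⟩,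
    fun f => rfl, fun f => rfl⟩

lemma key_sum (n k : ℕ) (g : Fin (n+1) → ℕ)
    (hg : ∀ i : Fin (n+1), g i = if (i:ℕ) < n then 1 else k+2) :
    (∑' f : {f : Fin (n+1) → ℕ+ // StrictMono f},
        ∏ i, (((f.1 i : ℕ)):ℝ≥0∞)⁻¹ ^ g i) = E (n+1) (k+1) := by
  set es := chAll n with hes0
  rw [← Equiv.tsum_eq es]
  have hterm : ∀ f : Ch (n+1) 0,
      (∏ i, ((((es f).1 i : ℕ)):ℝ≥0∞)⁻¹ ^ g i)
        = (∏ i, (((f.1 i : ℕ)):ℝ≥0∞)⁻¹) * (((f.1 (Fin.last n) : ℕ):ℝ≥0∞))⁻¹ ^ (k+1) := by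
    intro f
    have hes : (es f).1 = f.1 := rfl
    rw [hes, Fin.prod_univ_castSucc, Fin.prod_univ_castSucc (fun i => (((f.1 i : ℕ)):ℝ≥0∞)⁻¹)]
    have h1 : ∀ i : Fin n, (((f.1 i.castSucc : ℕ)):ℝ≥0∞)⁻¹ ^ g i.castSucc
        = (((f.1 i.castSucc : ℕ)):ℝ≥0∞)⁻¹ := by
      intro i
      rw [hg, if_pos (by simpa using i.isLt), pow_one]
    rw [Finset.prod_congr rfl (fun i _ => h1 i), hg, if_neg (by simp)]
    ring
  rw [tsum_congr hterm, chain_sum (fun q => (((q:ℕ):ℝ≥0∞))⁻¹ ^ (k+1)) n 0]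
  rfl

lemma mzeta_eq (ks : List ℕ) (n k : ℕ) (hlen : ks.length = n + 1)
    (hget : ∀ i : Fin ks.length, ks.get i = if (i:ℕ) < n then 1 else k+2) :
    mzeta ks = (E (n+1) (k+1)).toReal := by
  have key : ∀ (L : ℕ), L = n+1 → ∀ (g : Fin L → ℕ),
      (∀ i : Fin L, g i = if (i:ℕ) < n then 1 else k+2) →
      (∑' f : {f : Fin L → ℕ+ // StrictMono f},
        ∏ i, (((f.1 i : ℕ)):ℝ≥0∞)⁻¹ ^ g i) = E (n+1) (k+1) := by
    rintro L rfl g hgg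
    exact key_sum n k g hgg
  unfold mzeta
  rw [tsum_nonneg_toReal _ (fun f => Finset.prod_nonneg fun i _ => by positivity)]
  congr 1
  calc ∑' f : {f : Fin ks.length → ℕ+ // StrictMono f},
        ENNReal.ofReal (∏ i, (1:ℝ) / ((f.1 i : ℕ):ℝ) ^ ks.get i)
      = ∑' f : {f : Fin ks.length → ℕ+ // StrictMono f},
        ∏ i, (((f.1 i : ℕ)):ℝ≥0∞)⁻¹ ^ ks.get i := by
        refine tsum_congr fun f => ?_
        rw [ENNReal.ofReal_prod_of_nonneg (fun i _ => by positivity)]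
        exact Finset.prod_congr rfl fun i _ => ofReal_term _ _
    _ = E (n+1) (k+1) := key ks.length hlen _ hget

lemma get_ht (a b : ℕ) (i : Fin (List.replicate a 1 ++ [b+2]).length) :
    (List.replicate a 1 ++ [b+2]).get i = if (i:ℕ) < a then 1 else b+2 := by
  have hlen : (List.replicate a 1 ++ [b+2]).length = a + 1 := by simp
  have hi : (i:ℕ) < a + 1 := hlen ▸ i.isLt
  rw [List.get_eq_getElem]
  by_cases h : (i:ℕ) < a
  · rw [if_pos h]
    rw [List.getElem_append_left (by simpa using h)]
    exact List.getElem_replicate _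
  · rw [if_neg h]
    have ha : (i:ℕ) = a := by omega
    rw [List.getElem_append_right (by simpa using ha.ge)]
    simp [ha]

end HtOne

/-- Duality for height-one MZVs: ζ(1,…,1,k+1) (r−1 ones) = ζ(1,…,1,r+1) (k−1 ones). -/
theorem height_one_duality (r k : ℕ) (hr : 1 ≤ r) (hk : 1 ≤ k) :
    mzeta (List.replicate (r - 1) 1 ++ [k + 1]) =
      mzeta (List.replicate (k - 1) 1 ++ [r + 1]) := by
  obtain ⟨r', rfl⟩ : ∃ r', r = r' + 1 := ⟨r - 1, by omega⟩
  obtain ⟨k', rfl⟩ : ∃ k', k = k' + 1 := ⟨k - 1, by omega⟩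
  simp only [Nat.add_sub_cancel]
  rw [HtOne.mzeta_eq _ r' k' (by simp) (HtOne.get_ht r' k'),
    HtOne.mzeta_eq _ k' r' (by simp) (HtOne.get_ht k' r'),
    HtOne.E_symm (r'+1) (k'+1) (by omega) (by omega)]
end

section
/- The sum formula for depth 2: for any integer k ≥ 1, Σ_{a+b = k+2, a ≥ 1, b ≥ 2} ζ(a, b) = ζ(k+2). -/
open scoped BigOperators
open Finset

namespace SFAux

/-- The equivalence `ℕ ≃ ℕ+`, `n ↦ n+1`. -/
def eN : ℕ ≃ ℕ+ where
  toFun n := n.succPNat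
  invFun m := (m : ℕ) - 1
  left_inv n := by simp [Nat.succPNat]
  right_inv m := by
    cases m with
    | mk v hv => apply PNat.coe_injective; simp [Nat.succPNat]; omega

lemma eN_coe (n : ℕ) : ((eN n : ℕ+) : ℕ) = n + 1 := rfl

lemma pnat_cast_pos (n : ℕ+) : (0:ℝ) < ((n:ℕ):ℝ) := by exact_mod_cast n.pos
lemma pnat_cast_one_le (n : ℕ+) : (1:ℝ) ≤ ((n:ℕ):ℝ) := by exact_mod_cast n.one_le
lemma pnat_cast_ne (n : ℕ+) : ((n:ℕ):ℝ) ≠ 0 := ne_of_gt (pnat_cast_pos n)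

/-- Summability of `1/n²` on `ℕ+`. -/
lemma summable_inv_sq : Summable (fun n : ℕ+ => 1 / ((n:ℕ):ℝ)^2) := by
  have h : Summable (fun n : ℕ => 1 / (n:ℝ)^2) :=
    Real.summable_one_div_nat_pow.mpr one_lt_two
  exact h.comp_injective PNat.coe_injective

/-- `1/n^c ≤ 1/n^2` for `2 ≤ c`. -/
lemma inv_pow_le_inv_sq (n : ℕ+) {c : ℕ} (hc : 2 ≤ c) :
    1 / ((n:ℕ):ℝ)^c ≤ 1 / ((n:ℕ):ℝ)^2 := by
  apply one_div_le_one_div_of_le (by positivity)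
  exact pow_le_pow_right₀ (pnat_cast_one_le n) hc

lemma summable_inv_pow {c : ℕ} (hc : 2 ≤ c) : Summable (fun n : ℕ+ => 1 / ((n:ℕ):ℝ)^c) := by
  refine Summable.of_nonneg_of_le (fun n => by positivity)
    (fun n => inv_pow_le_inv_sq n hc) summable_inv_sq

/-- telescoping bound for tails of `∑ 1/n²`, over `ℕ`. -/
lemma sum_range_tail_sq (M : ℕ) (hM : 1 ≤ M) (N : ℕ) :
    ∑ d ∈ range N, 1 / (((M:ℝ) + d + 1))^2 ≤ 1/(M:ℝ) - 1/((M:ℝ)+N) := by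
  induction N with
  | zero => simp
  | succ N ih =>
    rw [Finset.sum_range_succ]
    have hM' : (1:ℝ) ≤ (M:ℝ) := by exact_mod_cast hM
    have h1 : (0:ℝ) < (M:ℝ) + N := by positivity
    have h2 : (0:ℝ) < (M:ℝ) + N + 1 := by positivity
    have key : 1 / ((M:ℝ) + N + 1)^2 ≤ 1/((M:ℝ)+N) - 1/((M:ℝ)+N+1) := by
      have e : 1/((M:ℝ)+N) - 1/((M:ℝ)+N+1) = 1 / (((M:ℝ)+N) * ((M:ℝ)+N+1)) := by
        field_simp
        ring
      rw [e]
      apply one_div_le_one_div_of_le (by positivity)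
      nlinarith
    push_cast
    push_cast at ih
    have e2 : (M:ℝ) + (↑N + 1) = (M:ℝ) + ↑N + 1 := by ring
    rw [e2]
    linarith

/-- tail bound over `ℕ+`: `∑_{d} 1/(m+d)² ≤ 1/m`. -/
lemma tsum_tail_sq_le (m : ℕ+) :
    ∑' d : ℕ+, 1 / ((((m+d):ℕ+):ℕ):ℝ)^2 ≤ 1 / ((m:ℕ):ℝ) := by
  have hsum : Summable (fun d : ℕ+ => 1 / ((((m+d):ℕ+):ℕ):ℝ)^2) := by
    refine Summable.of_nonneg_of_le (fun d => by positivity) (fun d => ?_) summable_inv_sq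
    apply one_div_le_one_div_of_le (by positivity)
    have : ((d:ℕ):ℝ) ≤ (((m+d:ℕ+):ℕ):ℝ) := by
      have : (d:ℕ) ≤ ((m+d:ℕ+):ℕ) := by simp [PNat.add_coe]
      exact_mod_cast this
    have h0 : (0:ℝ) ≤ ((d:ℕ):ℝ) := le_of_lt (pnat_cast_pos d)
    nlinarith
  refine Summable.tsum_le_of_sum_le hsum (fun s => ?_)
  -- transfer the finite sum to ℕ
  classical
  set t : Finset ℕ := s.image (fun d : ℕ+ => ((d : ℕ) - 1)) with ht
  obtain ⟨N, hN⟩ := t.exists_nat_subset_range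
  have : ∑ d ∈ s, 1 / ((((m+d):ℕ+):ℕ):ℝ)^2
      = ∑ n ∈ t, 1 / (((m:ℕ):ℝ) + n + 1)^2 := by
    rw [ht, Finset.sum_image ?hinj]
    case hinj =>
      intro a _ b _ h
      exact PNat.natPred_injective h
    apply Finset.sum_congr rfl
    intro d _
    have hd : (1:ℕ) ≤ (d:ℕ) := d.one_le
    have h2 : (((m+d):ℕ+):ℕ) = (m:ℕ) + ((d:ℕ) - 1) + 1 := by
      rw [PNat.add_coe]; omega
    rw [h2]
    push_cast [hd]
    ring_nf
  rw [this]
  calc ∑ n ∈ t, 1 / (((m:ℕ):ℝ) + n + 1)^2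
      ≤ ∑ n ∈ range N, 1 / (((m:ℕ):ℝ) + n + 1)^2 := by
        apply Finset.sum_le_sum_of_subset_of_nonneg hN
        intro i _ _; positivity
    _ ≤ 1/((m:ℕ):ℝ) - 1/(((m:ℕ):ℝ)+N) := sum_range_tail_sq m m.one_le N
    _ ≤ 1/((m:ℕ):ℝ) := by
        have : (0:ℝ) < ((m:ℕ):ℝ) + N := by have := pnat_cast_pos m; positivity
        have : 0 ≤ 1/(((m:ℕ):ℝ)+N) := by positivity
        linarith

/-- Harmonic number `H M = ∑_{j<M} 1/(j+1)`. -/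
noncomputable def H (M : ℕ) : ℝ := ∑ j ∈ range M, 1 / ((j:ℝ) + 1)

lemma summable_one_div_add_one_sq : Summable (fun n : ℕ => 1 / ((n:ℝ)+1)^2) := by
  have h : Summable (fun n : ℕ => 1 / (n:ℝ)^2) :=
    Real.summable_one_div_nat_pow.mpr one_lt_two
  have := h.comp_injective Nat.succ_injective
  refine this.congr (fun n => ?_)
  simp [Function.comp, Nat.succ_eq_add_one]

lemma hasSum_harmonic_nat (M : ℕ) :
    HasSum (fun n : ℕ => (M:ℝ) / (((n:ℝ)+1) * ((M:ℝ)+(n:ℝ)+1))) (H M) := by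
  set F : ℕ → ℝ := fun n => (M:ℝ) / (((n:ℝ)+1) * ((M:ℝ)+(n:ℝ)+1)) with hF
  have hFnonneg : ∀ n, 0 ≤ F n := fun n => by positivity
  have hsummable : Summable F := by
    refine Summable.of_nonneg_of_le hFnonneg (fun n => ?_)
      (summable_one_div_add_one_sq.mul_left (M:ℝ))
    rw [hF]
    have h1 : (0:ℝ) < (n:ℝ)+1 := by positivity
    have h2 : ((n:ℝ)+1) ≤ ((M:ℝ)+(n:ℝ)+1) := by
      have := Nat.cast_nonneg (α := ℝ) M; linarith
    rw [div_le_iff₀ (by positivity)]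
    have e : (M:ℝ) * (1/((n:ℝ)+1)^2) * (((n:ℝ)+1) * ((M:ℝ)+(n:ℝ)+1))
        = (M:ℝ) * (((M:ℝ)+(n:ℝ)+1) / ((n:ℝ)+1)) := by
      field_simp
    rw [e]
    have : (1:ℝ) ≤ ((M:ℝ)+(n:ℝ)+1) / ((n:ℝ)+1) := by
      rw [le_div_iff₀ h1]; linarith
    nlinarith [Nat.cast_nonneg (α := ℝ) M]
  have hpartial : ∀ N : ℕ, ∑ n ∈ range N, F n
      = H M - ∑ j ∈ range M, 1 / ((N:ℝ) + (j:ℝ) + 1) := by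
    intro N
    induction N with
    | zero =>
      have e : ∑ j ∈ range M, 1 / (((0:ℕ):ℝ) + (j:ℝ) + 1) = H M := by
        refine Finset.sum_congr rfl (fun j _ => ?_)
        norm_num
      simp only [Finset.sum_range_zero]
      rw [e]
      ring
    | succ N ih =>
      have h1 : ((N:ℝ)+1) ≠ 0 := by positivity
      have h2 : ((N:ℝ)+(M:ℝ)+1) ≠ 0 := by positivity
      have eF : F N = 1 / ((N:ℝ) + 1) - 1 / ((N:ℝ) + (M:ℝ) + 1) := by
        rw [hF, div_sub_div _ _ h1 h2,
          show (1:ℝ)*((N:ℝ)+(M:ℝ)+1) - ((N:ℝ)+1)*1 = (M:ℝ) by ring,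
          show ((N:ℝ)+1)*((N:ℝ)+(M:ℝ)+1) = ((N:ℝ)+1)*((M:ℝ)+(N:ℝ)+1) by ring]
      rw [Finset.sum_range_succ, ih, eF]
      have tele := Finset.sum_range_sub' (fun j : ℕ => 1 / ((N:ℝ) + (j:ℝ) + 1)) M
      rw [Finset.sum_sub_distrib] at tele
      have hS : ∑ j ∈ range M, 1 / (((N+1:ℕ):ℝ) + (j:ℝ) + 1)
          = ∑ j ∈ range M, 1 / ((N:ℝ) + ((j+1:ℕ):ℝ) + 1) :=
        Finset.sum_congr rfl (fun j _ => by push_cast; ring_nf)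
      rw [hS]
      simp only [Nat.cast_zero, add_zero] at tele
      linarith
  have htail : Filter.Tendsto (fun N : ℕ => ∑ j ∈ range M, 1 / ((N:ℝ) + (j:ℝ) + 1))
      Filter.atTop (nhds 0) := by
    apply squeeze_zero (fun N => by positivity) (g := fun N : ℕ => (M:ℝ) * (1/((N:ℝ)+1)))
    · intro N
      have : ∀ j ∈ range M, 1 / ((N:ℝ) + (j:ℝ) + 1) ≤ 1/((N:ℝ)+1) := by
        intro j _
        apply one_div_le_one_div_of_le (by positivity)
        have : (0:ℝ) ≤ (j:ℝ) := Nat.cast_nonneg j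
        linarith
      calc ∑ j ∈ range M, 1 / ((N:ℝ) + (j:ℝ) + 1)
          ≤ (range M).card • (1/((N:ℝ)+1)) := Finset.sum_le_card_nsmul _ _ _ this
        _ = (M:ℝ) * (1/((N:ℝ)+1)) := by simp [nsmul_eq_mul]
    · simpa using tendsto_one_div_add_atTop_nhds_zero_nat.const_mul (M:ℝ)
  have hlim : Filter.Tendsto (fun N : ℕ => ∑ n ∈ range N, F n) Filter.atTop (nhds (H M)) := by
    have := (tendsto_const_nhds (x := H M) (f := Filter.atTop (α := ℕ))).sub htail
    rw [sub_zero] at this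
    exact this.congr (fun N => (hpartial N).symm)
  exact (hasSum_iff_tendsto_nat_of_nonneg hFnonneg _).mpr hlim

/-- Harmonic sum over `ℕ+`: `∑_d m/(d(m+d)) = H m`. -/
lemma hasSum_harmonic (m : ℕ+) :
    HasSum (fun d : ℕ+ => ((m:ℕ):ℝ) / (((d:ℕ):ℝ) * (((m:ℕ):ℝ) + ((d:ℕ):ℝ)))) (H (m:ℕ)) := by
  rw [← Equiv.hasSum_iff eN]
  have : (fun d : ℕ+ => ((m:ℕ):ℝ) / (((d:ℕ):ℝ) * (((m:ℕ):ℝ) + ((d:ℕ):ℝ)))) ∘ eN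
      = fun n : ℕ => ((m:ℕ):ℝ) / (((n:ℝ)+1) * (((m:ℕ):ℝ)+(n:ℝ)+1)) := by
    funext n
    simp only [Function.comp, eN_coe]
    push_cast
    ring_nf
  rw [this]
  exact hasSum_harmonic_nat (m:ℕ)

/-- pairs `(m,d) ↦ (m, m+d)` as strictly monotone functions `Fin 2 → ℕ+`. -/
def pairEquiv : ℕ+ × ℕ+ ≃ {f : Fin 2 → ℕ+ // StrictMono f} where
  toFun p := ⟨fun i => if i = 0 then p.1 else p.1 + p.2, by
    intro i j hij
    fin_cases i <;> fin_cases j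
    · exact absurd hij (by decide)
    · simpa using PNat.lt_add_right p.1 p.2
    · exact absurd hij (by decide)
    · exact absurd hij (by decide)⟩
  invFun f := (f.1 0, f.1 1 - f.1 0)
  left_inv p := by
    have h : p.1 + ((p.1 + p.2) - p.1) = p.1 + p.2 :=
      PNat.add_sub_of_lt (PNat.lt_add_right p.1 p.2)
    have h2 : (p.1 + p.2) - p.1 = p.2 := by
      have := add_left_cancel h
      exact this
    simp [h2]
  right_inv f := by
    apply Subtype.ext
    funext i
    have h01 : f.1 0 < f.1 1 := f.2 (show (0 : Fin 2) < 1 by decide)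
    fin_cases i
    · simp
    · simpa using PNat.add_sub_of_lt h01

/-- `ℕ+` as strictly monotone functions `Fin 1 → ℕ+`. -/
def singleEquiv : ℕ+ ≃ {f : Fin 1 → ℕ+ // StrictMono f} where
  toFun n := ⟨fun _ => n, fun i j hij => absurd (Subsingleton.elim i j ▸ hij) (lt_irrefl _)⟩
  invFun f := f.1 0
  left_inv n := rfl
  right_inv f := by
    apply Subtype.ext
    funext i
    rw [Subsingleton.elim i 0]

lemma mzeta_single (c : ℕ) : mzeta [c] = ∑' n : ℕ+, 1 / ((n:ℕ):ℝ)^c := by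
  rw [mzeta]
  show (∑' f : {f : Fin 1 → ℕ+ // StrictMono f},
      ∏ i : Fin 1, (1:ℝ) / ((f.1 i : ℕ) : ℝ) ^ ([c].get i)) = _
  rw [← Equiv.tsum_eq singleEquiv]
  apply tsum_congr
  intro n
  simp [singleEquiv, Fin.prod_univ_one]

lemma mzeta_pair (a b : ℕ) :
    mzeta [a, b]
      = ∑' p : ℕ+ × ℕ+, (1 / ((p.1:ℕ):ℝ)^a) * (1 / ((((p.1+p.2):ℕ+):ℕ):ℝ)^b) := by
  rw [mzeta]
  show (∑' f : {f : Fin 2 → ℕ+ // StrictMono f},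
      ∏ i : Fin 2, (1:ℝ) / ((f.1 i : ℕ) : ℝ) ^ ([a,b].get i)) = _
  rw [← Equiv.tsum_eq pairEquiv]
  apply tsum_congr
  intro p
  simp [pairEquiv, Fin.prod_univ_two]
  ring

lemma sum_antidiag (k : ℕ) (f : ℕ → ℕ → ℝ) :
    ∑ p ∈ (Finset.HasAntidiagonal.antidiagonal (k + 2)).filter (fun p => 1 ≤ p.1 ∧ 2 ≤ p.2), f p.1 p.2
    = ∑ a ∈ range k, f (a+1) (k+1-a) := by
  refine Finset.sum_bij' (fun p _ => p.1 - 1) (fun a _ => (a+1, k+1-a)) ?_ ?_ ?_ ?_ ?_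
  · intro p hp
    simp only [Finset.mem_filter, Finset.HasAntidiagonal.mem_antidiagonal] at hp
    simp only [Finset.mem_range]
    omega
  · intro a ha
    simp only [Finset.mem_range] at ha
    simp only [Finset.mem_filter, Finset.HasAntidiagonal.mem_antidiagonal]
    omega
  · intro p hp
    simp only [Finset.mem_filter, Finset.HasAntidiagonal.mem_antidiagonal] at hp
    have h1 : p.1 - 1 + 1 = p.1 := by omega
    have h2 : k + 1 - (p.1 - 1) = p.2 := by omega
    show (p.1 - 1 + 1, k + 1 - (p.1 - 1)) = p
    rw [h1, h2]
  · intro a ha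
    simp only [Finset.mem_range] at ha
    show a + 1 - 1 = a
    omega
  · intro p hp
    simp only [Finset.mem_filter, Finset.HasAntidiagonal.mem_antidiagonal] at hp
    have h1 : p.1 - 1 + 1 = p.1 := by omega
    have h2 : k + 1 - (p.1 - 1) = p.2 := by omega
    show f p.1 p.2 = f (p.1 - 1 + 1) (k + 1 - (p.1 - 1))
    rw [h1, h2]

lemma star_identity (k : ℕ) (M D : ℝ) (hM : 0 < M) (hD : 0 < D) :
    ∑ a ∈ range k, (1 / M^(a+1)) * (1 / (M+D)^(k+1-a)) + 1 / (D * (M+D)^(k+1))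
      = 1 / M^(k+1) * (M / (D * (M+D))) := by
  set N := M + D with hNdef
  have hN : 0 < N := by positivity
  have key : (∑ a ∈ range k, N^a * M^(k-1-a)) * D = N^k - M^k := by
    have h := geom_sum₂_mul N M k
    rw [show N - M = D by rw [hNdef]; ring] at h
    exact h
  have hterm : ∀ a ∈ range k,
      (1 / M^(a+1)) * (1 / N^(k+1-a)) = (N^a * M^(k-1-a)) / (M^k * N^(k+1)) := by
    intro a ha
    rw [Finset.mem_range] at ha
    have e1 : M^k = M^(a+1) * M^(k-1-a) := by rw [← pow_add]; congr 1; omega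
    have e2 : N^(k+1) = N^(k+1-a) * N^a := by rw [← pow_add]; congr 1; omega
    rw [eq_div_iff (by positivity), e1, e2]
    field_simp
  rw [Finset.sum_congr rfl hterm, ← Finset.sum_div]
  have hsum : ∑ a ∈ range k, N^a * M^(k-1-a) = (N^k - M^k) / D := by
    rw [eq_div_iff hD.ne']
    exact key
  rw [hsum]
  field_simp
  ring


/-! ### summability of the basic double families -/

lemma summable_tail_pow (m : ℕ+) {b : ℕ} (hb : 2 ≤ b) :
    Summable (fun d : ℕ+ => 1 / ((((m+d):ℕ+):ℕ):ℝ)^b) := by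
  refine Summable.of_nonneg_of_le (fun d => by positivity) (fun d => ?_) summable_inv_sq
  calc 1 / ((((m+d):ℕ+):ℕ):ℝ)^b ≤ 1 / ((((m+d):ℕ+):ℕ):ℝ)^2 := inv_pow_le_inv_sq _ hb
    _ ≤ 1 / ((d:ℕ):ℝ)^2 := by
        apply one_div_le_one_div_of_le (by positivity)
        have h1 : ((d:ℕ):ℝ) ≤ (((m+d:ℕ+):ℕ):ℝ) := by
          have : (d:ℕ) ≤ ((m+d:ℕ+):ℕ) := by simp [PNat.add_coe]
          exact_mod_cast this
        have h0 : (0:ℝ) ≤ ((d:ℕ):ℝ) := le_of_lt (pnat_cast_pos d)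
        nlinarith

lemma tsum_tail_pow_le (m : ℕ+) {b : ℕ} (hb : 2 ≤ b) :
    ∑' d : ℕ+, 1 / ((((m+d):ℕ+):ℕ):ℝ)^b ≤ 1 / ((m:ℕ):ℝ) := by
  refine le_trans (Summable.tsum_le_tsum (fun d => inv_pow_le_inv_sq _ hb)
    (summable_tail_pow m hb) (summable_tail_pow m le_rfl)) ?_
  exact tsum_tail_sq_le m

/-- the summand of a depth-2 MZV, in coordinates `(m, d) ↦ (m, m+d)`. -/
noncomputable def g (a b : ℕ) (p : ℕ+ × ℕ+) : ℝ :=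
  (1 / ((p.1:ℕ):ℝ)^a) * (1 / ((((p.1+p.2):ℕ+):ℕ):ℝ)^b)

lemma g_nonneg (a b : ℕ) (p : ℕ+ × ℕ+) : 0 ≤ g a b p := by
  unfold g; positivity

lemma summable_g {a b : ℕ} (ha : 1 ≤ a) (hb : 2 ≤ b) : Summable (g a b) := by
  rw [summable_prod_of_nonneg (fun p => g_nonneg a b p)]
  constructor
  · intro m
    refine Summable.of_nonneg_of_le (fun d => g_nonneg a b (m, d)) (fun d => ?_)
      (summable_tail_pow m hb)
    unfold g
    have h1 : 1 / ((m:ℕ):ℝ)^a ≤ 1 := by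
      rw [div_le_one (by positivity)]
      exact one_le_pow₀ (pnat_cast_one_le m)
    have h2 : (0:ℝ) ≤ 1 / ((((m+d):ℕ+):ℕ):ℝ)^b := by positivity
    nlinarith
  · refine Summable.of_nonneg_of_le
      (fun m => tsum_nonneg (fun d => g_nonneg a b (m, d)))
      (fun m => ?_) summable_inv_sq
    have e : ∑' d : ℕ+, g a b (m, d)
        = (1 / ((m:ℕ):ℝ)^a) * ∑' d : ℕ+, 1 / ((((m+d):ℕ+):ℕ):ℝ)^b := by
      unfold g
      exact tsum_mul_left (a := 1 / ((m:ℕ):ℝ)^a)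
        (f := fun d : ℕ+ => 1 / ((((m+d):ℕ+):ℕ):ℝ)^b)
    rw [e]
    have h1 : ∑' d : ℕ+, 1 / ((((m+d):ℕ+):ℕ):ℝ)^b ≤ 1 / ((m:ℕ):ℝ) := tsum_tail_pow_le m hb
    have h2 : 1 / ((m:ℕ):ℝ)^a ≤ 1 / ((m:ℕ):ℝ) := by
      apply one_div_le_one_div_of_le (pnat_cast_pos m)
      calc ((m:ℕ):ℝ) = ((m:ℕ):ℝ)^1 := (pow_one _).symm
        _ ≤ ((m:ℕ):ℝ)^a := pow_le_pow_right₀ (pnat_cast_one_le m) ha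
    have h3 : (0:ℝ) ≤ ∑' d : ℕ+, 1 / ((((m+d):ℕ+):ℕ):ℝ)^b :=
      tsum_nonneg (fun d => by positivity)
    have h4 : (0:ℝ) < ((m:ℕ):ℝ) := pnat_cast_pos m
    have h5 : 1 / ((m:ℕ):ℝ) * (1 / ((m:ℕ):ℝ)) = 1 / ((m:ℕ):ℝ)^2 := by
      rw [div_mul_div_comm, one_mul, sq]
    nlinarith [mul_le_mul h2 h1 h3 (by positivity : (0:ℝ) ≤ 1 / ((m:ℕ):ℝ))]

/-! ### the auxiliary functions `A`, `B`, `G`, `W` -/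

noncomputable def Af (k : ℕ) (p : ℕ+ × ℕ+) : ℝ :=
  (1 / ((p.2:ℕ):ℝ)) * (1 / ((((p.1+p.2):ℕ+):ℕ):ℝ)^(k+1))

noncomputable def Bf (k : ℕ) (p : ℕ+ × ℕ+) : ℝ :=
  (1 / ((p.1:ℕ):ℝ)^(k+1)) *
    (((p.1:ℕ):ℝ) / (((p.2:ℕ):ℝ) * (((p.1:ℕ):ℝ) + ((p.2:ℕ):ℝ))))

noncomputable def Gf (k : ℕ) (p : ℕ+ × ℕ+) : ℝ :=
  ∑ a ∈ range k, g (a+1) (k+1-a) p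

lemma Af_eq_g_swap (k : ℕ) : Af k = fun p => g 1 (k+1) p.swap := by
  funext p
  simp only [Af, g, Prod.swap, pow_one]
  rw [add_comm p.2 p.1]

lemma summable_Af {k : ℕ} (hk : 1 ≤ k) : Summable (Af k) := by
  rw [Af_eq_g_swap]
  exact (summable_g le_rfl (by omega)).prod_symm

lemma summable_Gf {k : ℕ} (hk : 1 ≤ k) : Summable (Gf k) := by
  apply summable_sum
  intro a ha
  rw [Finset.mem_range] at ha
  exact summable_g (by omega) (by omega)

/-- the key pointwise identity `G + A = B`. -/
lemma GA_eq_B {k : ℕ} (p : ℕ+ × ℕ+) : Gf k p + Af k p = Bf k p := by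
  have hM : (0:ℝ) < ((p.1:ℕ):ℝ) := pnat_cast_pos p.1
  have hD : (0:ℝ) < ((p.2:ℕ):ℝ) := pnat_cast_pos p.2
  have hcast : ((((p.1+p.2):ℕ+):ℕ):ℝ) = ((p.1:ℕ):ℝ) + ((p.2:ℕ):ℝ) := by
    rw [PNat.add_coe]; push_cast; ring
  have e1 : Af k p = 1 / (((p.2:ℕ):ℝ) * (((p.1:ℕ):ℝ) + ((p.2:ℕ):ℝ))^(k+1)) := by
    rw [Af, hcast, div_mul_div_comm, one_mul]
  unfold Gf g Bf
  rw [e1]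
  simp only [hcast]
  exact star_identity k _ _ hM hD

noncomputable def Wfull (k : ℕ) (q : ℕ+ × ℕ+) : ℝ :=
  if q.1 ≤ q.2 then (1 / ((q.1:ℕ):ℝ)) * (1 / ((q.2:ℕ):ℝ)^(k+1)) else 0

noncomputable def Wdiag (k : ℕ) (q : ℕ+ × ℕ+) : ℝ :=
  if q.1 = q.2 then (1 / ((q.1:ℕ):ℝ)) * (1 / ((q.2:ℕ):ℝ)^(k+1)) else 0

noncomputable def Wlt (k : ℕ) (q : ℕ+ × ℕ+) : ℝ :=
  if q.1 < q.2 then (1 / ((q.1:ℕ):ℝ)) * (1 / ((q.2:ℕ):ℝ)^(k+1)) else 0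

lemma Wfull_nonneg (k : ℕ) (q : ℕ+ × ℕ+) : 0 ≤ Wfull k q := by
  unfold Wfull; split <;> positivity

lemma W_split (k : ℕ) (q : ℕ+ × ℕ+) : Wfull k q = Wdiag k q + Wlt k q := by
  unfold Wfull Wdiag Wlt
  rcases lt_trichotomy q.1 q.2 with h | h | h
  · rw [if_pos h.le, if_neg h.ne, if_pos h]; ring
  · rw [if_pos h.le, if_pos h, if_neg (by rw [h]; exact lt_irrefl _)]; ring
  · rw [if_neg (not_le.mpr h), if_neg (ne_of_gt h), if_neg (not_lt.mpr h.le)]; ring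

lemma mem_mapRange (n : ℕ+) (j : ℕ+) :
    j ∈ (range (n:ℕ)).map eN.toEmbedding ↔ j ≤ n := by
  simp only [Finset.mem_map, Finset.mem_range, Equiv.coe_toEmbedding]
  constructor
  · rintro ⟨a, ha, rfl⟩
    have : ((eN a : ℕ+) : ℕ) ≤ (n : ℕ) := by rw [eN_coe]; omega
    exact_mod_cast this
  · intro h
    have h1 : 1 ≤ (j:ℕ) := j.one_le
    have h2 : (j:ℕ) ≤ (n:ℕ) := by exact_mod_cast h
    refine ⟨(j:ℕ) - 1, by omega, ?_⟩
    apply PNat.coe_injective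
    rw [eN_coe]
    omega

lemma summable_Wfull_row (k : ℕ) (hk : 1 ≤ k) (j : ℕ+) :
    Summable (fun n : ℕ+ => Wfull k (j, n)) := by
  refine Summable.of_nonneg_of_le (fun n => Wfull_nonneg k (j,n)) (fun n => ?_) summable_inv_sq
  unfold Wfull
  dsimp only
  split
  · have h1 : 1/((j:ℕ):ℝ) ≤ 1 := by
      rw [div_le_one (pnat_cast_pos j)]; exact pnat_cast_one_le j
    have h2 : 1/((n:ℕ):ℝ)^(k+1) ≤ 1/((n:ℕ):ℝ)^2 := inv_pow_le_inv_sq n (by omega)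
    have h3 : (0:ℝ) ≤ 1/((n:ℕ):ℝ)^(k+1) := by positivity
    nlinarith
  · positivity

lemma summable_Wfull {k : ℕ} (hk : 1 ≤ k) : Summable (Wfull k) := by
  rw [summable_prod_of_nonneg (fun q => Wfull_nonneg k q)]
  refine ⟨fun j => summable_Wfull_row k hk j, ?_⟩
  refine Summable.of_nonneg_of_le (fun j => tsum_nonneg fun n => Wfull_nonneg k (j,n))
      (fun j => ?_) (summable_inv_sq.mul_left 2)
  set s1 : ℕ+ → ℝ := fun n => if j < n then 1/((n:ℕ):ℝ)^2 else 0 with hs1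
  set s2 : ℕ+ → ℝ := fun n => if n = j then 1/((j:ℕ):ℝ)^2 else 0 with hs2
  have hs1sum : Summable s1 := by
    refine Summable.of_nonneg_of_le (fun n => ?_) (fun n => ?_) summable_inv_sq
    · rw [hs1]; dsimp only; split <;> positivity
    · rw [hs1]; dsimp only; split
      · exact le_rfl
      · positivity
  have hs2sum : Summable s2 :=
    summable_of_ne_finset_zero (s := {j}) (fun n hn => if_neg (by simpa using hn))
  have hptle : ∀ n, Wfull k (j,n) ≤ (1/((j:ℕ):ℝ)) * (s1 n + s2 n) := by
    intro n
    unfold Wfull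
    rw [hs1, hs2]
    dsimp only
    rcases lt_trichotomy j n with h|h|h
    · rw [if_pos h.le, if_pos h, if_neg h.ne', add_zero]
      exact mul_le_mul_of_nonneg_left (inv_pow_le_inv_sq n (by omega)) (by positivity)
    · rw [← h, if_pos le_rfl, if_neg (lt_irrefl j), if_pos rfl, zero_add]
      exact mul_le_mul_of_nonneg_left (inv_pow_le_inv_sq j (by omega)) (by positivity)
    · rw [if_neg (not_le.mpr h), if_neg (lt_asymm h), if_neg h.ne, add_zero, mul_zero]
  have hs1val : ∑' n, s1 n ≤ 1/((j:ℕ):ℝ) := by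
    have hinj : Function.Injective (fun d : ℕ+ => j + d) := add_right_injective j
    have hsupp : Function.support s1 ⊆ Set.range (fun d : ℕ+ => j + d) := by
      intro n hn
      have hlt : j < n := by
        by_contra hc
        exact hn (if_neg hc)
      exact ⟨n - j, PNat.add_sub_of_lt hlt⟩
    have := Function.Injective.tsum_eq hinj (f := s1) hsupp
    rw [← this]
    have e : ∀ d : ℕ+, s1 (j + d) = 1 / ((((j+d):ℕ+):ℕ):ℝ)^2 := by
      intro d
      rw [hs1]
      exact if_pos (PNat.lt_add_right j d)
    rw [tsum_congr e]
    exact tsum_tail_sq_le j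
  have hs2val : ∑' n, s2 n = 1/((j:ℕ):ℝ)^2 := tsum_ite_eq j _
  have hb := Summable.tsum_le_tsum hptle (summable_Wfull_row k hk j)
    (((hs1sum.add hs2sum)).mul_left _)
  refine hb.trans ?_
  rw [tsum_mul_left, Summable.tsum_add hs1sum hs2sum, hs2val]
  have hj1 : (0:ℝ) < ((j:ℕ):ℝ) := pnat_cast_pos j
  have hj2 : (1:ℝ) ≤ ((j:ℕ):ℝ) := pnat_cast_one_le j
  have h1j : 1/((j:ℕ):ℝ) ≤ 1 := by rw [div_le_one hj1]; exact hj2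
  have h0 : (0:ℝ) ≤ 1/((j:ℕ):ℝ) := by positivity
  have e2 : 1/((j:ℕ):ℝ) * (1/((j:ℕ):ℝ)) = 1/((j:ℕ):ℝ)^2 := by
    rw [div_mul_div_comm, one_mul, sq]
  nlinarith [tsum_nonneg (L := SummationFilter.unconditional ℕ+) (fun n => (by rw [hs1]; dsimp only; split <;> positivity : (0:ℝ) ≤ s1 n))]

lemma summable_Wdiag {k : ℕ} (hk : 1 ≤ k) : Summable (Wdiag k) := by
  refine Summable.of_nonneg_of_le (fun q => ?_) (fun q => ?_) (summable_Wfull hk)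
  · unfold Wdiag; split <;> positivity
  · unfold Wdiag Wfull
    split
    · rename_i h; rw [if_pos h.le]
    · split <;> positivity

lemma summable_Wlt {k : ℕ} (hk : 1 ≤ k) : Summable (Wlt k) := by
  refine Summable.of_nonneg_of_le (fun q => ?_) (fun q => ?_) (summable_Wfull hk)
  · unfold Wlt; split <;> positivity
  · unfold Wlt Wfull
    split
    · rename_i h; rw [if_pos h.le]
    · split <;> positivity

/-- diagonal part gives `ζ(k+2)`. -/
lemma tsum_Wdiag (k : ℕ) : ∑' q, Wdiag k q = ∑' n : ℕ+, 1 / ((n:ℕ):ℝ)^(k+2) := by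
  have hinj : Function.Injective (fun n : ℕ+ => ((n, n) : ℕ+ × ℕ+)) := by
    intro a b h
    exact congrArg Prod.fst h
  have hsupp : Function.support (Wdiag k) ⊆ Set.range (fun n : ℕ+ => ((n, n) : ℕ+ × ℕ+)) := by
    intro q hq
    have : q.1 = q.2 := by
      by_contra hc
      exact hq (if_neg hc)
    exact ⟨q.1, by rw [Prod.ext_iff]; exact ⟨rfl, this⟩⟩
  rw [← Function.Injective.tsum_eq hinj (f := Wdiag k) hsupp]
  refine tsum_congr (fun n => ?_)
  unfold Wdiag
  rw [if_pos rfl]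
  dsimp only
  rw [div_mul_div_comm, one_mul, ← pow_succ']

/-- strict part equals `∑ A`. -/
lemma tsum_Wlt (k : ℕ) : ∑' q, Wlt k q = ∑' p, Af k p := by
  have hinj : Function.Injective (fun p : ℕ+ × ℕ+ => ((p.2, p.1 + p.2) : ℕ+ × ℕ+)) := by
    intro a b h
    rw [Prod.ext_iff] at h
    obtain ⟨h1, h2⟩ := h
    dsimp at h1 h2
    rw [h1] at h2
    have := add_right_cancel h2
    exact Prod.ext this h1
  have hsupp : Function.support (Wlt k)
      ⊆ Set.range (fun p : ℕ+ × ℕ+ => ((p.2, p.1 + p.2) : ℕ+ × ℕ+)) := by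
    intro q hq
    have hlt : q.1 < q.2 := by
      by_contra hc
      exact hq (if_neg hc)
    refine ⟨(q.2 - q.1, q.1), ?_⟩
    rw [Prod.ext_iff]
    constructor
    · rfl
    · show q.2 - q.1 + q.1 = q.2
      rw [add_comm]
      exact PNat.add_sub_of_lt hlt
  rw [← Function.Injective.tsum_eq hinj (f := Wlt k) hsupp]
  refine tsum_congr (fun p => ?_)
  unfold Wlt Af
  rw [if_pos (PNat.lt_add_left p.2 p.1)]

/-- grouping by the larger variable: `∑ Wfull = ∑_n H(n)/n^{k+1}`. -/
lemma tsum_Wfull_eval {k : ℕ} (hk : 1 ≤ k) :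
    ∑' q, Wfull k q = ∑' n : ℕ+, H (n:ℕ) * (1 / ((n:ℕ):ℝ)^(k+1)) := by
  have hswap := (Equiv.prodComm ℕ+ ℕ+).tsum_eq (Wfull k)
  simp only [Equiv.prodComm_apply] at hswap
  rw [← hswap]
  have hV : Summable (fun q : ℕ+ × ℕ+ => Wfull k q.swap) := (summable_Wfull hk).prod_symm
  rw [Summable.tsum_prod' hV (fun n => hV.prod_factor n)]
  refine tsum_congr (fun n => ?_)
  have hzero : ∀ j : ℕ+, j ∉ (range (n:ℕ)).map eN.toEmbedding →
      Wfull k ((n, j) : ℕ+ × ℕ+).swap = 0 := by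
    intro j hj
    rw [mem_mapRange] at hj
    exact if_neg hj
  rw [tsum_eq_sum hzero, Finset.sum_map]
  have e : ∀ a ∈ range (n:ℕ),
      Wfull k ((n, eN.toEmbedding a) : ℕ+ × ℕ+).swap
        = (1 / ((a:ℝ)+1)) * (1 / ((n:ℕ):ℝ)^(k+1)) := by
    intro a ha
    rw [Finset.mem_range] at ha
    show Wfull k (eN a, n) = _
    unfold Wfull
    dsimp only
    rw [if_pos (show (eN a : ℕ+) ≤ n by rw [← PNat.coe_le_coe, eN_coe]; omega)]
    rw [eN_coe]
    push_cast
    ring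
  rw [Finset.sum_congr rfl e, ← Finset.sum_mul]
  rfl

/-- Fubini for `B`: `∑ B = ∑_m H(m)/m^{k+1}`. -/
lemma tsum_Bf_eval {k : ℕ} (hk : 1 ≤ k) :
    ∑' p, Bf k p = ∑' m : ℕ+, (1 / ((m:ℕ):ℝ)^(k+1)) * H (m:ℕ) := by
  have hBG : Bf k = fun p => Gf k p + Af k p := by
    funext p
    exact (GA_eq_B p).symm
  have hBsum : Summable (Bf k) := by
    rw [hBG]
    exact (summable_Gf hk).add (summable_Af hk)
  rw [Summable.tsum_prod' hBsum (fun m => hBsum.prod_factor m)]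
  refine tsum_congr (fun m => ?_)
  have e : ∀ d : ℕ+, Bf k (m, d)
      = (1 / ((m:ℕ):ℝ)^(k+1)) *
          (((m:ℕ):ℝ) / (((d:ℕ):ℝ) * (((m:ℕ):ℝ) + ((d:ℕ):ℝ)))) := fun d => rfl
  rw [tsum_congr e, tsum_mul_left, (hasSum_harmonic m).tsum_eq]

end SFAux

/-- Sum formula in depth 2: ∑_{a+b=k+2, a≥1, b≥2} ζ(a,b) = ζ(k+2). -/
theorem sum_formula_depth_two (k : ℕ) (hk : 1 ≤ k) :
    (∑ p ∈ (Finset.HasAntidiagonal.antidiagonal (k + 2)).filter (fun p => 1 ≤ p.1 ∧ 2 ≤ p.2),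
        mzeta [p.1, p.2]) = mzeta [k + 2] := by
  open SFAux in
  have step1 : (∑ p ∈ (Finset.HasAntidiagonal.antidiagonal (k + 2)).filter (fun p => 1 ≤ p.1 ∧ 2 ≤ p.2),
      mzeta [p.1, p.2]) = ∑ a ∈ Finset.range k, mzeta [a+1, k+1-a] :=
    sum_antidiag k (fun a b => mzeta [a, b])
  have step2 : ∑ a ∈ Finset.range k, mzeta [a+1, k+1-a] = ∑' p, Gf k p := by
    rw [show (∑' p, Gf k p) = ∑' p : ℕ+ × ℕ+, ∑ a ∈ Finset.range k, g (a+1) (k+1-a) p from rfl]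
    rw [Summable.tsum_finsetSum (fun a ha => by
      rw [Finset.mem_range] at ha
      exact summable_g (by omega) (by omega))]
    refine Finset.sum_congr rfl (fun a ha => ?_)
    exact mzeta_pair (a+1) (k+1-a)
  have hG := summable_Gf hk
  have hA := summable_Af hk
  have h1 : ∑' p, Gf k p + ∑' p, Af k p = ∑' p, Bf k p := by
    rw [← Summable.tsum_add hG hA]
    exact tsum_congr (fun p => GA_eq_B p)
  have h2 := tsum_Bf_eval hk
  have h3 := tsum_Wfull_eval hk
  have h4 : ∑' m : ℕ+, (1 / ((m:ℕ):ℝ)^(k+1)) * H (m:ℕ)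
      = ∑' n : ℕ+, H (n:ℕ) * (1 / ((n:ℕ):ℝ)^(k+1)) :=
    tsum_congr (fun n => mul_comm _ _)
  have h5 : ∑' q, Wfull k q = ∑' q, Wdiag k q + ∑' q, Wlt k q := by
    rw [← Summable.tsum_add (summable_Wdiag hk) (summable_Wlt hk)]
    exact tsum_congr (fun q => W_split k q)
  have h6 : ∑' q, Wdiag k q = mzeta [k+2] := by
    rw [mzeta_single (k+2)]
    exact tsum_Wdiag k
  have h7 := tsum_Wlt k
  rw [step1, step2]
  linarith
end

section
/- For |x| < 1, exp( Σ_{n ≥ 1} ζ(2n) x^{2n} / n ) = 1 + Σ_{n ≥ 1} ζ*(2,...,2) x^{2n} (with n twos). -/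
open scoped BigOperators ENNReal
open Filter Topology

namespace ZetaStarAux

/-- Monotone tuples of length `n`. -/
abbrev MonoT (n : ℕ) := {f : Fin n → ℕ+ // Monotone f}

/-- Index type: all finite monotone tuples. -/
abbrev IdxT := (n : ℕ) × MonoT n

noncomputable def Gfun (w : ℕ+ → ℝ≥0∞) (p : IdxT) : ℝ≥0∞ := ∏ i : Fin p.1, w (p.2.1 i)

lemma fin_lowerset_iff {N : ℕ} {p : Fin N → Prop} [DecidablePred p]
    (hd : ∀ i j : Fin N, i ≤ j → p j → p i) (i : Fin N) :
    p i ↔ (i : ℕ) < (Finset.univ.filter p).card := by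
  constructor
  · intro hpi
    have hsub : Finset.Iic i ⊆ Finset.univ.filter p := by
      intro j hj
      simp only [Finset.mem_filter, Finset.mem_univ, true_and]
      exact hd j i (Finset.mem_Iic.mp hj) hpi
    have := Finset.card_le_card hsub
    rw [Fin.card_Iic] at this
    omega
  · intro hlt
    by_contra hni
    have hsub : Finset.univ.filter p ⊆ Finset.Iio i := by
      intro j hj
      simp only [Finset.mem_filter, Finset.mem_univ, true_and] at hj
      rw [Finset.mem_Iio]
      by_contra hij
      exact hni (hd i j (le_of_not_gt (fun hc => hij hc)) hj)
    have := Finset.card_le_card hsub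
    rw [Fin.card_Iio] at this
    omega

lemma sigma_mono_ext {p q : IdxT} (h1 : p.1 = q.1)
    (h2 : ∀ i : Fin p.1, p.2.1 i = q.2.1 (Fin.cast h1 i)) : p = q := by
  obtain ⟨n, f, hf⟩ := p
  obtain ⟨n', g, hg⟩ := q
  dsimp at h1
  subst h1
  simp only [Sigma.mk.inj_iff, heq_eq_eq, true_and]
  exact Subtype.ext (funext fun i => h2 i)

lemma sigma_val_congr {p q : IdxT} (h : p = q) (i : Fin p.1) :
    p.2.1 i = q.2.1 (Fin.cast (congrArg Sigma.fst h) i) := by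
  subst h; rfl

def extFun (a : ℕ+) (k : ℕ) {n : ℕ} (f : Fin n → ℕ+) : Fin (n + k) → ℕ+ :=
  fun i => if h : (i : ℕ) < n then f ⟨i, h⟩ else a

lemma extFun_mono {a : ℕ+} {k n : ℕ} {f : Fin n → ℕ+} (hf : Monotone f)
    (ha : ∀ i, f i ≤ a) : Monotone (extFun a k f) := by
  intro i j hij
  unfold extFun
  by_cases hj : (j : ℕ) < n
  · have hi : (i : ℕ) < n := lt_of_le_of_lt (show (i : ℕ) ≤ (j : ℕ) from hij) hj
    rw [dif_pos hi, dif_pos hj]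
    exact hf (show ((⟨i, hi⟩ : Fin n) ≤ ⟨j, hj⟩) from (show (i:ℕ) ≤ (j:ℕ) from hij))
  · rw [dif_neg hj]
    by_cases hi : (i : ℕ) < n
    · rw [dif_pos hi]; exact ha _
    · rw [dif_neg hi]

lemma prod_extFun (w : ℕ+ → ℝ≥0∞) (a : ℕ+) (k : ℕ) {n : ℕ} (f : Fin n → ℕ+) :
    ∏ i : Fin (n + k), w (extFun a k f i) = (∏ i : Fin n, w (f i)) * (w a) ^ k := by
  rw [Fin.prod_univ_add]
  congr 1
  · apply Finset.prod_congr rfl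
    intro i _
    congr 1
    unfold extFun
    rw [dif_pos (by simp [i.isLt])]
    congr 1
  · have : ∀ i : Fin k, w (extFun a k f (Fin.natAdd n i)) = w a := by
      intro i
      congr 1
      unfold extFun
      rw [dif_neg (by simp)]
    rw [Finset.prod_congr rfl (fun i _ => this i), Finset.prod_const, Finset.card_univ,
      Fintype.card_fin]

theorem key_prod (w : ℕ+ → ℝ≥0∞) (s : Finset ℕ+) :
    ∏ m ∈ s, ∑' k : ℕ, (w m) ^ k =
      ∑' p : {p : IdxT // ∀ i, p.2.1 i ∈ s}, Gfun w p.1 := by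
  classical
  induction s using Finset.induction_on_max with
  | empty =>
    simp only [Finset.prod_empty]
    rw [tsum_eq_single (⟨⟨0, ⟨Fin.elim0, fun i => i.elim0⟩⟩, fun i => i.elim0⟩ :
        {p : IdxT // ∀ i, p.2.1 i ∈ (∅ : Finset ℕ+)}) ?_]
    · simp [Gfun]
    · intro b hb
      exfalso
      apply hb
      obtain ⟨⟨n, f, hf⟩, hmem⟩ := b
      cases n with
      | zero =>
        apply Subtype.ext
        exact sigma_mono_ext rfl (fun i => i.elim0)
      | succ n => exact absurd (hmem 0) (by simp)
  | insert a s ha ih =>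
    have haa : a ∉ s := fun hins => absurd (ha a hins) (lt_irrefl a)
    rw [Finset.prod_insert haa, ih]
    have hle : ∀ (p : {p : IdxT // ∀ i, p.2.1 i ∈ s}) (i : Fin p.1.1), p.1.2.1 i ≤ a :=
      fun p i => (ha _ (p.2 i)).le
    let F : ℕ × {p : IdxT // ∀ i, p.2.1 i ∈ s} → {p : IdxT // ∀ i, p.2.1 i ∈ insert a s} :=
      fun kp =>
        ⟨⟨kp.2.1.1 + kp.1, ⟨extFun a kp.1 kp.2.1.2.1,
            extFun_mono kp.2.1.2.2 (hle kp.2)⟩⟩, by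
          intro i
          dsimp only [extFun]
          split
          · exact Finset.mem_insert_of_mem (kp.2.2 _)
          · exact Finset.mem_insert_self a s⟩
    have hinj : Function.Injective F := by
      rintro ⟨k, ⟨⟨n, f, hf⟩, hmem⟩⟩ ⟨k', ⟨⟨n', f', hf'⟩, hmem'⟩⟩ heq
      have heq' : (⟨n + k, ⟨extFun a k f, _⟩⟩ : IdxT) = ⟨n' + k', ⟨extFun a k' f', _⟩⟩ :=
        congrArg Subtype.val heq
      have h1 : n + k = n' + k' := congrArg Sigma.fst heq'
      have hfun : ∀ i : Fin (n + k),
          extFun a k f i = extFun a k' f' (Fin.cast h1 i) := by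
        intro i
        exact sigma_val_congr heq' i
      have hnn : n = n' := by
        rcases lt_trichotomy n n' with hlt | he | hgt
        · exfalso
          have hik : n < n + k := by omega
          have := hfun ⟨n, hik⟩
          rw [show extFun a k f ⟨n, hik⟩ = a from dif_neg (by simp)] at this
          rw [show extFun a k' f' (Fin.cast h1 ⟨n, hik⟩) = f' ⟨n, hlt⟩ from dif_pos hlt] at this
          exact haa (this ▸ hmem' ⟨n, hlt⟩)
        · exact he
        · exfalso
          have hik : n' < n + k := by omega
          have := hfun ⟨n', hik⟩
          rw [show extFun a k f ⟨n', hik⟩ = f ⟨n', hgt⟩ from dif_pos hgt] at this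
          rw [show extFun a k' f' (Fin.cast h1 ⟨n', hik⟩) = a from dif_neg (by simp)] at this
          exact haa (this ▸ hmem ⟨n', hgt⟩)
      subst hnn
      have hkk : k = k' := by omega
      subst hkk
      have hff : f = f' := by
        funext i
        have h2 := hfun ⟨(i : ℕ), by omega⟩
        rw [show extFun a k f ⟨(i : ℕ), by omega⟩ = f i from dif_pos i.isLt] at h2
        rw [show extFun a k f' (Fin.cast h1 ⟨(i : ℕ), by omega⟩) = f' i from dif_pos i.isLt] at h2
        exact h2
      subst hff
      rfl
    have hsurj : Function.Surjective F := by
      rintro ⟨⟨N, g, hg⟩, hmem⟩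
      have hd : ∀ i j : Fin N, i ≤ j → g j ≠ a → g i ≠ a := by
        intro i j hij hja
        have hjs : g j ∈ s := (Finset.mem_insert.mp (hmem j)).resolve_left hja
        exact ne_of_lt (lt_of_le_of_lt (hg hij) (ha _ hjs))
      have hchar : ∀ i : Fin N, g i ≠ a ↔ (i : ℕ) < (Finset.univ.filter (fun i => g i ≠ a)).card :=
        fin_lowerset_iff hd
      set n := (Finset.univ.filter (fun i : Fin N => g i ≠ a)).card with hn
      have hnN : n ≤ N := (Finset.card_filter_le _ _).trans (by simp)
      have hmono : Monotone (fun i : Fin n => g ⟨(i : ℕ), lt_of_lt_of_le i.isLt hnN⟩) := by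
        intro i j hij
        exact hg (show ((⟨(i:ℕ), _⟩ : Fin N) ≤ ⟨(j:ℕ), _⟩) from (show (i:ℕ) ≤ (j:ℕ) from hij))
      have hmems : ∀ i : Fin n, g ⟨(i : ℕ), lt_of_lt_of_le i.isLt hnN⟩ ∈ s := by
        intro i
        have hne : g ⟨(i : ℕ), lt_of_lt_of_le i.isLt hnN⟩ ≠ a := (hchar _).mpr (by simp [i.isLt])
        exact (Finset.mem_insert.mp (hmem _)).resolve_left hne
      refine ⟨(N - n, ⟨⟨n, ⟨_, hmono⟩⟩, hmems⟩), ?_⟩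
      apply Subtype.ext
      have h1 : n + (N - n) = N := by omega
      apply sigma_mono_ext h1
      intro i
      show extFun a (N - n) _ i = g (Fin.cast h1 i)
      unfold extFun
      split
      · next hlt =>
        congr 1
      · next hge =>
        have : ¬ (g (Fin.cast h1 i) ≠ a) := by
          intro hne
          exact hge ((hchar (Fin.cast h1 i)).mp hne)
        exact (not_not.mp this).symm
    have hpt : ∀ kp : ℕ × {p : IdxT // ∀ i, p.2.1 i ∈ s},
        Gfun w (F kp).1 = (w a) ^ kp.1 * Gfun w kp.2.1 := by
      rintro ⟨k, ⟨⟨n, f, hf⟩, hmem⟩⟩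
      show (∏ i : Fin (n + k), w (extFun a k f i)) = (w a) ^ k * ∏ i : Fin n, w (f i)
      rw [prod_extFun, mul_comm]
    calc (∑' k : ℕ, (w a) ^ k) * ∑' p : {p : IdxT // ∀ i, p.2.1 i ∈ s}, Gfun w p.1
        = ∑' k : ℕ, ((w a) ^ k * ∑' p : {p : IdxT // ∀ i, p.2.1 i ∈ s}, Gfun w p.1) := by
          rw [ENNReal.tsum_mul_right]
      _ = ∑' (k : ℕ) (p : {p : IdxT // ∀ i, p.2.1 i ∈ s}), (w a) ^ k * Gfun w p.1 := by
          exact tsum_congr fun k => ENNReal.tsum_mul_left.symm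
      _ = ∑' kp : ℕ × {p : IdxT // ∀ i, p.2.1 i ∈ s}, (w a) ^ kp.1 * Gfun w kp.2.1 := by
          rw [ENNReal.tsum_prod']
      _ = ∑' kp : ℕ × {p : IdxT // ∀ i, p.2.1 i ∈ s}, Gfun w (F kp).1 := by
          exact tsum_congr fun kp => (hpt kp).symm
      _ = ∑' p : {p : IdxT // ∀ i, p.2.1 i ∈ insert a s}, Gfun w p.1 :=
          Equiv.tsum_eq (Equiv.ofBijective F ⟨hinj, hsurj⟩) (fun p => Gfun w p.1)
theorem key_lim (w : ℕ+ → ℝ≥0∞) :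
    Tendsto (fun s : Finset ℕ+ => ∏ m ∈ s, ∑' k : ℕ, (w m) ^ k) atTop
      (𝓝 (∑' p : IdxT, Gfun w p)) := by
  classical
  have hrw : (fun s : Finset ℕ+ => ∏ m ∈ s, ∑' k : ℕ, (w m) ^ k)
      = fun s : Finset ℕ+ =>
        ∑' p : IdxT, Set.indicator {p : IdxT | ∀ i, p.2.1 i ∈ s} (Gfun w) p := by
    funext s
    rw [key_prod]
    exact tsum_subtype {p : IdxT | ∀ i, p.2.1 i ∈ s} (Gfun w)
  rw [hrw]
  have hmono : Monotone (fun s : Finset ℕ+ =>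
      ∑' p : IdxT, Set.indicator {p : IdxT | ∀ i, p.2.1 i ∈ s} (Gfun w) p) := by
    intro s t hst
    apply ENNReal.tsum_le_tsum
    intro p
    have hsub : {p : IdxT | ∀ i, p.2.1 i ∈ s} ⊆ {p : IdxT | ∀ i, p.2.1 i ∈ t} := by
      intro p hp
      simp only [Set.mem_setOf_eq] at hp ⊢
      exact fun i => Finset.mem_of_subset hst (hp i)
    exact Set.indicator_le_indicator_of_subset hsub (fun p => zero_le) p
  have hkey : (⨆ s : Finset ℕ+,
      ∑' p : IdxT, Set.indicator {p : IdxT | ∀ i, p.2.1 i ∈ s} (Gfun w) p)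
      = ∑' p : IdxT, Gfun w p := by
    apply le_antisymm
    · exact iSup_le fun s => ENNReal.tsum_le_tsum fun p => Set.indicator_le_self _ _ p
    · rw [ENNReal.tsum_eq_iSup_sum]
      apply iSup_le
      intro Fs
      set s : Finset ℕ+ := Fs.sup (fun p => Finset.image p.2.1 Finset.univ) with hs
      have hFs : ∀ p ∈ Fs, ∀ i : Fin p.1, p.2.1 i ∈ s := by
        intro p hp i
        have h1 : Finset.image p.2.1 Finset.univ ⊆ s :=
          Finset.le_sup (f := fun p : IdxT => Finset.image p.2.1 Finset.univ) hp
        exact h1 (Finset.mem_image_of_mem _ (Finset.mem_univ i))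
      calc ∑ p ∈ Fs, Gfun w p
          = ∑ p ∈ Fs, Set.indicator {p : IdxT | ∀ i, p.2.1 i ∈ s} (Gfun w) p :=
            Finset.sum_congr rfl fun p hp => (Set.indicator_of_mem (show p ∈ {p : IdxT | ∀ i, p.2.1 i ∈ s} from hFs p hp) _).symm
        _ ≤ ∑' p : IdxT, Set.indicator {p : IdxT | ∀ i, p.2.1 i ∈ s} (Gfun w) p :=
            ENNReal.sum_le_tsum Fs
        _ ≤ _ := le_iSup (fun s : Finset ℕ+ =>
            ∑' p : IdxT, Set.indicator {p : IdxT | ∀ i, p.2.1 i ∈ s} (Gfun w) p) s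
  rw [← hkey]
  exact tendsto_atTop_iSup hmono

end ZetaStarAux

open ZetaStarAux

lemma mzetaStar_replicate (n : ℕ) :
    mzetaStar (List.replicate n 2) =
      ∑' f : MonoT n, ∏ i : Fin n, (1 : ℝ) / ((f.1 i : ℕ) : ℝ) ^ 2 := by
  unfold mzetaStar
  have hlen : (List.replicate n 2).length = n := List.length_replicate
  let e : MonoT n ≃ {f : Fin (List.replicate n 2).length → ℕ+ // Monotone f} :=
    { toFun := fun g => ⟨fun i => g.1 (Fin.cast hlen i), fun i j hij => g.2 hij⟩
      invFun := fun g => ⟨fun i => g.1 (Fin.cast hlen.symm i), fun i j hij => g.2 hij⟩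
      left_inv := fun g => rfl
      right_inv := fun g => rfl }
  rw [← Equiv.tsum_eq e
    (fun f => ∏ i : Fin (List.replicate n 2).length,
      (1 : ℝ) / ((f.1 i : ℕ) : ℝ) ^ (List.replicate n 2).get i)]
  apply tsum_congr
  intro g
  refine Fintype.prod_equiv (finCongr hlen) _ _ ?_
  intro i
  rw [show (List.replicate n 2).get i = 2 from by simp]
  rfl
/-- exp(∑_{n≥1} ζ(2n)x^{2n}/n) = 1 + ∑_{n≥1} ζ*(2,…,2)x^{2n} for |x| < 1. -/
theorem exp_zeta_even_eq_zeta_star_twos (x : ℝ) (h : |x| < 1) :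
    Real.exp (∑' n : ℕ, (∑' m : ℕ+, 1 / ((m : ℕ) : ℝ) ^ (2 * (n + 1))) *
        x ^ (2 * (n + 1)) / ((n : ℝ) + 1)) =
      1 + ∑' n : ℕ, mzetaStar (List.replicate (n + 1) 2) * x ^ (2 * (n + 1)) := by
  classical
  have hq0 : (0:ℝ) ≤ x ^ 2 := sq_nonneg x
  have hq1 : x ^ 2 < 1 := by nlinarith [abs_nonneg x, sq_abs x]
  set r : ℕ+ → ℝ := fun m => x ^ 2 / ((m : ℕ) : ℝ) ^ 2 with hrdef
  have hm1 : ∀ m : ℕ+, (1:ℝ) ≤ ((m : ℕ) : ℝ) := fun m => by exact_mod_cast m.one_le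
  have hm2 : ∀ m : ℕ+, (1:ℝ) ≤ ((m : ℕ) : ℝ) ^ 2 := fun m => by nlinarith [hm1 m]
  have hr0 : ∀ m, 0 ≤ r m := fun m => div_nonneg hq0 (by positivity)
  have hr1 : ∀ m, r m < 1 := fun m => lt_of_le_of_lt (div_le_self hq0 (hm2 m)) hq1
  have h1r : ∀ m, 0 < 1 - r m := fun m => by linarith [hr1 m]
  set F : ℕ → ℕ+ → ℝ := fun n m => (r m) ^ (n + 1) / ((n : ℝ) + 1) with hFdef
  have hF0 : ∀ n m, 0 ≤ F n m := fun n m => by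
    apply div_nonneg (pow_nonneg (hr0 m) _) (by positivity)
  have hcol : ∀ m, HasSum (fun n => F n m) (-Real.log (1 - r m)) := by
    intro m
    have habs : |r m| < 1 := by rw [abs_of_nonneg (hr0 m)]; exact hr1 m
    have := Real.hasSum_pow_div_log_of_abs_lt_one habs
    exact this.congr_fun fun n => rfl
  have hζs : ∀ j : ℕ, Summable (fun m : ℕ+ => 1 / ((m : ℕ) : ℝ) ^ (j + 2)) := by
    intro j
    have h0 : Summable (fun k : ℕ => 1 / (k : ℝ) ^ (j + 2)) :=
      Real.summable_one_div_nat_pow.mpr (by omega)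
    exact h0.comp_injective PNat.coe_injective
  have hζ2 : Summable (fun m : ℕ+ => 1 / ((m : ℕ) : ℝ) ^ 2) := by
    have := hζs 0
    simpa using this
  have hFm : ∀ (n : ℕ) (m : ℕ+),
      F n m = (x ^ 2) ^ (n + 1) / ((n : ℝ) + 1) * (1 / ((m : ℕ) : ℝ) ^ (2 * n + 2)) := by
    intro n m
    show (x ^ 2 / ((m : ℕ) : ℝ) ^ 2) ^ (n + 1) / ((n : ℝ) + 1) = _
    rw [div_pow, ← pow_mul, show 2 * (n + 1) = 2 * n + 2 from by ring]
    ring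
  have hrowS : ∀ n, Summable (fun m : ℕ+ => F n m) := by
    intro n
    have := (hζs (2 * n)).mul_left ((x ^ 2) ^ (n + 1) / ((n : ℝ) + 1))
    exact this.congr fun m => (hFm n m).symm
  have hbound : ∀ n (m : ℕ+), F n m ≤ (x ^ 2) ^ (n + 1) * (1 / ((m : ℕ) : ℝ) ^ 2) := by
    intro n m
    have h1 : F n m ≤ (r m) ^ (n + 1) := by
      apply div_le_self (pow_nonneg (hr0 m) _)
      have : (0:ℝ) ≤ (n : ℝ) := Nat.cast_nonneg n
      linarith
    refine h1.trans ?_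
    have h2 : (r m) ^ (n + 1) = (x ^ 2) ^ (n + 1) * (1 / ((m : ℕ) : ℝ) ^ 2) ^ (n + 1) := by
      rw [← mul_pow]
      congr 1
      rw [hrdef]
      ring
    rw [h2]
    apply mul_le_mul_of_nonneg_left _ (pow_nonneg hq0 _)
    have h3 : (0:ℝ) ≤ 1 / ((m : ℕ) : ℝ) ^ 2 := by positivity
    have h4 : 1 / ((m : ℕ) : ℝ) ^ 2 ≤ 1 := by
      rw [div_le_one (by positivity)]
      exact hm2 m
    calc (1 / ((m : ℕ) : ℝ) ^ 2) ^ (n + 1) ≤ (1 / ((m : ℕ) : ℝ) ^ 2) ^ 1 :=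
          pow_le_pow_of_le_one h3 h4 (by omega)
      _ = 1 / ((m : ℕ) : ℝ) ^ 2 := pow_one _
  have hgeomS : Summable (fun n : ℕ => (x ^ 2) ^ (n + 1) * (∑' m : ℕ+, 1 / ((m : ℕ) : ℝ) ^ 2)) := by
    have := (summable_geometric_of_lt_one hq0 hq1).mul_left
      (x ^ 2 * ∑' m : ℕ+, 1 / ((m : ℕ) : ℝ) ^ 2)
    exact this.congr fun n => by rw [pow_succ]; ring
  have hsumrow : Summable (fun n : ℕ => ∑' m : ℕ+, F n m) := by
    apply Summable.of_nonneg_of_le (fun n => tsum_nonneg fun m => hF0 n m) _ hgeomS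
    intro n
    calc ∑' m : ℕ+, F n m
        ≤ ∑' m : ℕ+, (x ^ 2) ^ (n + 1) * (1 / ((m : ℕ) : ℝ) ^ 2) :=
          Summable.tsum_le_tsum (hbound n) (hrowS n) (hζ2.mul_left _)
      _ = (x ^ 2) ^ (n + 1) * ∑' m : ℕ+, 1 / ((m : ℕ) : ℝ) ^ 2 := tsum_mul_left
  have hU : Summable (Function.uncurry (fun (n : ℕ) (m : ℕ+) => F n m)) :=
    (summable_prod_of_nonneg (fun p => hF0 p.1 p.2)).mpr ⟨hrowS, hsumrow⟩
  have hswap : ∑' (m : ℕ+) (n : ℕ), F n m = ∑' (n : ℕ) (m : ℕ+), F n m :=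
    Summable.tsum_comm' hU (fun n => hrowS n) (fun m => (hcol m).summable)
  have hsumm_m : Summable (fun m : ℕ+ => ∑' n : ℕ, F n m) :=
    ((summable_prod_of_nonneg (fun p : ℕ+ × ℕ => hF0 p.2 p.1)).mp hU.prod_symm).2
  have hSrw : (∑' n : ℕ, (∑' m : ℕ+, 1 / ((m : ℕ) : ℝ) ^ (2 * (n + 1))) *
      x ^ (2 * (n + 1)) / ((n : ℝ) + 1)) = ∑' m : ℕ+, (-Real.log (1 - r m)) := by
    have h1 : ∀ n : ℕ, (∑' m : ℕ+, 1 / ((m : ℕ) : ℝ) ^ (2 * (n + 1))) *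
        x ^ (2 * (n + 1)) / ((n : ℝ) + 1) = ∑' m : ℕ+, F n m := by
      intro n
      rw [← tsum_mul_right, ← tsum_div_const]
      apply tsum_congr
      intro m
      show _ = (r m) ^ (n + 1) / ((n : ℝ) + 1)
      rw [hrdef]
      rw [div_pow, ← pow_mul, ← pow_mul]
      ring
    rw [tsum_congr h1, ← hswap, tsum_congr (fun m => (hcol m).tsum_eq)]
  have hsummLog : Summable (fun m : ℕ+ => -Real.log (1 - r m)) :=
    hsumm_m.congr (fun m => (hcol m).tsum_eq)
  set S := ∑' n : ℕ, (∑' m : ℕ+, 1 / ((m : ℕ) : ℝ) ^ (2 * (n + 1))) *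
      x ^ (2 * (n + 1)) / ((n : ℝ) + 1) with hSdef
  have hhs : HasSum (fun m : ℕ+ => -Real.log (1 - r m)) S := by
    have := hsummLog.hasSum
    rwa [← hSrw] at this
  have hexp : Tendsto (fun s : Finset ℕ+ => ∏ m ∈ s, (1 - r m)⁻¹) atTop (𝓝 (Real.exp S)) := by
    have h2 := (Real.continuous_exp.continuousAt (x := S)).tendsto.comp hhs
    apply Tendsto.congr _ h2
    intro s
    show Real.exp (∑ m ∈ s, -Real.log (1 - r m)) = _
    rw [Real.exp_sum]
    apply Finset.prod_congr rfl
    intro m _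
    rw [Real.exp_neg, Real.exp_log (h1r m)]
  set w : ℕ+ → ℝ≥0∞ := fun m => ENNReal.ofReal (r m) with hwdef
  have hgm : ∀ m : ℕ+, (∑' k : ℕ, (w m) ^ k) = ENNReal.ofReal ((1 - r m)⁻¹) := by
    intro m
    rw [ENNReal.tsum_geometric]
    rw [show (1 : ℝ≥0∞) - w m = ENNReal.ofReal (1 - r m) from by
      rw [ENNReal.ofReal_sub 1 (hr0 m), ENNReal.ofReal_one]]
    exact (ENNReal.ofReal_inv_of_pos (h1r m)).symm
  have hΦΨ : ∀ s : Finset ℕ+,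
      ∏ m ∈ s, (∑' k : ℕ, (w m) ^ k) = ENNReal.ofReal (∏ m ∈ s, (1 - r m)⁻¹) := by
    intro s
    rw [ENNReal.ofReal_prod_of_nonneg (fun m _ => inv_nonneg.mpr (h1r m).le)]
    exact Finset.prod_congr rfl fun m _ => hgm m
  have hofexp : Tendsto (fun s : Finset ℕ+ => ∏ m ∈ s, (∑' k : ℕ, (w m) ^ k)) atTop
      (𝓝 (ENNReal.ofReal (Real.exp S))) := by
    have h3 := (ENNReal.continuous_ofReal.continuousAt).tendsto.comp hexp
    apply Tendsto.congr _ h3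
    intro s
    exact (hΦΨ s).symm
  have hA : (∑' p : IdxT, Gfun w p) = ENNReal.ofReal (Real.exp S) :=
    tendsto_nhds_unique (key_lim w) hofexp
  have hAne : (∑' p : IdxT, Gfun w p) ≠ ⊤ := by
    rw [hA]; exact ENNReal.ofReal_ne_top
  have hsig : (∑' p : IdxT, Gfun w p)
      = ∑' (n : ℕ) (f : MonoT n), ∏ i : Fin n, w (f.1 i) := ENNReal.tsum_sigma' _
  set t : ℕ → ℝ≥0∞ := fun n => ∑' f : MonoT n, ∏ i : Fin n, w (f.1 i) with htdef
  have hAne' : (∑' k : ℕ, t k) ≠ ⊤ := by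
    have e5 : (∑' k : ℕ, t k) = ∑' p : IdxT, Gfun w p := hsig.symm
    rw [e5]; exact hAne
  have ht0 : t 0 = 1 := by
    show (∑' f : MonoT 0, ∏ i : Fin 0, w (f.1 i)) = 1
    rw [tsum_eq_single (⟨Fin.elim0, fun i => i.elim0⟩ : MonoT 0) ?_]
    · simp
    · intro b hb
      exfalso
      exact hb (Subtype.ext (funext fun i => i.elim0))
  have htne : ∀ n, t n ≠ ⊤ := fun n => ne_top_of_le_ne_top hAne' (ENNReal.le_tsum n)
  have hsummt : Summable (fun n => (t n).toReal) := ENNReal.summable_toReal hAne'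
  have hterm : ∀ n : ℕ,
      (t (n + 1)).toReal = mzetaStar (List.replicate (n + 1) 2) * x ^ (2 * (n + 1)) := by
    intro n
    have h1 : t (n + 1) = ∑' f : MonoT (n + 1),
        ENNReal.ofReal (∏ i : Fin (n + 1), r (f.1 i)) := by
      show (∑' f : MonoT (n + 1), ∏ i : Fin (n + 1), w (f.1 i)) = _
      exact tsum_congr fun f =>
        (ENNReal.ofReal_prod_of_nonneg (fun i _ => hr0 (f.1 i))).symm
    rw [h1, ENNReal.tsum_toReal_eq (fun f => ENNReal.ofReal_ne_top)]
    rw [tsum_congr (fun f : MonoT (n + 1) =>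
      ENNReal.toReal_ofReal (Finset.prod_nonneg fun i _ => hr0 (f.1 i)))]
    rw [mzetaStar_replicate, ← tsum_mul_right]
    apply tsum_congr
    intro f
    rw [pow_mul, show ((x : ℝ) ^ 2) ^ (n + 1) = ∏ _i : Fin (n + 1), x ^ 2 from by
        rw [Finset.prod_const]; simp, ← Finset.prod_mul_distrib]
    apply Finset.prod_congr rfl
    intro i _
    show r (f.1 i) = 1 / ((f.1 i : ℕ) : ℝ) ^ 2 * x ^ 2
    rw [hrdef]
    ring
  have hfinal : Real.exp S = 1 + ∑' n : ℕ, (t (n + 1)).toReal := by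
    have e1 : Real.exp S = (∑' p : IdxT, Gfun w p).toReal := by
      rw [hA, ENNReal.toReal_ofReal (Real.exp_pos S).le]
    rw [e1, hsig]
    have e2 : (∑' (n : ℕ) (f : MonoT n), ∏ i : Fin n, w (f.1 i)) = ∑' n, t n := rfl
    rw [e2, ENNReal.tsum_toReal_eq htne, Summable.tsum_eq_zero_add hsummt, ht0, ENNReal.toReal_one]
  rw [hfinal]
  congr 1
  exact tsum_congr hterm
end

section
/- For |x| < 1, exp( Σ_{n ≥ 1} (−1)^{n−1} ζ(3n) x^{3n} / n ) = 1 + Σ_{n ≥ 1} ζ(3,...,3) x^{3n} (with n threes), where ζ(3,...,3) = Σ_{0 < m_1 < ... < m_n} 1/(m_1³ ⋯ m_n³). -/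
open scoped BigOperators

open Filter Topology Real

namespace ExpZetaAux

/-- The basic factor `x^3/m^3`. -/
noncomputable def a (x : ℝ) (m : ℕ+) : ℝ := x ^ 3 / ((m : ℕ) : ℝ) ^ 3

/-- The double-series term. -/
noncomputable def F (x : ℝ) (p : ℕ × ℕ+) : ℝ :=
  (-1 : ℝ) ^ p.1 * (1 / ((p.2 : ℕ) : ℝ) ^ (3 * (p.1 + 1))) * x ^ (3 * (p.1 + 1)) / ((p.1 : ℝ) + 1)

/-- The finite-subset product. -/
noncomputable def g (x : ℝ) (s : Finset ℕ+) : ℝ := ∏ m ∈ s, a x m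

lemma one_le_m (m : ℕ+) : (1 : ℝ) ≤ ((m : ℕ) : ℝ) := by exact_mod_cast m.one_le

lemma m_pos (m : ℕ+) : (0 : ℝ) < ((m : ℕ) : ℝ) := lt_of_lt_of_le one_pos (one_le_m m)

lemma abs_a_le (x : ℝ) (m : ℕ+) : |a x m| ≤ |x| ^ 3 := by
  rw [a, abs_div, abs_pow, abs_pow, abs_of_pos (m_pos m)]
  exact div_le_self (by positivity) (one_le_pow₀ (one_le_m m))

lemma abs_x3_lt_one {x : ℝ} (h : |x| < 1) : |x| ^ 3 < 1 :=
  pow_lt_one₀ (abs_nonneg x) h (by norm_num)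

lemma abs_a_lt_one {x : ℝ} (h : |x| < 1) (m : ℕ+) : |a x m| < 1 :=
  lt_of_le_of_lt (abs_a_le x m) (abs_x3_lt_one h)

lemma one_add_a_pos {x : ℝ} (h : |x| < 1) (m : ℕ+) : 0 < 1 + a x m := by
  have := (abs_lt.mp (abs_a_lt_one h m)).1
  linarith

lemma summable_c : Summable fun m : ℕ+ => 1 / ((m : ℕ) : ℝ) ^ 3 := by
  have h0 : Summable fun n : ℕ => 1 / (n : ℝ) ^ 3 :=
    Real.summable_one_div_nat_pow.2 (by norm_num)
  exact h0.comp_injective (fun a b hab => PNat.coe_injective hab)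

lemma summable_abs_a {x : ℝ} : Summable fun m : ℕ+ => |a x m| := by
  have := (summable_c.mul_left (|x| ^ 3))
  refine this.congr fun m => ?_
  rw [a, abs_div, abs_pow, abs_pow, abs_of_pos (m_pos m), mul_one_div]

lemma hasSum_F_m {x : ℝ} (h : |x| < 1) (m : ℕ+) :
    HasSum (fun n => F x (n, m)) (Real.log (1 + a x m)) := by
  have hylt : |(-(x ^ 3 / ((m : ℕ) : ℝ) ^ 3))| < 1 := by
    rw [abs_neg]; exact abs_a_lt_one h m
  have H2 := (Real.hasSum_pow_div_log_of_abs_lt_one hylt).neg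
  have h1y : (1 : ℝ) - -(x ^ 3 / ((m : ℕ) : ℝ) ^ 3) = 1 + a x m := by rw [a]; ring
  rw [neg_neg, h1y] at H2
  refine H2.congr_fun fun n => ?_
  have e1 : (-(x ^ 3 / ((m : ℕ) : ℝ) ^ 3)) ^ (n + 1) =
      ((-1 : ℝ) ^ n * -1) * (x ^ (3 * (n + 1)) / ((m : ℕ) : ℝ) ^ (3 * (n + 1))) := by
    rw [neg_pow (x ^ 3 / ((m : ℕ) : ℝ) ^ 3), div_pow, ← pow_mul, ← pow_mul, pow_succ]
  rw [e1]
  simp only [F]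
  ring

lemma summable_F {x : ℝ} (h : |x| < 1) : Summable (F x) := by
  have hb : Summable fun n : ℕ => (|x| ^ 3) ^ (n + 1) := by
    have := (summable_geometric_of_lt_one (by positivity) (abs_x3_lt_one h)).mul_left (|x| ^ 3)
    exact this.congr fun n => (pow_succ' _ _).symm
  have hprod : Summable fun p : ℕ × ℕ+ => (|x| ^ 3) ^ (p.1 + 1) * (1 / ((p.2 : ℕ) : ℝ) ^ 3) := by
    apply Summable.mul_of_nonneg hb summable_c
    · intro n; positivity
    · intro m; positivity
  refine Summable.of_abs (hprod.of_nonneg_of_le (fun p => abs_nonneg _) fun p => ?_)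
  obtain ⟨n, m⟩ := p
  have hm1 : (1 : ℝ) ≤ ((m : ℕ) : ℝ) := one_le_m m
  have key : |F x (n, m)| =
      |x| ^ (3 * (n + 1)) / ((m : ℕ) : ℝ) ^ (3 * (n + 1)) / ((n : ℝ) + 1) := by
    rw [F, abs_div, abs_mul, abs_mul, abs_pow, abs_pow, abs_neg, abs_one, one_pow, one_mul,
      abs_div, abs_one, abs_pow, abs_of_pos (m_pos m),
      abs_of_pos (by positivity : (0:ℝ) < (n:ℝ)+1)]
    ring
  rw [key]
  have h1 : |x| ^ (3 * (n + 1)) = (|x| ^ 3) ^ (n + 1) := by rw [pow_mul]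
  have h2 : ((m : ℕ) : ℝ) ^ 3 ≤ ((m : ℕ) : ℝ) ^ (3 * (n + 1)) :=
    pow_le_pow_right₀ hm1 (Nat.le_mul_of_pos_right 3 n.succ_pos)
  have t1 : |x| ^ (3 * (n + 1)) / ((m : ℕ) : ℝ) ^ (3 * (n + 1)) / ((n : ℝ) + 1)
      ≤ |x| ^ (3 * (n + 1)) / ((m : ℕ) : ℝ) ^ (3 * (n + 1)) := by
    apply div_le_self (by positivity)
    have := Nat.cast_nonneg (α := ℝ) n
    linarith
  have t2 : |x| ^ (3 * (n + 1)) / ((m : ℕ) : ℝ) ^ (3 * (n + 1))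
      ≤ |x| ^ (3 * (n + 1)) / ((m : ℕ) : ℝ) ^ 3 :=
    div_le_div_of_nonneg_left (by positivity) (by positivity) h2
  have t3 : |x| ^ (3 * (n + 1)) / ((m : ℕ) : ℝ) ^ 3
      = (|x| ^ 3) ^ (n + 1) * (1 / ((m : ℕ) : ℝ) ^ 3) := by rw [h1]; ring
  linarith

lemma S_eq {x : ℝ} (h : |x| < 1) :
    (∑' n : ℕ, (-1 : ℝ) ^ n * (∑' m : ℕ+, 1 / ((m : ℕ) : ℝ) ^ (3 * (n + 1))) *
        x ^ (3 * (n + 1)) / ((n : ℝ) + 1)) = ∑' m : ℕ+, Real.log (1 + a x m) := by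
  have hF := summable_F h
  have hA : ∀ n : ℕ, (-1 : ℝ) ^ n * (∑' m : ℕ+, 1 / ((m : ℕ) : ℝ) ^ (3 * (n + 1))) *
      x ^ (3 * (n + 1)) / ((n : ℝ) + 1) = ∑' m : ℕ+, F x (n, m) := by
    intro n
    have he : ∀ m : ℕ+, F x (n, m) =
        (1 / ((m : ℕ) : ℝ) ^ (3 * (n + 1))) *
          ((-1 : ℝ) ^ n * x ^ (3 * (n + 1)) / ((n : ℝ) + 1)) := by
      intro m; simp only [F]; ring
    rw [tsum_congr he, tsum_mul_right]
    ring
  rw [tsum_congr hA]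
  have comm := Summable.tsum_comm' (f := fun (n : ℕ) (m : ℕ+) => F x (n, m)) hF
    (fun n => hF.prod_factor n) (fun m => (hasSum_F_m h m).summable)
  rw [← comm]
  exact tsum_congr fun m => (hasSum_F_m h m).tsum_eq

lemma summable_log {x : ℝ} (h : |x| < 1) :
    Summable fun m : ℕ+ => Real.log (1 + a x m) := by
  have hs : Summable fun m : ℕ+ => ∑' n : ℕ, F x (n, m) := ((summable_F h).prod_symm).prod
  exact hs.congr fun m => (hasSum_F_m h m).tsum_eq

lemma hasProd_one_add {x : ℝ} (h : |x| < 1) :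
    HasProd (fun m : ℕ+ => 1 + a x m)
      (Real.exp (∑' m : ℕ+, Real.log (1 + a x m))) := by
  have := ((summable_log h).hasSum).rexp
  exact this.congr_fun fun m => (Real.exp_log (one_add_a_pos h m)).symm

lemma summable_g {x : ℝ} (h : |x| < 1) : Summable (g x) := by
  set C : ℝ := ∑' m : ℕ+, |a x m| with hC
  have habs : Summable fun s : Finset ℕ+ => ∏ m ∈ s, |a x m| := by
    refine summable_of_sum_le (c := Real.exp C) (fun s => by positivity) fun u => ?_
    set Fu : Finset ℕ+ := u.sup id with hFu
    have hsub : u ⊆ Fu.powerset := fun s hs =>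
      Finset.mem_powerset.2 (Finset.le_sup (f := id) hs)
    calc ∑ s ∈ u, ∏ m ∈ s, |a x m|
        ≤ ∑ s ∈ Fu.powerset, ∏ m ∈ s, |a x m| :=
          Finset.sum_le_sum_of_subset_of_nonneg hsub (fun s _ _ => by positivity)
      _ = ∏ m ∈ Fu, (|a x m| + 1) := by
          rw [Finset.prod_add]
          exact (Finset.sum_congr rfl fun s _ => by simp).symm
      _ ≤ ∏ m ∈ Fu, Real.exp (|a x m|) :=
          Finset.prod_le_prod (fun m _ => by positivity)
            (fun m _ => by linarith [Real.add_one_le_exp (|a x m|)])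
      _ = Real.exp (∑ m ∈ Fu, |a x m|) := (Real.exp_sum _ _).symm
      _ ≤ Real.exp C := Real.exp_le_exp.2
          (summable_abs_a.sum_le_tsum Fu (fun m _ => abs_nonneg _))
  refine Summable.of_abs (habs.congr fun s => ?_)
  rw [g, Finset.abs_prod]

lemma tendsto_powerset :
    Tendsto (fun F : Finset ℕ+ => F.powerset) atTop atTop := by
  refine tendsto_atTop_atTop.2 fun u => ⟨u.sup id, fun F hF => ?_⟩
  intro s hs
  exact Finset.mem_powerset.2 (le_trans (Finset.le_sup (f := id) hs) hF)

lemma tsum_g_eq {x : ℝ} (h : |x| < 1) :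
    ∑' s : Finset ℕ+, g x s = Real.exp (∑' m : ℕ+, Real.log (1 + a x m)) := by
  have h1 : Tendsto (fun F : Finset ℕ+ => ∏ m ∈ F, (1 + a x m)) atTop
      (𝓝 (Real.exp (∑' m : ℕ+, Real.log (1 + a x m)))) := hasProd_one_add h
  have h2 : Tendsto (fun F : Finset ℕ+ => ∑ s ∈ F.powerset, g x s) atTop
      (𝓝 (∑' s : Finset ℕ+, g x s)) := (summable_g h).hasSum.comp tendsto_powerset
  have heq : (fun F : Finset ℕ+ => ∑ s ∈ F.powerset, g x s) =
      fun F : Finset ℕ+ => ∏ m ∈ F, (1 + a x m) := by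
    funext F
    calc ∑ s ∈ F.powerset, g x s
        = ∑ s ∈ F.powerset, (∏ m ∈ s, a x m) * ∏ m ∈ F \ s, (1 : ℝ) := by
          refine Finset.sum_congr rfl fun s _ => ?_
          rw [g, Finset.prod_const_one, mul_one]
      _ = ∏ m ∈ F, (a x m + 1) := (Finset.prod_add _ _ F).symm
      _ = ∏ m ∈ F, (1 + a x m) := Finset.prod_congr rfl fun m _ => add_comm _ _
  rw [heq] at h2
  exact tendsto_nhds_unique h2 h1

/-- Strictly monotone tuples of length `k` correspond to `k`-element finsets. -/
noncomputable def finsetEquiv (k : ℕ) :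
    {f : Fin k → ℕ+ // StrictMono f} ≃ ↥(Finset.card ⁻¹' {k} : Set (Finset ℕ+)) where
  toFun f := ⟨Finset.image f.1 Finset.univ, by
    have : (Finset.image f.1 Finset.univ).card = k := by
      rw [Finset.card_image_of_injective _ f.2.injective, Finset.card_univ, Fintype.card_fin]
    exact this⟩
  invFun s := ⟨s.1.orderEmbOfFin s.2, (s.1.orderEmbOfFin s.2).strictMono⟩
  left_inv f := by
    apply Subtype.ext
    exact (Finset.orderEmbOfFin_unique _
      (fun i => Finset.mem_image_of_mem _ (Finset.mem_univ i)) f.2).symm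
  right_inv s := by
    apply Subtype.ext
    apply Finset.coe_injective
    rw [Finset.coe_image, Finset.coe_univ, Set.image_univ]
    exact Finset.range_orderEmbOfFin s.1 s.2

lemma tsum_fiber_card (x : ℝ) (k : ℕ) :
    ∑' s : ↥(Finset.card ⁻¹' {k} : Set (Finset ℕ+)), g x ↑s =
      x ^ (3 * k) * ∑' f : {f : Fin k → ℕ+ // StrictMono f},
        ∏ i : Fin k, (1 : ℝ) / ((f.1 i : ℕ) : ℝ) ^ 3 := by
  rw [← (finsetEquiv k).tsum_eq, ← tsum_mul_left]
  refine tsum_congr fun f => ?_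
  show g x (Finset.image f.1 Finset.univ) = _
  rw [g, Finset.prod_image (fun i _ j _ hij => f.2.injective hij)]
  calc ∏ i : Fin k, a x (f.1 i)
      = ∏ i : Fin k, x ^ 3 * ((1 : ℝ) / ((f.1 i : ℕ) : ℝ) ^ 3) :=
        Finset.prod_congr rfl fun i _ => by rw [a]; ring
    _ = (x ^ 3) ^ k * ∏ i : Fin k, (1 : ℝ) / ((f.1 i : ℕ) : ℝ) ^ 3 := by
        rw [Finset.prod_mul_distrib, Finset.prod_const, Finset.card_univ, Fintype.card_fin]
    _ = x ^ (3 * k) * ∏ i : Fin k, (1 : ℝ) / ((f.1 i : ℕ) : ℝ) ^ 3 := by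
        rw [← pow_mul]

lemma tsum_sm_congr {m n : ℕ} (hmn : m = n) :
    (∑' f : {f : Fin m → ℕ+ // StrictMono f},
        ∏ i : Fin m, (1 : ℝ) / ((f.1 i : ℕ) : ℝ) ^ 3) =
      ∑' f : {f : Fin n → ℕ+ // StrictMono f},
        ∏ i : Fin n, (1 : ℝ) / ((f.1 i : ℕ) : ℝ) ^ 3 := by
  subst hmn; rfl

lemma mzeta_replicate (k : ℕ) :
    mzeta (List.replicate k 3) =
      ∑' f : {f : Fin k → ℕ+ // StrictMono f},
        ∏ i : Fin k, (1 : ℝ) / ((f.1 i : ℕ) : ℝ) ^ 3 := by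
  unfold mzeta
  rw [← tsum_sm_congr (List.length_replicate (n := k) (a := 3))]
  exact tsum_congr fun f => Finset.prod_congr rfl fun i _ => by
    simp [List.get_eq_getElem, List.getElem_replicate]

lemma tsum_fin0 :
    (∑' f : {f : Fin 0 → ℕ+ // StrictMono f},
        ∏ i : Fin 0, (1 : ℝ) / ((f.1 i : ℕ) : ℝ) ^ 3) = 1 := by
  rw [tsum_eq_single (⟨Fin.elim0, fun i => i.elim0⟩ : {f : Fin 0 → ℕ+ // StrictMono f})]
  · simp
  · intro b hb
    exact absurd (Subtype.ext (funext fun i => i.elim0)) hb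

end ExpZetaAux

open ExpZetaAux in
/-- exp(∑_{n≥1} (−1)^{n−1} ζ(3n)x^{3n}/n) = 1 + ∑_{n≥1} ζ(3,…,3)x^{3n} for |x| < 1. -/
theorem exp_zeta_triple_eq_mzeta_threes (x : ℝ) (h : |x| < 1) :
    Real.exp (∑' n : ℕ, (-1 : ℝ) ^ n * (∑' m : ℕ+, 1 / ((m : ℕ) : ℝ) ^ (3 * (n + 1))) *
        x ^ (3 * (n + 1)) / ((n : ℝ) + 1)) =
      1 + ∑' n : ℕ, mzeta (List.replicate (n + 1) 3) * x ^ (3 * (n + 1)) := by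
  rw [S_eq h]
  have hg : HasSum (g x) (Real.exp (∑' m : ℕ+, Real.log (1 + a x m))) := by
    rw [← tsum_g_eq h]; exact (summable_g h).hasSum
  have key := hg.tsum_fiberwise Finset.card
  rw [← key.tsum_eq, key.summable.tsum_eq_zero_add]
  congr 1
  · rw [tsum_fiber_card x 0, tsum_fin0]
    norm_num
  · refine tsum_congr fun n => ?_
    rw [tsum_fiber_card x (n + 1), mzeta_replicate (n + 1), mul_comm]
end

section
/- Sum formula for maximal-height MZVs: letting T(k) = Σ ζ(k_1,...,k_r) over all r ≥ 1 and k_1+...+k_r = k with every k_i ≥ 2, one has, as an identity of convergent power series for |x| < 1, 1 + Σ_{k ≥ 2} T(k) x^k = (1 + Σ_{n ≥ 1} ζ*(2,...,2) x^{2n}) · (1 + Σ_{n ≥ 1} ζ(3,...,3) x^{3n}). -/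
open scoped BigOperators

/-- T(k), the sum of all multiple zeta values of weight k and maximal height
(all entries ≥ 2). -/
noncomputable def T (k : ℕ) : ℝ :=
  ∑' l : {l : List ℕ // l ≠ [] ∧ (∀ i ∈ l, 2 ≤ i) ∧ l.sum = k}, mzeta l.1

set_option maxHeartbeats 1000000

namespace MHSF

/-- strict-mono series coefficient -/
noncomputable def SS (φ : ℕ+ → ℝ) (n : ℕ) : ℝ :=
  ∑' f : {f : Fin n → ℕ+ // StrictMono f}, ∏ i, φ (f.1 i)

/-- monotone series coefficient -/
noncomputable def SM (φ : ℕ+ → ℝ) (n : ℕ) : ℝ :=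
  ∑' f : {f : Fin n → ℕ+ // Monotone f}, ∏ i, φ (f.1 i)

lemma mzeta_const (ks : List ℕ) (c : ℕ) (h : ∀ k ∈ ks, k = c) :
    mzeta ks = SS (fun m => 1 / ((m : ℕ) : ℝ) ^ c) ks.length := by
  unfold mzeta SS
  refine tsum_congr fun f => Finset.prod_congr rfl fun i _ => ?_
  rw [h _ (ks.get_mem i)]

lemma mzetaStar_const (ks : List ℕ) (c : ℕ) (h : ∀ k ∈ ks, k = c) :
    mzetaStar ks = SM (fun m => 1 / ((m : ℕ) : ℝ) ^ c) ks.length := by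
  unfold mzetaStar SM
  refine tsum_congr fun f => Finset.prod_congr rfl fun i _ => ?_
  rw [h _ (ks.get_mem i)]

instance uniqueStrict0 : Unique {f : Fin 0 → ℕ+ // StrictMono f} :=
  ⟨⟨⟨fun i => i.elim0, fun a => a.elim0⟩⟩, fun f => Subtype.ext (funext fun i => i.elim0)⟩

instance uniqueMono0 : Unique {f : Fin 0 → ℕ+ // Monotone f} :=
  ⟨⟨⟨fun i => i.elim0, fun a => a.elim0⟩⟩, fun f => Subtype.ext (funext fun i => i.elim0)⟩

lemma SS_zero (φ : ℕ+ → ℝ) : SS φ 0 = 1 := by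
  unfold SS
  rw [tsum_eq_single (default : {f : Fin 0 → ℕ+ // StrictMono f})
    (fun b hb => absurd (Subsingleton.elim b default) hb)]
  simp

lemma SM_zero (φ : ℕ+ → ℝ) : SM φ 0 = 1 := by
  unfold SM
  rw [tsum_eq_single (default : {f : Fin 0 → ℕ+ // Monotone f})
    (fun b hb => absurd (Subsingleton.elim b default) hb)]
  simp

lemma SS_mul (φ : ℕ+ → ℝ) (c : ℝ) (n : ℕ) :
    SS φ n * c ^ n = SS (fun m => φ m * c) n := by
  unfold SS
  rw [← tsum_mul_right]
  refine tsum_congr fun f => ?_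
  rw [Finset.prod_mul_distrib, Finset.prod_const, Finset.card_univ, Fintype.card_fin]

lemma SM_mul (φ : ℕ+ → ℝ) (c : ℝ) (n : ℕ) :
    SM φ n * c ^ n = SM (fun m => φ m * c) n := by
  unfold SM
  rw [← tsum_mul_right]
  refine tsum_congr fun f => ?_
  rw [Finset.prod_mul_distrib, Finset.prod_const, Finset.card_univ, Fintype.card_fin]

lemma mzeta_nil : mzeta [] = 1 := by
  rw [mzeta_const [] 0 (by simp)]
  exact SS_zero _



/-- strictly monotone tuples of arbitrary length ≃ finsets -/
noncomputable def sfEquiv : (Σ n : ℕ, {f : Fin n → ℕ+ // StrictMono f}) ≃ Finset ℕ+ := by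
  refine Equiv.ofBijective
    (fun p => Finset.univ.map ⟨p.2.1, p.2.2.injective⟩) ⟨?_, ?_⟩
  · rintro ⟨n, f, hf⟩ ⟨n', f', hf'⟩ h
    simp only at h
    have hn : n = n' := by
      have := congrArg Finset.card h
      simpa using this
    subst hn
    have hcard : (Finset.univ.map ⟨f', hf'.injective⟩ : Finset ℕ+).card = n := by simp
    have h1 : f = ⇑((Finset.univ.map ⟨f', hf'.injective⟩ : Finset ℕ+).orderEmbOfFin hcard) := by
      refine Finset.orderEmbOfFin_unique hcard (fun x => ?_) hf
      rw [← h]; simp [Finset.mem_map]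
    have h2 : f' = ⇑((Finset.univ.map ⟨f', hf'.injective⟩ : Finset ℕ+).orderEmbOfFin hcard) := by
      refine Finset.orderEmbOfFin_unique hcard (fun x => ?_) hf'
      simp [Finset.mem_map]
    simp only [Sigma.mk.inj_iff, heq_eq_eq, Subtype.mk.injEq]
    exact ⟨trivial, h1.trans h2.symm⟩
  · intro s
    refine ⟨⟨s.card, ⟨fun i => s.orderEmbOfFin rfl i, (s.orderEmbOfFin rfl).strictMono⟩⟩, ?_⟩
    ext m
    simp only [Finset.mem_map, Finset.mem_univ, true_and, Function.Embedding.coeFn_mk]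
    constructor
    · rintro ⟨i, rfl⟩; exact s.orderEmbOfFin_mem rfl i
    · intro hm
      have : m ∈ Set.range ⇑(s.orderEmbOfFin rfl) := by
        rw [Finset.range_orderEmbOfFin]; exact hm
      obtain ⟨i, hi⟩ := this
      exact ⟨i, hi⟩

lemma sfEquiv_prod (p : Σ n : ℕ, {f : Fin n → ℕ+ // StrictMono f}) (φ : ℕ+ → ℝ) :
    ∏ m ∈ sfEquiv p, φ m = ∏ i, φ (p.2.1 i) := by
  have : sfEquiv p = Finset.univ.map ⟨p.2.1, p.2.2.injective⟩ := rfl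
  rw [this, Finset.prod_map]
  rfl

/-- monotone tuples of arbitrary length ≃ multisets -/
noncomputable def msEquiv : (Σ n : ℕ, {f : Fin n → ℕ+ // Monotone f}) ≃ Multiset ℕ+ := by
  refine Equiv.ofBijective (fun p => ((List.ofFn p.2.1 : List ℕ+) : Multiset ℕ+)) ⟨?_, ?_⟩
  · rintro ⟨n, f, hf⟩ ⟨n', f', hf'⟩ h
    simp only [Multiset.coe_eq_coe] at h
    have hn : n = n' := by
      have := h.length_eq
      simpa using this
    subst hn
    have hl : List.ofFn f = List.ofFn f' :=
      List.Perm.eq_of_sortedLE hf.sortedLE_ofFn hf'.sortedLE_ofFn h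
    have hff : f = f' := List.ofFn_injective hl
    simp [hff]
  · intro M
    classical
    refine ⟨⟨(Multiset.sort M (· ≤ ·)).length, ⟨(Multiset.sort M (· ≤ ·)).get,
      (Multiset.pairwise_sort M _).sortedLE.monotone_get⟩⟩, ?_⟩
    simp only [List.ofFn_get]
    exact Multiset.sort_eq M _



lemma msEquiv_prod (p : Σ n : ℕ, {f : Fin n → ℕ+ // Monotone f}) (φ : ℕ+ → ℝ) :
    ((msEquiv p).map φ).prod = ∏ i, φ (p.2.1 i) := by
  have : msEquiv p = ((List.ofFn p.2.1 : List ℕ+) : Multiset ℕ+) := rfl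
  rw [this]
  rw [Multiset.map_coe, List.map_ofFn, Multiset.prod_coe, List.prod_ofFn]
  rfl

lemma toFinsupp_prod_pow (M : Multiset ℕ+) (φ : ℕ+ → ℝ) :
    (Multiset.toFinsupp M).prod (fun m k => φ m ^ k) = (M.map φ).prod := by
  classical
  induction M using Multiset.induction_on with
  | empty => simp
  | cons a M ih =>
    rw [← Multiset.singleton_add, Multiset.toFinsupp_add,
      Finsupp.prod_add_index' (fun a => pow_zero _) (fun a b c => pow_add _ _ _),
      Multiset.toFinsupp_singleton]
    have hs : ((fun₀ | a => 1).prod fun a => HPow.hPow (φ a)) = φ a ^ 1 :=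
      Finsupp.prod_single_index (h := fun m k => φ m ^ k) (pow_zero _)
    rw [hs]
    simp [ih]

/-- monotone tuples ≃ finsupps -/
noncomputable def mfEquiv : (Σ n : ℕ, {f : Fin n → ℕ+ // Monotone f}) ≃ (ℕ+ →₀ ℕ) :=
  msEquiv.trans Multiset.toFinsupp.toEquiv

lemma mfEquiv_prod (p : Σ n : ℕ, {f : Fin n → ℕ+ // Monotone f}) (φ : ℕ+ → ℝ) :
    (mfEquiv p).prod (fun m k => φ m ^ k) = ∏ i, φ (p.2.1 i) := by
  have : mfEquiv p = Multiset.toFinsupp (msEquiv p) := rfl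
  rw [this, toFinsupp_prod_pow, msEquiv_prod]



/-- exponent patterns: finitely supported, no value equal to 1 -/
abbrev Eidx : Type := {e : ℕ+ →₀ ℕ // ∀ m, e m ≠ 1}

/-- the pointwise decomposition k = 2a+3b, b ∈ {0,1} -/
noncomputable def pairEquiv : ((ℕ+ →₀ ℕ) × Finset ℕ+) ≃ Eidx := by
  classical
  refine Equiv.ofBijective (fun z => ⟨2 • z.1 + 3 • Multiset.toFinsupp z.2.val, ?_⟩) ⟨?_, ?_⟩
  · intro m
    simp only [Finsupp.add_apply, Finsupp.smul_apply, Multiset.toFinsupp_apply, smul_eq_mul]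
    have hle : z.2.val.count m ≤ 1 := Multiset.nodup_iff_count_le_one.mp z.2.nodup m
    omega
  · rintro ⟨μ, s⟩ ⟨μ', s'⟩ h
    simp only [Subtype.mk.injEq] at h
    have hm : ∀ m : ℕ+, 2 * μ m + 3 * (s.val.count m) = 2 * μ' m + 3 * (s'.val.count m) := by
      intro m
      have := congrArg (fun e : ℕ+ →₀ ℕ => e m) h
      simpa [Finsupp.add_apply, Finsupp.smul_apply, Multiset.toFinsupp_apply] using this
    have hcount : ∀ (t : Finset ℕ+) (m : ℕ+), t.val.count m = if m ∈ t then 1 else 0 := by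
      intro t m
      split
      · next hmem => exact (Multiset.count_eq_one_of_mem t.nodup hmem)
      · next hmem => exact Multiset.count_eq_zero_of_notMem hmem
    have hsm : s = s' := by
      ext m
      have h1 := hm m
      rw [hcount s m, hcount s' m] at h1
      by_cases h2 : m ∈ s <;> by_cases h3 : m ∈ s' <;> simp [h2, h3] at h1 ⊢ <;> omega
    have hμ : μ = μ' := by
      ext m
      have h1 := hm m
      rw [hsm] at h1
      omega
    exact Prod.ext hμ hsm  -- check name
  · rintro ⟨e, he⟩
    refine ⟨⟨e.mapRange (fun k => if k % 2 = 0 then k / 2 else (k - 3) / 2) (by norm_num),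
      e.support.filter (fun m => e m % 2 = 1)⟩, ?_⟩
    apply Subtype.ext
    ext m
    simp only [Finsupp.add_apply, Finsupp.smul_apply, Multiset.toFinsupp_apply,
      Finsupp.mapRange_apply, smul_eq_mul]
    have hcnt : (e.support.filter (fun m => e m % 2 = 1)).val.count m
        = if e m % 2 = 1 then 1 else 0 := by
      by_cases hmem : m ∈ e.support.filter (fun m => e m % 2 = 1)
      · rw [Multiset.count_eq_one_of_mem (Finset.nodup _) hmem]
        simp only [Finset.mem_filter] at hmem
        simp [hmem.2]
      · rw [Multiset.count_eq_zero_of_notMem hmem]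
        simp only [Finset.mem_filter, Finsupp.mem_support_iff, not_and] at hmem
        by_cases h0 : e m = 0
        · simp [h0]
        · simp [hmem h0]
    rw [hcnt]
    have := he m
    rcases Nat.even_or_odd (e m) with hpar | hpar
    · have h2 : e m % 2 = 0 := Nat.even_iff.mp hpar
      simp [h2]
      omega
    · have h2 : e m % 2 = 1 := Nat.odd_iff.mp hpar
      simp [h2]
      omega


noncomputable def w (x : ℝ) (e : ℕ+ →₀ ℕ) : ℝ := e.prod fun m k => (x / ((m : ℕ) : ℝ)) ^ k

lemma smul_prod_pow (n : ℕ) (μ : ℕ+ →₀ ℕ) (φ : ℕ+ → ℝ) :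
    (n • μ).prod (fun m k => φ m ^ k) = μ.prod (fun m k => (φ m ^ n) ^ k) := by
  have h1 : n • μ = Finsupp.mapRange (fun k => n * k) (by simp) μ := by
    ext m; simp [mul_comm]
  rw [h1, Finsupp.prod_mapRange_index (fun a => pow_zero _)]
  refine Finsupp.prod_congr fun m _ => ?_
  rw [pow_mul]

lemma w_pair (x : ℝ) (μ : ℕ+ →₀ ℕ) (s : Finset ℕ+) :
    w x (2 • μ + 3 • Multiset.toFinsupp s.val) =
      μ.prod (fun m k => ((x / ((m : ℕ) : ℝ)) ^ 2) ^ k) * ∏ m ∈ s, (x / ((m : ℕ) : ℝ)) ^ 3 := by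
  classical
  unfold w
  rw [Finsupp.prod_add_index' (fun a => pow_zero _) (fun a b c => pow_add _ _ _)]
  rw [smul_prod_pow, smul_prod_pow, toFinsupp_prod_pow]
  rw [Finset.prod_eq_multiset_prod]



noncomputable def packE {n : ℕ} (f : Fin n → ℕ+) (v : Fin n → ℕ) : ℕ+ →₀ ℕ :=
  ∑ i, Finsupp.single (f i) (v i)

lemma packE_apply_of {n : ℕ} {f : Fin n → ℕ+} (hf : Function.Injective f) (v : Fin n → ℕ)
    (j : Fin n) : packE f v (f j) = v j := by
  classical
  rw [packE, Finsupp.finset_sum_apply]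
  rw [Finset.sum_eq_single j]
  · simp
  · intro i _ hij
    rw [Finsupp.single_apply, if_neg (fun hc => hij (hf hc))]
  · simp

lemma packE_apply_notin {n : ℕ} {f : Fin n → ℕ+} (v : Fin n → ℕ) {m : ℕ+}
    (hm : ∀ i, f i ≠ m) : packE f v m = 0 := by
  classical
  rw [packE, Finsupp.finset_sum_apply]
  refine Finset.sum_eq_zero fun i _ => ?_
  rw [Finsupp.single_apply, if_neg (hm i)]

lemma packE_prod {n : ℕ} (f : Fin n → ℕ+) (v : Fin n → ℕ) (h : ℕ+ → ℕ → ℝ)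
    (h0 : ∀ a, h a 0 = 1) (hmul : ∀ a b c, h a (b + c) = h a b * h a c) :
    (packE f v).prod h = ∏ i, h (f i) (v i) := by
  rw [packE, ← Finsupp.prod_finset_sum_index h0 hmul]
  refine Finset.prod_congr rfl fun i _ => Finsupp.prod_single_index (h0 _)

lemma packE_support {n : ℕ} {f : Fin n → ℕ+} (hf : Function.Injective f) {v : Fin n → ℕ}
    (hv : ∀ i, v i ≠ 0) : (packE f v).support = Finset.univ.map ⟨f, hf⟩ := by
  classical
  ext m
  simp only [Finsupp.mem_support_iff, Finset.mem_map, Finset.mem_univ, true_and,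
    Function.Embedding.coeFn_mk]
  constructor
  · intro hne
    by_contra hc
    push_neg at hc
    exact hne (packE_apply_notin v hc)
  · rintro ⟨i, rfl⟩
    rw [packE_apply_of hf]
    exact hv i

/-- the L-side index: a list of entries ≥ 2 together with a strictly increasing tuple -/
abbrev JL : Type :=
  Σ l : {l : List ℕ // ∀ k ∈ l, 2 ≤ k}, {f : Fin l.1.length → ℕ+ // StrictMono f}

noncomputable def ΦL : JL ≃ Eidx := by
  classical
  refine Equiv.ofBijective (fun p =>
    ⟨packE p.2.1 (fun i => p.1.1.get i), ?_⟩) ⟨?_, ?_⟩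
  · -- no value 1
    intro m
    by_cases hm : ∃ i, p.2.1 i = m
    · obtain ⟨i, rfl⟩ := hm
      rw [packE_apply_of p.2.2.injective]
      have := p.1.2 (p.1.1.get i) (by rw [List.get_eq_getElem]; exact List.getElem_mem i.2)
      omega
    · push_neg at hm
      rw [packE_apply_notin _ hm]
      omega
  · -- injective
    rintro ⟨⟨l, hl⟩, ⟨f, hf⟩⟩ ⟨⟨l', hl'⟩, ⟨f', hf'⟩⟩ h
    simp only [Subtype.mk.injEq] at h
    have hv : ∀ i : Fin l.length, l.get i ≠ 0 := fun i => by
      have := hl (l.get i) (by rw [List.get_eq_getElem]; exact List.getElem_mem i.2); omega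
    have hv' : ∀ i : Fin l'.length, l'.get i ≠ 0 := fun i => by
      have := hl' (l'.get i) (by rw [List.get_eq_getElem]; exact List.getElem_mem i.2); omega
    have hs : Finset.univ.map ⟨f, hf.injective⟩ = Finset.univ.map ⟨f', hf'.injective⟩ := by
      rw [← packE_support hf.injective hv, ← packE_support hf'.injective hv', h]
    have hlen : l.length = l'.length := by
      have := congrArg Finset.card hs
      simpa using this
    set s : Finset ℕ+ := Finset.univ.map ⟨f, hf.injective⟩ with hsdef
    have hcard : s.card = l.length := by simp [hsdef]
    have h1 : f = ⇑(s.orderEmbOfFin hcard) :=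
      Finset.orderEmbOfFin_unique hcard (fun i => by simp [hsdef, Finset.mem_map]) hf
    have h2 : (fun i : Fin l.length => f' (Fin.cast hlen i)) = ⇑(s.orderEmbOfFin hcard) := by
      refine Finset.orderEmbOfFin_unique hcard (fun i => ?_) (fun a b hab => hf' hab)
      rw [hs]
      simp [Finset.mem_map]
    have hff : ∀ i : Fin l.length, f i = f' (Fin.cast hlen i) := by
      intro i; rw [h1, ← h2]
    have hgets : ∀ i : Fin l.length, l.get i = l'.get (Fin.cast hlen i) := by
      intro i
      have e1 : packE f (fun i => l.get i) (f i) = l.get i := packE_apply_of hf.injective _ i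
      have e2 : packE f' (fun i => l'.get i) (f' (Fin.cast hlen i)) = l'.get (Fin.cast hlen i) :=
        packE_apply_of hf'.injective _ _
      rw [← e1, h, hff i, e2]
    have hll : l = l' := by
      refine List.ext_get hlen fun i hi1 hi2 => ?_
      exact hgets ⟨i, hi1⟩
    clear_value s
    subst hll
    have hfe : f = f' := by
      funext i
      rw [hff i]
      congr 1
    cases hfe
    rfl
  · -- surjective
    rintro ⟨e, he⟩
    set s := e.support with hsdef
    set g : Fin s.card → ℕ+ := ⇑(s.orderEmbOfFin rfl) with hgdef
    set l : List ℕ := List.ofFn (fun i => e (g i)) with hldef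
    have hlen : l.length = s.card := List.length_ofFn
    have hl2 : ∀ k ∈ l, 2 ≤ k := by
      intro k hk
      rw [hldef, List.mem_ofFn] at hk
      obtain ⟨i, rfl⟩ := hk
      show 2 ≤ e (g i)
      have hmem : g i ∈ s := s.orderEmbOfFin_mem rfl i
      rw [hsdef] at hmem
      have h0 := Finsupp.mem_support_iff.mp hmem
      have h1 := he (g i)
      omega
    refine ⟨⟨⟨l, hl2⟩, ⟨fun i => g (Fin.cast hlen i), fun a b hab => (s.orderEmbOfFin rfl).strictMono (by exact hab)⟩⟩, ?_⟩
    apply Subtype.ext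
    simp only
    -- goal : packE (fun i => g (Fin.cast hlen i)) (fun i => l.get i) = e
    have hget : ∀ i : Fin l.length, l.get i = e (g (Fin.cast hlen i)) :=
      fun i => List.get_ofFn (fun j => e (g j)) i
    ext m
    by_cases hm : m ∈ s
    · have : m ∈ Set.range g := by
        rw [hgdef, Finset.range_orderEmbOfFin]; exact hm
      obtain ⟨j, rfl⟩ := this
      have hj : g j = (fun i : Fin l.length => g (Fin.cast hlen i)) (Fin.cast hlen.symm j) := by
        simp
      rw [hj, packE_apply_of]
      · rw [hget]
        try simp
      · intro a b hab
        have := (s.orderEmbOfFin rfl).injective (a₁ := Fin.cast hlen a) (a₂ := Fin.cast hlen b) hab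
        simpa [Fin.ext_iff] using this
    · rw [packE_apply_notin]
      · exact (Finsupp.notMem_support_iff.mp hm).symm
      · intro i hc
        apply hm
        rw [← hc]
        exact s.orderEmbOfFin_mem rfl _


lemma pi_fin_summable_tsum {n : ℕ} (c : Fin n → ℕ → ℝ) (h0 : ∀ i k, 0 ≤ c i k)
    (hs : ∀ i, Summable (c i)) :
    Summable (fun v : Fin n → ℕ => ∏ i, c i (v i)) ∧
      (∑' v : Fin n → ℕ, ∏ i, c i (v i)) = ∏ i, ∑' k, c i k := by
  induction n with
  | zero =>
    constructor
    · exact Summable.of_finite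
    · rw [tsum_eq_single (default : Fin 0 → ℕ) (fun b hb => absurd (Subsingleton.elim b default) hb)]
      simp
  | succ n ih =>
    obtain ⟨ihs, iht⟩ := ih (fun i => c i.succ) (fun i k => h0 _ _) (fun i => hs _)
    have key : ∀ v : ℕ × (Fin n → ℕ),
        c 0 v.1 * (∏ i, c i.succ (v.2 i)) = ∏ i, c i ((Fin.cons v.1 v.2 : Fin (n+1) → ℕ) i) := by
      intro v
      rw [Fin.prod_univ_succ]
      simp
    have hn1 : Summable (fun k => ‖c 0 k‖) := by
      refine (hs 0).congr fun k => ?_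
      rw [Real.norm_eq_abs, abs_of_nonneg (h0 0 k)]
    have hn2 : Summable (fun u : Fin n → ℕ => ‖∏ i, c i.succ (u i)‖) := by
      refine ihs.congr fun u => ?_
      rw [Real.norm_eq_abs, abs_of_nonneg (Finset.prod_nonneg fun i _ => h0 _ _)]
    have hsum2 : Summable (fun v : ℕ × (Fin n → ℕ) => c 0 v.1 * ∏ i, c i.succ (v.2 i)) := by
      have h := summable_mul_of_summable_norm hn1 hn2
      exact h
    let e : (ℕ × (Fin n → ℕ)) ≃ (Fin (n+1) → ℕ) := Fin.consEquiv (fun _ : Fin (n+1) => ℕ)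
    have he : ∀ v : ℕ × (Fin n → ℕ), e v = Fin.cons v.1 v.2 := fun v => by
      simp [e, Fin.consEquiv]
    constructor
    · refine (Equiv.summable_iff e (f := fun v : Fin (n+1) → ℕ => ∏ i, c i (v i))).mp ?_
      refine hsum2.congr fun v => ?_
      simp only [Function.comp_apply, he, key]
    · have h1 : ∑' v : Fin (n+1) → ℕ, ∏ i, c i (v i)
          = ∑' v : ℕ × (Fin n → ℕ), c 0 v.1 * ∏ i, c i.succ (v.2 i) := by
        rw [← Equiv.tsum_eq e (fun v : Fin (n+1) → ℕ => ∏ i, c i (v i))]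
        exact tsum_congr fun v => by rw [he, ← key]
      have h2 : ∑' v : ℕ × (Fin n → ℕ), c 0 v.1 * ∏ i, c i.succ (v.2 i)
          = (∑' k, c 0 k) * ∑' u : Fin n → ℕ, ∏ i, c i.succ (u i) :=
        (tsum_mul_tsum_of_summable_norm hn1 hn2).symm
      rw [h1, h2, iht, Fin.prod_univ_succ]


noncomputable def cfun (y : ℝ) (m : ℕ+) (k : ℕ) : ℝ :=
  if k = 1 then 0 else (y / ((m : ℕ) : ℝ)) ^ k

lemma m_one_le (m : ℕ+) : (1 : ℝ) ≤ ((m : ℕ) : ℝ) := by exact_mod_cast m.one_le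

lemma m_pos (m : ℕ+) : (0 : ℝ) < ((m : ℕ) : ℝ) := lt_of_lt_of_le one_pos (m_one_le m)

lemma ratio_nonneg {y : ℝ} (h0 : 0 ≤ y) (m : ℕ+) : 0 ≤ y / ((m : ℕ) : ℝ) :=
  div_nonneg h0 (m_pos m).le

lemma ratio_lt_one {y : ℝ} (h0 : 0 ≤ y) (h1 : y < 1) (m : ℕ+) : y / ((m : ℕ) : ℝ) < 1 :=
  (div_lt_one (m_pos m)).mpr (lt_of_lt_of_le h1 (m_one_le m))

lemma ratio_le {y : ℝ} (h0 : 0 ≤ y) (h1 : y < 1) (m : ℕ+) : y / ((m : ℕ) : ℝ) ≤ y := by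
  rw [div_le_iff₀ (m_pos m)]
  nlinarith [m_one_le m]

lemma cfun_nonneg {y : ℝ} (h0 : 0 ≤ y) (m : ℕ+) (k : ℕ) : 0 ≤ cfun y m k := by
  unfold cfun
  split
  · exact le_refl _
  · exact pow_nonneg (ratio_nonneg h0 m) _

lemma cfun_summable {y : ℝ} (h0 : 0 ≤ y) (h1 : y < 1) (m : ℕ+) : Summable (cfun y m) := by
  refine Summable.of_nonneg_of_le (cfun_nonneg h0 m) (fun k => ?_)
    (summable_geometric_of_lt_one (ratio_nonneg h0 m) (ratio_lt_one h0 h1 m))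
  unfold cfun
  split
  · exact pow_nonneg (ratio_nonneg h0 m) _
  · exact le_refl _

lemma cfun_tsum_le {y : ℝ} (h0 : 0 ≤ y) (h1 : y < 1) (m : ℕ+) :
    ∑' k, cfun y m k ≤ Real.exp ((1 - y)⁻¹ * (((m : ℕ) : ℝ) ^ 2)⁻¹) := by
  set t := y / ((m : ℕ) : ℝ) with ht
  have ht0 : 0 ≤ t := ratio_nonneg h0 m
  have ht1 : t < 1 := ratio_lt_one h0 h1 m
  have hsum := cfun_summable h0 h1 m
  have hshift1 : Summable (fun k => cfun y m (k + 1)) := by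
    rw [summable_nat_add_iff]; exact hsum
  have hshift2 : Summable (fun k => cfun y m (k + 2)) := by
    rw [summable_nat_add_iff]; exact hsum
  have h2 : ∑' k, cfun y m k = 1 + ∑' k, cfun y m (k + 2) := by
    rw [Summable.tsum_eq_zero_add hsum, Summable.tsum_eq_zero_add hshift1]
    have e0 : cfun y m 0 = 1 := by simp [cfun]
    have e1 : cfun y m (0 + 1) = 0 := by simp [cfun]
    rw [e0, e1]
    have : ∀ b : ℕ, cfun y m (b + 1 + 1) = cfun y m (b + 2) := fun b => rfl
    rw [tsum_congr this]
    ring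
  have h3 : ∑' k, cfun y m (k + 2) = t ^ 2 * (1 - t)⁻¹ := by
    have : ∀ k : ℕ, cfun y m (k + 2) = t ^ k * t ^ 2 := by
      intro k
      rw [cfun, if_neg (by omega), pow_add]
    rw [tsum_congr this, tsum_mul_right, tsum_geometric_of_lt_one ht0 ht1]
    ring
  have hb : t ^ 2 * (1 - t)⁻¹ ≤ (1 - y)⁻¹ * (((m : ℕ) : ℝ) ^ 2)⁻¹ := by
    have hty : t ≤ y := ratio_le h0 h1 m
    have h1t : 0 < 1 - t := by linarith
    have h1y : 0 < 1 - y := by linarith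
    have hinv : (1 - t)⁻¹ ≤ (1 - y)⁻¹ := by
      apply inv_anti₀ h1y
      linarith
    have htm : t ^ 2 ≤ (((m : ℕ) : ℝ) ^ 2)⁻¹ := by
      rw [ht, div_pow, div_eq_mul_inv]
      have : y ^ 2 ≤ 1 := by nlinarith
      nlinarith [inv_nonneg.mpr (pow_nonneg (m_pos m).le 2)]
    calc t ^ 2 * (1 - t)⁻¹ ≤ (((m : ℕ) : ℝ) ^ 2)⁻¹ * (1 - y)⁻¹ := by
          apply mul_le_mul htm hinv (inv_nonneg.mpr h1t.le)
            (inv_nonneg.mpr (pow_nonneg (m_pos m).le 2))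
      _ = (1 - y)⁻¹ * (((m : ℕ) : ℝ) ^ 2)⁻¹ := by ring
  calc ∑' k, cfun y m k = 1 + ∑' k, cfun y m (k + 2) := h2
    _ = ∑' k, cfun y m (k+2) + 1 := by ring
    _ ≤ (1 - y)⁻¹ * (((m : ℕ) : ℝ) ^ 2)⁻¹ + 1 := by
        have := h3 ▸ hb; linarith [h3 ▸ hb]
    _ ≤ Real.exp ((1 - y)⁻¹ * (((m : ℕ) : ℝ) ^ 2)⁻¹) := Real.add_one_le_exp _

lemma summable_inv_sq : Summable (fun m : ℕ+ => (((m : ℕ) : ℝ) ^ 2)⁻¹) := by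
  have h : Summable (fun n : ℕ => 1 / (n : ℝ) ^ 2) := Real.summable_one_div_nat_pow.mpr one_lt_two
  have := h.comp_injective (fun a b hab => PNat.coe_injective hab)
  refine this.congr fun m => ?_
  simp [Function.comp, one_div]



-- transferred pi-Fubini over a finset of ℕ+
lemma pi_S_summable_tsum (S : Finset ℕ+) (c : ℕ+ → ℕ → ℝ) (h0 : ∀ m k, 0 ≤ c m k)
    (hs : ∀ m, Summable (c m)) :
    Summable (fun v : ↥S → ℕ => ∏ m : ↥S, c m (v m)) ∧
      (∑' v : ↥S → ℕ, ∏ m : ↥S, c m (v m)) = ∏ m : ↥S, ∑' k, c (m : ℕ+) k := by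
  classical
  obtain ⟨hsum, htsum⟩ := pi_fin_summable_tsum (fun i k => c (S.equivFin.symm i) k)
    (fun i k => h0 _ _) (fun i => hs _)
  let Epi : (↥S → ℕ) ≃ (Fin S.card → ℕ) := Equiv.arrowCongr S.equivFin (Equiv.refl ℕ)
  have key : ∀ u : Fin S.card → ℕ,
      (∏ i, c (S.equivFin.symm i) (u i)) = ∏ m : ↥S, c m (u (S.equivFin m)) := by
    intro u
    rw [← Equiv.prod_comp S.equivFin (fun i => c (S.equivFin.symm i) (u i))]
    refine Finset.prod_congr rfl fun m _ => ?_
    rw [Equiv.symm_apply_apply]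
  have hsymm : ∀ u : Fin S.card → ℕ, ∀ m : ↥S, (Epi.symm u) m = u (S.equivFin m) :=
    fun u m => rfl
  have hS : Summable (fun v : ↥S → ℕ => ∏ m : ↥S, c m (v m)) := by
    refine (Equiv.summable_iff Epi.symm).mp ?_
    refine hsum.congr fun u => ?_
    show (∏ i, c (S.equivFin.symm i) (u i)) = ∏ m : ↥S, c m ((Epi.symm u) m)
    rw [key u]
    exact Finset.prod_congr rfl fun m _ => by rw [hsymm]
  refine ⟨hS, ?_⟩
  have h1 : ∑' v : ↥S → ℕ, ∏ m : ↥S, c m (v m)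
      = ∑' u : Fin S.card → ℕ, ∏ i, c (S.equivFin.symm i) (u i) := by
    rw [← Equiv.tsum_eq Epi.symm (fun v : ↥S → ℕ => ∏ m : ↥S, c m (v m))]
    refine tsum_congr fun u => ?_
    rw [key u]
    exact Finset.prod_congr rfl fun m _ => by rw [hsymm]
  rw [h1, htsum]
  rw [← Equiv.prod_comp S.equivFin.symm (fun m : ↥S => ∑' k, c (m : ℕ+) k)]

lemma summable_w {y : ℝ} (h0 : 0 ≤ y) (h1 : y < 1) :
    Summable (fun e : Eidx => w y e.1) := by
  classical
  have hnn : ∀ e : Eidx, 0 ≤ w y e.1 := by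
    intro e
    rw [w, Finsupp.prod]
    exact Finset.prod_nonneg fun m _ => pow_nonneg (ratio_nonneg h0 m) _
  refine summable_of_sum_le (c := Real.exp ((1 - y)⁻¹ * ∑' m : ℕ+, (((m : ℕ) : ℝ) ^ 2)⁻¹))
    (Pi.le_def.mpr fun e => hnn e) (fun F => ?_)
  set S := F.sup (fun e : Eidx => e.1.support) with hSdef
  have hsub : ∀ e ∈ F, e.1.support ⊆ S :=
    fun e he => Finset.le_sup (f := fun e : Eidx => e.1.support) he
  have hw : ∀ e ∈ F, w y e.1 = ∏ m : ↥S, cfun y m (e.1 m) := by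
    intro e he
    rw [w, Finsupp.prod_of_support_subset e.1 (hsub e he) _ (fun m _ => pow_zero _),
      ← Finset.prod_coe_sort]
    refine Finset.prod_congr rfl fun m _ => ?_
    rw [cfun, if_neg (e.2 _)]
  obtain ⟨hsumS, htsumS⟩ := pi_S_summable_tsum S (cfun y)
    (fun m k => cfun_nonneg h0 m k) (fun m => cfun_summable h0 h1 m)
  have hprodnn : ∀ v : ↥S → ℕ, 0 ≤ ∏ m : ↥S, cfun y m (v m) :=
    fun v => Finset.prod_nonneg fun m _ => cfun_nonneg h0 _ _
  have hbound : (∑' v : ↥S → ℕ, ∏ m : ↥S, cfun y m (v m))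
      ≤ Real.exp ((1 - y)⁻¹ * ∑' m : ℕ+, (((m : ℕ) : ℝ) ^ 2)⁻¹) := by
    rw [htsumS]
    have step1 : ∏ m : ↥S, (∑' k, cfun y (m : ℕ+) k)
        ≤ ∏ m : ↥S, Real.exp ((1 - y)⁻¹ * ((((m : ℕ+) : ℕ) : ℝ) ^ 2)⁻¹) := by
      refine Finset.prod_le_prod (fun m _ => tsum_nonneg fun k => cfun_nonneg h0 _ _)
        (fun m _ => cfun_tsum_le h0 h1 _)
    refine le_trans step1 ?_
    rw [← Real.exp_sum]
    refine Real.exp_le_exp.mpr ?_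
    have e1 : ∑ m : ↥S, (1 - y)⁻¹ * ((((m : ℕ+) : ℕ) : ℝ) ^ 2)⁻¹
        = (1 - y)⁻¹ * ∑ m ∈ S, (((m : ℕ) : ℝ) ^ 2)⁻¹ := by
      rw [Finset.mul_sum, ← Finset.sum_coe_sort S (fun m => (1 - y)⁻¹ * (((m : ℕ) : ℝ) ^ 2)⁻¹)]
    rw [e1]
    have h1y : (0:ℝ) ≤ (1 - y)⁻¹ := inv_nonneg.mpr (by linarith)
    refine mul_le_mul_of_nonneg_left ?_ h1y
    exact Summable.sum_le_tsum S (fun m _ => inv_nonneg.mpr (pow_nonneg (m_pos m).le 2)) summable_inv_sq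
  let ι : Eidx → (↥S → ℕ) := fun e m => e.1 m
  have hinj : ∀ e₁ ∈ F, ∀ e₂ ∈ F, ι e₁ = ι e₂ → e₁ = e₂ := by
    intro e₁ h₁ e₂ h₂ hi
    apply Subtype.ext
    ext m
    by_cases hm : m ∈ S
    · exact congrFun hi ⟨m, hm⟩
    · have hm1 : m ∉ e₁.1.support := fun hc => hm (hsub e₁ h₁ hc)
      have hm2 : m ∉ e₂.1.support := fun hc => hm (hsub e₂ h₂ hc)
      rw [Finsupp.notMem_support_iff.mp hm1, Finsupp.notMem_support_iff.mp hm2]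
  calc ∑ e ∈ F, w y e.1 = ∑ e ∈ F, ∏ m : ↥S, cfun y m (e.1 m) := Finset.sum_congr rfl hw
    _ = ∑ v ∈ F.image ι, ∏ m : ↥S, cfun y m (v m) :=
        (Finset.sum_image (f := fun v : ↥S → ℕ => ∏ m : ↥S, cfun y (m : ℕ+) (v m)) hinj).symm
    _ ≤ ∑' v : ↥S → ℕ, ∏ m : ↥S, cfun y m (v m) :=
        Summable.sum_le_tsum _ (fun v _ => hprodnn v) hsumS
    _ ≤ Real.exp ((1 - y)⁻¹ * ∑' m : ℕ+, (((m : ℕ) : ℝ) ^ 2)⁻¹) := hbound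

/-! ### Part 8 : the left-hand side -/

lemma w_abs (x : ℝ) (e : ℕ+ →₀ ℕ) : |w x e| = w |x| e := by
  rw [w, w, Finsupp.prod, Finsupp.prod, Finset.abs_prod]
  refine Finset.prod_congr rfl fun m _ => ?_
  rw [abs_pow, abs_div, abs_of_nonneg (m_pos m).le]

lemma summable_w_abs {x : ℝ} (hx : |x| < 1) :
    Summable (fun e : Eidx => |w x e.1|) :=
  (summable_w (abs_nonneg x) hx).congr fun e => (w_abs x e.1).symm

noncomputable def WL (x : ℝ) (p : JL) : ℝ :=
  ∏ i, (x / ((p.2.1 i : ℕ) : ℝ)) ^ (p.1.1.get i)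

lemma ΦL_w (x : ℝ) (p : JL) : w x (ΦL p).1 = WL x p := by
  have h : (ΦL p).1 = packE p.2.1 (fun i => p.1.1.get i) := rfl
  rw [h, w, packE_prod _ _ _ (fun a => pow_zero _) (fun a b c => pow_add _ _ _)]
  rfl

lemma summable_WL_abs {x : ℝ} (hx : |x| < 1) : Summable (fun p : JL => |WL x p|) := by
  refine ((Equiv.summable_iff ΦL (f := fun e : Eidx => |w x e.1|)).mpr
    (summable_w_abs hx)).congr fun p => ?_
  show |w x (ΦL p).1| = |WL x p|
  rw [ΦL_w]

lemma inner_L (x : ℝ) (l : {l : List ℕ // ∀ k ∈ l, 2 ≤ k}) :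
    (∑' f : {f : Fin l.1.length → ℕ+ // StrictMono f}, WL x ⟨l, f⟩)
      = mzeta l.1 * x ^ l.1.sum := by
  rw [mzeta, ← tsum_mul_right]
  refine tsum_congr fun f => ?_
  have hsum : l.1.sum = ∑ i : Fin l.1.length, l.1.get i := by
    rw [← Fin.sum_univ_getElem]
    simp [List.get_eq_getElem]
  rw [hsum, ← Finset.prod_pow_eq_pow_sum, ← Finset.prod_mul_distrib]
  refine Finset.prod_congr rfl fun i _ => ?_
  rw [div_pow]
  field_simp

lemma Lside {x : ℝ} (hx : |x| < 1) :
    1 + ∑' k : ℕ, T (k + 2) * x ^ (k + 2) = ∑' e : Eidx, w x e.1 := by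
  classical
  have hJL : Summable (fun p : JL => WL x p) := (summable_WL_abs hx).of_abs
  have h1 : ∑' e : Eidx, w x e.1 = ∑' p : JL, WL x p := by
    rw [← Equiv.tsum_eq ΦL (fun e : Eidx => w x e.1)]
    exact tsum_congr fun p => ΦL_w x p
  set G : {l : List ℕ // ∀ k ∈ l, 2 ≤ k} → ℝ :=
    fun l => mzeta l.1 * x ^ l.1.sum with hGdef
  have h2 : ∑' p : JL, WL x p = ∑' l : {l : List ℕ // ∀ k ∈ l, 2 ≤ k}, G l := by
    rw [Summable.tsum_sigma hJL]
    exact tsum_congr fun l => inner_L x l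
  obtain ⟨hfib, hsums⟩ := (summable_sigma_of_nonneg
    (f := fun p : JL => |WL x p|) (fun p => abs_nonneg _)).mp (summable_WL_abs hx)
  have hG : Summable G := by
    refine Summable.of_abs (Summable.of_nonneg_of_le (fun l => abs_nonneg _) (fun l => ?_) hsums)
    rw [hGdef]
    simp only
    rw [← inner_L x l]
    have := norm_tsum_le_tsum_norm (f := fun f : {f : Fin l.1.length → ℕ+ // StrictMono f} =>
      WL x ⟨l, f⟩) (hfib l)
    simpa [Real.norm_eq_abs] using this
  set e₀ : {l : List ℕ // ∀ k ∈ l, 2 ≤ k} := ⟨[], by simp⟩ with he₀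
  have hsplit := Summable.sum_add_tsum_compl (s := ({e₀} : Finset {l : List ℕ // ∀ k ∈ l, 2 ≤ k})) hG
  rw [Finset.sum_singleton] at hsplit
  have hG0 : G e₀ = 1 := by
    rw [hGdef]
    simp [he₀, mzeta_nil]
  -- the equivalence with the sigma of T-indices
  have hsum2 : ∀ l : {l : List ℕ // ∀ k ∈ l, 2 ≤ k}, l.1 ≠ [] → 2 ≤ l.1.sum := by
    rintro ⟨l, hl⟩ hne
    obtain ⟨a, l', rfl⟩ := List.exists_cons_of_ne_nil hne
    have := hl a (by simp)
    have : l'.sum ≥ 0 := Nat.zero_le _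
    simp [List.sum_cons]
    omega
  let e1 : (Σ k : ℕ, {l : List ℕ // l ≠ [] ∧ (∀ i ∈ l, 2 ≤ i) ∧ l.sum = k + 2})
      ≃ {p : {l : List ℕ // ∀ k ∈ l, 2 ≤ k} // p.1 ≠ []} :=
    { toFun := fun q => ⟨⟨q.2.1, q.2.2.2.1⟩, q.2.2.1⟩
      invFun := fun p => ⟨p.1.1.sum - 2, ⟨p.1.1, p.2, p.1.2, by
        have := hsum2 p.1 p.2
        omega⟩⟩
      left_inv := by
        rintro ⟨k, l, h1, h2, h3⟩
        have hk : l.sum - 2 = k := by omega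
        subst hk
        rfl
      right_inv := fun p => rfl }
  let ce : (Σ k : ℕ, {l : List ℕ // l ≠ [] ∧ (∀ i ∈ l, 2 ≤ i) ∧ l.sum = k + 2})
      ≃ ↥((↑({e₀} : Finset {l : List ℕ // ∀ k ∈ l, 2 ≤ k}) : Set _)ᶜ) :=
    e1.trans (Equiv.subtypeEquivRight (fun p => by
      simp only [Set.mem_compl_iff, Finset.coe_singleton, Set.mem_singleton_iff]
      constructor
      · intro h hc
        exact h (by rw [hc])
      · intro h hc
        exact h (Subtype.ext hc)))
  have hbase : Summable
      (fun z : ↥((↑({e₀} : Finset {l : List ℕ // ∀ k ∈ l, 2 ≤ k}) : Set _)ᶜ) => G z.1) :=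
    hG.subtype _
  have hsig0 := (Equiv.summable_iff ce).mpr hbase
  have hsig : Summable (fun q : (Σ k : ℕ,
      {l : List ℕ // l ≠ [] ∧ (∀ i ∈ l, 2 ≤ i) ∧ l.sum = k + 2}) => G (ce q).1) :=
    hsig0.congr fun q => rfl
  have h3 : (∑' (z : ↥((↑({e₀} : Finset {l : List ℕ // ∀ k ∈ l, 2 ≤ k}) : Set _)ᶜ)), G z.1)
      = ∑' k : ℕ, T (k + 2) * x ^ (k + 2) := by
    calc (∑' (z : ↥((↑({e₀} : Finset {l : List ℕ // ∀ k ∈ l, 2 ≤ k}) : Set _)ᶜ)), G z.1)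
        = ∑' q : (Σ k : ℕ, {l : List ℕ // l ≠ [] ∧ (∀ i ∈ l, 2 ≤ i) ∧ l.sum = k + 2}),
            G (ce q).1 := (Equiv.tsum_eq ce (fun z => G z.1)).symm
      _ = ∑' k : ℕ, ∑' l : {l : List ℕ // l ≠ [] ∧ (∀ i ∈ l, 2 ≤ i) ∧ l.sum = k + 2},
            G (ce ⟨k, l⟩).1 := Summable.tsum_sigma hsig
      _ = ∑' k : ℕ, T (k + 2) * x ^ (k + 2) := by
          refine tsum_congr fun k => ?_
          have hpt : ∀ l : {l : List ℕ // l ≠ [] ∧ (∀ i ∈ l, 2 ≤ i) ∧ l.sum = k + 2},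
              G (ce ⟨k, l⟩).1 = mzeta l.1 * x ^ (k + 2) := by
            intro l
            show mzeta l.1 * x ^ (l.1.sum) = mzeta l.1 * x ^ (k + 2)
            rw [l.2.2.2]
          rw [tsum_congr hpt, T, tsum_mul_right]
  rw [h1, h2, ← hsplit, hG0, h3]

/-! ### Part 9 : the right-hand side -/

noncomputable def FA (x : ℝ) (μ : ℕ+ →₀ ℕ) : ℝ :=
  μ.prod fun m k => ((x / ((m : ℕ) : ℝ)) ^ 2) ^ k

noncomputable def FB (x : ℝ) (s : Finset ℕ+) : ℝ := ∏ m ∈ s, (x / ((m : ℕ) : ℝ)) ^ 3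

lemma w_pairEquiv (x : ℝ) (z : (ℕ+ →₀ ℕ) × Finset ℕ+) :
    w x (pairEquiv z).1 = FA x z.1 * FB x z.2 := by
  have h : (pairEquiv z).1 = 2 • z.1 + 3 • Multiset.toFinsupp z.2.val := rfl
  rw [h, w_pair]
  rfl

lemma summable_pair_abs {x : ℝ} (hx : |x| < 1) :
    Summable (fun z : (ℕ+ →₀ ℕ) × Finset ℕ+ => |FA x z.1 * FB x z.2|) := by
  refine ((Equiv.summable_iff pairEquiv (f := fun e : Eidx => |w x e.1|)).mpr
    (summable_w_abs hx)).congr fun z => ?_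
  show |w x (pairEquiv z).1| = _
  rw [w_pairEquiv]

lemma FB_empty (x : ℝ) : FB x ∅ = 1 := by simp [FB]

lemma FA_zero (x : ℝ) : FA x 0 = 1 := by simp [FA]

lemma summable_FA_abs {x : ℝ} (hx : |x| < 1) : Summable (fun μ : ℕ+ →₀ ℕ => |FA x μ|) := by
  have h := (summable_pair_abs hx).comp_injective
    (i := fun μ : ℕ+ →₀ ℕ => (μ, (∅ : Finset ℕ+)))
    (fun a b hab => congrArg Prod.fst hab)
  refine h.congr fun μ => ?_
  show |FA x μ * FB x ∅| = |FA x μ|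
  rw [FB_empty, mul_one]

lemma summable_FB_abs {x : ℝ} (hx : |x| < 1) : Summable (fun s : Finset ℕ+ => |FB x s|) := by
  have h := (summable_pair_abs hx).comp_injective
    (i := fun s : Finset ℕ+ => ((0 : ℕ+ →₀ ℕ), s))
    (fun a b hab => by simpa using congrArg Prod.snd hab)
  refine h.congr fun s => ?_
  show |FA x 0 * FB x s| = |FB x s|
  rw [FA_zero, one_mul]

lemma pow_div_eq (x : ℝ) (m : ℕ+) (c : ℕ) :
    1 / ((m : ℕ) : ℝ) ^ c * x ^ c = (x / ((m : ℕ) : ℝ)) ^ c := by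
  rw [div_pow]
  ring

lemma Aside {x : ℝ} (hx : |x| < 1) :
    1 + ∑' n : ℕ, mzetaStar (List.replicate (n + 1) 2) * x ^ (2 * (n + 1))
      = ∑' μ : ℕ+ →₀ ℕ, FA x μ := by
  classical
  set φ2 : ℕ+ → ℝ := fun m => (x / ((m : ℕ) : ℝ)) ^ 2 with hφ2
  have habs : Summable (fun p : Σ n : ℕ, {f : Fin n → ℕ+ // Monotone f} =>
      |∏ i, φ2 (p.2.1 i)|) := by
    refine ((Equiv.summable_iff mfEquiv (f := fun μ => |FA x μ|)).mpr
      (summable_FA_abs hx)).congr fun p => ?_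
    show |FA x (mfEquiv p)| = _
    rw [FA, mfEquiv_prod p φ2]
  have h1 : ∑' μ : ℕ+ →₀ ℕ, FA x μ
      = ∑' p : Σ n : ℕ, {f : Fin n → ℕ+ // Monotone f}, ∏ i, φ2 (p.2.1 i) := by
    rw [← Equiv.tsum_eq mfEquiv (FA x)]
    refine tsum_congr fun p => ?_
    rw [FA, mfEquiv_prod p φ2]
  have h2 : ∑' p : Σ n : ℕ, {f : Fin n → ℕ+ // Monotone f}, ∏ i, φ2 (p.2.1 i)
      = ∑' n : ℕ, SM φ2 n := Summable.tsum_sigma habs.of_abs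
  obtain ⟨hfib, hsums⟩ := (summable_sigma_of_nonneg
    (fun p : Σ n : ℕ, {f : Fin n → ℕ+ // Monotone f} => abs_nonneg (∏ i, φ2 (p.2.1 i)))).mp habs
  have hSM : Summable (SM φ2) := by
    refine Summable.of_abs (Summable.of_nonneg_of_le (fun n => abs_nonneg _) (fun n => ?_) hsums)
    have hf' : Summable (fun f : {f : Fin n → ℕ+ // Monotone f} => ‖∏ i, φ2 (f.1 i)‖) :=
      (hfib n).congr fun f => (Real.norm_eq_abs _).symm
    have hle := norm_tsum_le_tsum_norm (f := fun f : {f : Fin n → ℕ+ // Monotone f} =>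
      ∏ i, φ2 (f.1 i)) hf'
    calc |SM φ2 n| ≤ ∑' f : {f : Fin n → ℕ+ // Monotone f}, ‖∏ i, φ2 (f.1 i)‖ := by
          rw [SM, ← Real.norm_eq_abs]; exact hle
      _ = ∑' f : {f : Fin n → ℕ+ // Monotone f}, |∏ i, φ2 (f.1 i)| :=
          tsum_congr fun f => Real.norm_eq_abs _
  have h3 : ∑' n : ℕ, SM φ2 n = 1 + ∑' n : ℕ, SM φ2 (n + 1) := by
    rw [Summable.tsum_eq_zero_add hSM, SM_zero]
  have h4 : ∀ n : ℕ, SM φ2 (n + 1) = mzetaStar (List.replicate (n + 1) 2) * x ^ (2 * (n + 1)) := by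
    intro n
    rw [mzetaStar_const (List.replicate (n + 1) 2) 2
      (fun k hk => List.eq_of_mem_replicate hk), List.length_replicate]
    rw [pow_mul, SM_mul]
    refine congrArg (fun ψ => SM ψ (n + 1)) ?_
    funext m
    rw [hφ2]
    exact (pow_div_eq x m 2).symm
  rw [h1, h2, h3, tsum_congr h4]

lemma Bside {x : ℝ} (hx : |x| < 1) :
    1 + ∑' n : ℕ, mzeta (List.replicate (n + 1) 3) * x ^ (3 * (n + 1))
      = ∑' s : Finset ℕ+, FB x s := by
  classical
  set φ3 : ℕ+ → ℝ := fun m => (x / ((m : ℕ) : ℝ)) ^ 3 with hφ3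
  have habs : Summable (fun p : Σ n : ℕ, {f : Fin n → ℕ+ // StrictMono f} =>
      |∏ i, φ3 (p.2.1 i)|) := by
    refine ((Equiv.summable_iff sfEquiv (f := fun s => |FB x s|)).mpr
      (summable_FB_abs hx)).congr fun p => ?_
    show |FB x (sfEquiv p)| = _
    rw [FB, sfEquiv_prod p φ3]
  have h1 : ∑' s : Finset ℕ+, FB x s
      = ∑' p : Σ n : ℕ, {f : Fin n → ℕ+ // StrictMono f}, ∏ i, φ3 (p.2.1 i) := by
    rw [← Equiv.tsum_eq sfEquiv (FB x)]
    refine tsum_congr fun p => ?_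
    rw [FB, sfEquiv_prod p φ3]
  have h2 : ∑' p : Σ n : ℕ, {f : Fin n → ℕ+ // StrictMono f}, ∏ i, φ3 (p.2.1 i)
      = ∑' n : ℕ, SS φ3 n := Summable.tsum_sigma habs.of_abs
  obtain ⟨hfib, hsums⟩ := (summable_sigma_of_nonneg
    (fun p : Σ n : ℕ, {f : Fin n → ℕ+ // StrictMono f} => abs_nonneg (∏ i, φ3 (p.2.1 i)))).mp habs
  have hSS : Summable (SS φ3) := by
    refine Summable.of_abs (Summable.of_nonneg_of_le (fun n => abs_nonneg _) (fun n => ?_) hsums)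
    have hf' : Summable (fun f : {f : Fin n → ℕ+ // StrictMono f} => ‖∏ i, φ3 (f.1 i)‖) :=
      (hfib n).congr fun f => (Real.norm_eq_abs _).symm
    have hle := norm_tsum_le_tsum_norm (f := fun f : {f : Fin n → ℕ+ // StrictMono f} =>
      ∏ i, φ3 (f.1 i)) hf'
    calc |SS φ3 n| ≤ ∑' f : {f : Fin n → ℕ+ // StrictMono f}, ‖∏ i, φ3 (f.1 i)‖ := by
          rw [SS, ← Real.norm_eq_abs]; exact hle
      _ = ∑' f : {f : Fin n → ℕ+ // StrictMono f}, |∏ i, φ3 (f.1 i)| :=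
          tsum_congr fun f => Real.norm_eq_abs _
  have h3 : ∑' n : ℕ, SS φ3 n = 1 + ∑' n : ℕ, SS φ3 (n + 1) := by
    rw [Summable.tsum_eq_zero_add hSS, SS_zero]
  have h4 : ∀ n : ℕ, SS φ3 (n + 1) = mzeta (List.replicate (n + 1) 3) * x ^ (3 * (n + 1)) := by
    intro n
    rw [mzeta_const (List.replicate (n + 1) 3) 3
      (fun k hk => List.eq_of_mem_replicate hk), List.length_replicate]
    rw [pow_mul, SS_mul]
    refine congrArg (fun ψ => SS ψ (n + 1)) ?_
    funext m
    rw [hφ3]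
    exact (pow_div_eq x m 3).symm
  rw [h1, h2, h3, tsum_congr h4]

end MHSF

/-- Sum formula for maximal-height MZVs:
1 + ∑_{k≥2} T(k)xᵏ = (1 + ∑_{n≥1} ζ*(2,…,2)x^{2n})(1 + ∑_{n≥1} ζ(3,…,3)x^{3n}). -/
theorem maximal_height_sum_formula (x : ℝ) (h : |x| < 1) :
    1 + ∑' k : ℕ, T (k + 2) * x ^ (k + 2) =
      (1 + ∑' n : ℕ, mzetaStar (List.replicate (n + 1) 2) * x ^ (2 * (n + 1))) *
        (1 + ∑' n : ℕ, mzeta (List.replicate (n + 1) 3) * x ^ (3 * (n + 1))) := by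
  classical
  rw [MHSF.Lside h, MHSF.Aside h, MHSF.Bside h]
  have hnA : Summable (fun μ : ℕ+ →₀ ℕ => ‖MHSF.FA x μ‖) := by
    refine (MHSF.summable_FA_abs h).congr fun μ => ?_
    rw [Real.norm_eq_abs]
  have hnB : Summable (fun s : Finset ℕ+ => ‖MHSF.FB x s‖) := by
    refine (MHSF.summable_FB_abs h).congr fun s => ?_
    rw [Real.norm_eq_abs]
  rw [tsum_mul_tsum_of_summable_norm hnA hnB]
  rw [← Equiv.tsum_eq MHSF.pairEquiv (fun e : MHSF.Eidx => MHSF.w x e.1)]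
  exact tsum_congr fun z => MHSF.w_pairEquiv x z
end

section
/- For each fixed weight k ≥ 2, the sum T(k) of all multiple zeta values of weight k with all entries ≥ 2 satisfies T(k) = Σ_{2a + 3b = k, a,b ≥ 0} ζ*(2,...,2) (a twos) · ζ(3,...,3) (b threes), with empty products interpreted as 1. -/
open scoped BigOperators

open scoped ENNReal

namespace MHS

noncomputable def et (v : ℕ+) (k : ℕ) : ℝ≥0∞ := (((v:ℕ):ℝ≥0∞))⁻¹ ^ k

lemma et_ne_top (v : ℕ+) (k : ℕ) : et v k ≠ ⊤ := by
  apply ENNReal.pow_ne_top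
  rw [ENNReal.inv_ne_top]
  exact_mod_cast v.pos.ne'

lemma toReal_et (v : ℕ+) (k : ℕ) : (et v k).toReal = 1 / ((v:ℕ):ℝ) ^ k := by
  rw [et, ENNReal.toReal_pow, ENNReal.toReal_inv, ENNReal.toReal_natCast, one_div, inv_pow]

lemma et_eq_ofReal (v : ℕ+) (k : ℕ) : et v k = ENNReal.ofReal (1 / ((v:ℕ):ℝ) ^ k) := by
  rw [← toReal_et, ENNReal.ofReal_toReal (et_ne_top v k)]

noncomputable def eZ (ks : List ℕ) : ℝ≥0∞ :=
  ∑' f : {f : Fin ks.length → ℕ+ // StrictMono f},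
    ∏ i : Fin ks.length, et (f.1 i) (ks.get i)

noncomputable def eZs (ks : List ℕ) : ℝ≥0∞ :=
  ∑' f : {f : Fin ks.length → ℕ+ // Monotone f},
    ∏ i : Fin ks.length, et (f.1 i) (ks.get i)

lemma prod_et_ne_top {n : ℕ} (f : Fin n → ℕ+) (c : Fin n → ℕ) :
    (∏ i : Fin n, et (f i) (c i)) ≠ ⊤ := by
  exact ENNReal.prod_ne_top (fun i _ => et_ne_top _ _)

lemma toReal_prod_et {n : ℕ} (f : Fin n → ℕ+) (c : Fin n → ℕ) :
    (∏ i : Fin n, et (f i) (c i)).toReal = ∏ i : Fin n, (1:ℝ) / ((f i : ℕ) : ℝ) ^ c i := by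
  rw [ENNReal.toReal_prod]
  exact Finset.prod_congr rfl fun i _ => toReal_et _ _

lemma mzeta_eq (ks : List ℕ) : mzeta ks = (eZ ks).toReal := by
  rw [mzeta, eZ, ENNReal.tsum_toReal_eq (fun f => prod_et_ne_top _ _)]
  exact tsum_congr fun f => (toReal_prod_et _ _).symm

lemma mzetaStar_eq (ks : List ℕ) : mzetaStar ks = (eZs ks).toReal := by
  rw [mzetaStar, eZs, ENNReal.tsum_toReal_eq (fun f => prod_et_ne_top _ _)]
  exact tsum_congr fun f => (toReal_prod_et _ _).symm

lemma summable_pnat {k : ℕ} (hk : 2 ≤ k) :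
    Summable (fun v : ℕ+ => (1:ℝ) / ((v:ℕ):ℝ) ^ k) := by
  have h : Summable (fun n : ℕ => (1:ℝ) / (n:ℝ) ^ k) :=
    Real.summable_one_div_nat_pow.mpr (by omega)
  exact h.comp_injective PNat.coe_injective

lemma tsum_et_ne_top {k : ℕ} (hk : 2 ≤ k) : (∑' v : ℕ+, et v k) ≠ ⊤ := by
  have : (∑' v : ℕ+, et v k) = ENNReal.ofReal (∑' v : ℕ+, (1:ℝ) / ((v:ℕ):ℝ) ^ k) := by
    rw [ENNReal.ofReal_tsum_of_nonneg (fun v => by positivity) (summable_pnat hk)]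
    exact tsum_congr fun v => et_eq_ofReal v k
  rw [this]
  exact ENNReal.ofReal_ne_top

lemma tsum_pi_prod : ∀ (n : ℕ) (g : Fin n → ℕ+ → ℝ≥0∞),
    (∑' f : Fin n → ℕ+, ∏ i, g i (f i)) = ∏ i, ∑' v, g i v := by
  intro n
  induction n with
  | zero =>
    intro g
    simp only [Finset.univ_eq_empty, Finset.prod_empty]
    exact tsum_eq_single default fun b hb => absurd (Subsingleton.elim b default) hb
  | succ n ih =>
    intro g
    rw [← (Fin.consEquiv (fun _ : Fin (n+1) => ℕ+)).tsum_eq]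
    have h1 : ∀ p : ℕ+ × (Fin n → ℕ+),
        (∏ i, g i ((Fin.consEquiv (fun _ : Fin (n+1) => ℕ+)) p i)) =
        g 0 p.1 * ∏ i : Fin n, g i.succ (p.2 i) := by
      intro p
      rw [Fin.prod_univ_succ]
      simp [Fin.consEquiv]
    calc (∑' p : ℕ+ × (Fin n → ℕ+), ∏ i, g i ((Fin.consEquiv (fun _ : Fin (n+1) => ℕ+)) p i))
        = ∑' v : ℕ+, ∑' f : Fin n → ℕ+, g 0 v * ∏ i : Fin n, g i.succ (f i) := by
          rw [ENNReal.tsum_prod']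
          exact tsum_congr fun v => tsum_congr fun f => h1 (v, f)
      _ = (∑' v : ℕ+, g 0 v) * ∏ i : Fin n, ∑' w, g i.succ w := by
          rw [← ENNReal.tsum_mul_right]
          exact tsum_congr fun v => by rw [ENNReal.tsum_mul_left, ih]
      _ = ∏ i, ∑' v, g i v := by rw [Fin.prod_univ_succ]

lemma eZ_ne_top {ks : List ℕ} (h : ∀ i ∈ ks, 2 ≤ i) : eZ ks ≠ ⊤ := by
  have hle : eZ ks ≤ ∑' f : Fin ks.length → ℕ+, ∏ i, et (f i) (ks.get i) :=
    ENNReal.tsum_comp_le_tsum_of_injective Subtype.val_injective _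
  have hle' := hle.trans_eq (tsum_pi_prod ks.length (fun i v => et v (ks.get i)))
  refine ne_top_of_le_ne_top ?_ hle'
  exact ENNReal.prod_ne_top fun i _ => tsum_et_ne_top (h _ (ks.get_mem _))

lemma eZs_ne_top {ks : List ℕ} (h : ∀ i ∈ ks, 2 ≤ i) : eZs ks ≠ ⊤ := by
  have hle : eZs ks ≤ ∑' f : Fin ks.length → ℕ+, ∏ i, et (f i) (ks.get i) :=
    ENNReal.tsum_comp_le_tsum_of_injective Subtype.val_injective _
  have hle' := hle.trans_eq (tsum_pi_prod ks.length (fun i v => et v (ks.get i)))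
  refine ne_top_of_le_ne_top ?_ hle'
  exact ENNReal.prod_ne_top fun i _ => tsum_et_ne_top (h _ (ks.get_mem _))


noncomputable def w (φ : ℕ+ →₀ ℕ) : ℕ := φ.sum fun _ n => n

lemma w_add (φ ψ : ℕ+ →₀ ℕ) : w (φ + ψ) = w φ + w ψ :=
  Finsupp.sum_add_index' (fun _ => rfl) (fun _ _ _ => rfl)

lemma w_single (a : ℕ+) (n : ℕ) : w (Finsupp.single a n) = n :=
  Finsupp.sum_single_index rfl

lemma w_eq_sum_support (φ : ℕ+ →₀ ℕ) : w φ = ∑ v ∈ φ.support, φ v := rfl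

lemma w_sum {ι : Type*} (s : Finset ι) (x : ι → ℕ+) (c : ι → ℕ) :
    w (∑ i ∈ s, Finsupp.single (x i) (c i)) = ∑ i ∈ s, c i := by
  classical
  induction s using Finset.cons_induction with
  | empty => simp [w]
  | cons a s ha ih => rw [Finset.sum_cons, Finset.sum_cons, w_add, w_single, ih]

lemma sum_single_apply {ι : Type*} [Fintype ι] (x : ι → ℕ+) (c : ι → ℕ) (v : ℕ+) :
    (∑ i, Finsupp.single (x i) (c i)) v = ∑ i, if x i = v then c i else 0 := by
  rw [Finsupp.finset_sum_apply]
  exact Finset.sum_congr rfl fun i _ => Finsupp.single_apply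

lemma sum_single_apply_eq {ι : Type*} [Fintype ι] {f : ι → ℕ+} (hf : Function.Injective f)
    (c : ι → ℕ) (j : ι) : (∑ i, Finsupp.single (f i) (c i)) (f j) = c j := by
  classical
  rw [sum_single_apply, Finset.sum_eq_single j]
  · simp
  · intro i _ hij; exact if_neg fun h => hij (hf h)
  · simp

lemma sum_single_apply_ne {ι : Type*} [Fintype ι] {f : ι → ℕ+} (c : ι → ℕ) {v : ℕ+}
    (hv : ∀ i, f i ≠ v) : (∑ i, Finsupp.single (f i) (c i)) v = 0 := by
  rw [sum_single_apply]
  exact Finset.sum_eq_zero fun i _ => if_neg (hv i)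

lemma support_sum_single {ι : Type*} [Fintype ι] {f : ι → ℕ+} (hf : Function.Injective f)
    {c : ι → ℕ} (hc : ∀ i, c i ≠ 0) :
    (∑ i, Finsupp.single (f i) (c i)).support = Finset.image f Finset.univ := by
  classical
  ext v
  simp only [Finsupp.mem_support_iff, Finset.mem_image, Finset.mem_univ, true_and]
  constructor
  · intro h
    by_contra hne
    push_neg at hne
    exact h (sum_single_apply_ne c hne)
  · rintro ⟨i, rfl⟩
    rw [sum_single_apply_eq hf]
    exact hc i

noncomputable def eterm (φ : ℕ+ →₀ ℕ) : ℝ≥0∞ := ∏ v ∈ φ.support, et v (φ v)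

lemma eterm_sum_single {ι : Type*} [Fintype ι] {f : ι → ℕ+} (hf : Function.Injective f)
    {c : ι → ℕ} (hc : ∀ i, c i ≠ 0) :
    eterm (∑ i, Finsupp.single (f i) (c i)) = ∏ i, et (f i) (c i) := by
  classical
  rw [eterm, support_sum_single hf hc, Finset.prod_image (fun a _ b _ h => hf h)]
  exact Finset.prod_congr rfl fun i _ => by rw [sum_single_apply_eq hf]

lemma list_sum_get (l : List ℕ) : (∑ i, l.get i) = l.sum := by
  conv_rhs => rw [← List.ofFn_get l, List.sum_ofFn]

lemma list_get_ge2 {l : List ℕ} (h : ∀ i ∈ l, 2 ≤ i) (i : Fin l.length) : 2 ≤ l.get i :=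
  h _ (List.get_mem l i)

def P (k : ℕ) (φ : ℕ+ →₀ ℕ) : Prop := (∀ v, φ v ≠ 1) ∧ w φ = k

def idxA (k : ℕ) := Σ l : {l : List ℕ // l ≠ [] ∧ (∀ i ∈ l, 2 ≤ i) ∧ l.sum = k},
  {f : Fin l.1.length → ℕ+ // StrictMono f}

lemma phiA_mem (k : ℕ) (x : idxA k) :
    P k (∑ i, Finsupp.single (x.2.1 i) (x.1.1.get i)) := by
  constructor
  · intro v
    by_cases hv : ∃ i, x.2.1 i = v
    · obtain ⟨i, rfl⟩ := hv
      rw [sum_single_apply_eq x.2.2.injective]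
      have := list_get_ge2 x.1.2.2.1 i
      omega
    · push_neg at hv
      rw [sum_single_apply_ne _ hv]
      omega
  · rw [w_sum, list_sum_get]
    exact x.1.2.2.2

noncomputable def phiA (k : ℕ) (x : idxA k) : {φ : ℕ+ →₀ ℕ // P k φ} :=
  ⟨∑ i, Finsupp.single (x.2.1 i) (x.1.1.get i), phiA_mem k x⟩

lemma phiA_bij (k : ℕ) (hk : k ≠ 0) : Function.Bijective (phiA k) := by
  constructor
  · rintro ⟨⟨l₁, hl₁⟩, f₁, hf₁⟩ ⟨⟨l₂, hl₂⟩, f₂, hf₂⟩ h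
    have hφ : (∑ i, Finsupp.single (f₁ i) (l₁.get i)) =
        ∑ i, Finsupp.single (f₂ i) (l₂.get i) := congrArg Subtype.val h
    have hc₁ : ∀ i, l₁.get i ≠ 0 := fun i => by have := list_get_ge2 hl₁.2.1 i; omega
    have hc₂ : ∀ i, l₂.get i ≠ 0 := fun i => by have := list_get_ge2 hl₂.2.1 i; omega
    have himg : Finset.image f₁ Finset.univ = Finset.image f₂ Finset.univ := by
      rw [← support_sum_single hf₁.injective hc₁, ← support_sum_single hf₂.injective hc₂, hφ]
    have hn : l₁.length = l₂.length := by
      have h1 : (Finset.image f₁ Finset.univ).card = l₁.length := by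
        rw [Finset.card_image_of_injective _ hf₁.injective, Finset.card_univ, Fintype.card_fin]
      have h2 : (Finset.image f₂ Finset.univ).card = l₂.length := by
        rw [Finset.card_image_of_injective _ hf₂.injective, Finset.card_univ, Fintype.card_fin]
      rw [← h1, ← h2, himg]
    have hgmono : StrictMono (fun i => f₂ (Fin.cast hn i)) :=
      fun a b hab => hf₂ hab
    have hs : (Finset.image f₁ Finset.univ).card = l₁.length := by
      rw [Finset.card_image_of_injective _ hf₁.injective, Finset.card_univ, Fintype.card_fin]
    have he₁ : f₁ = ⇑((Finset.image f₁ Finset.univ).orderEmbOfFin hs) :=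
      Finset.orderEmbOfFin_unique hs (fun i => Finset.mem_image_of_mem _ (Finset.mem_univ i)) hf₁
    have he₂ : (fun i => f₂ (Fin.cast hn i)) = ⇑((Finset.image f₁ Finset.univ).orderEmbOfFin hs) :=
      Finset.orderEmbOfFin_unique hs
        (fun i => by rw [himg]; exact Finset.mem_image_of_mem _ (Finset.mem_univ _)) hgmono
    have hfg : f₁ = fun i => f₂ (Fin.cast hn i) := he₁.trans he₂.symm
    have hl : l₁ = l₂ := by
      apply List.ext_get hn
      intro i hi1 hi2
      have e1 : (∑ j, Finsupp.single (f₁ j) (l₁.get j)) (f₁ ⟨i, hi1⟩) = l₁.get ⟨i, hi1⟩ :=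
        sum_single_apply_eq hf₁.injective _ _
      have e2 : (∑ j, Finsupp.single (f₂ j) (l₂.get j)) (f₂ ⟨i, hi2⟩) = l₂.get ⟨i, hi2⟩ :=
        sum_single_apply_eq hf₂.injective _ _
      have hx : f₁ ⟨i, hi1⟩ = f₂ ⟨i, hi2⟩ := by rw [hfg]; rfl
      rw [← e1, ← e2, hφ, hx]
    subst hl
    have hff : f₁ = f₂ := by rw [hfg]; rfl
    subst hff
    rfl
  · rintro ⟨φ, hφ1, hφ2⟩
    have himg : Finset.image (fun i => φ.support.orderEmbOfFin rfl i) Finset.univ = φ.support := by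
      apply Finset.coe_injective
      rw [Finset.coe_image, Finset.coe_univ, Set.image_univ]
      exact Finset.range_orderEmbOfFin φ.support rfl
    have hfmono : StrictMono (fun i => φ.support.orderEmbOfFin rfl i) :=
      (φ.support.orderEmbOfFin rfl).strictMono
    have hlen : (List.ofFn (fun i => φ (φ.support.orderEmbOfFin rfl i))).length =
        φ.support.card := List.length_ofFn
    have hlget : ∀ i, (List.ofFn (fun i => φ (φ.support.orderEmbOfFin rfl i))).get i =
        φ (φ.support.orderEmbOfFin rfl (Fin.cast hlen i)) := fun i => List.get_ofFn _ i
    have hmem : ∀ m ∈ List.ofFn (fun i => φ (φ.support.orderEmbOfFin rfl i)), 2 ≤ m := by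
      intro m hm
      rw [List.mem_ofFn] at hm
      obtain ⟨i, rfl⟩ := hm
      have h0 : φ (φ.support.orderEmbOfFin rfl i) ≠ 0 :=
        Finsupp.mem_support_iff.mp (Finset.orderEmbOfFin_mem _ rfl i)
      have h1 := hφ1 (φ.support.orderEmbOfFin rfl i)
      change 2 ≤ φ (φ.support.orderEmbOfFin rfl i)
      omega
    have hsum : (List.ofFn (fun i => φ (φ.support.orderEmbOfFin rfl i))).sum = k := by
      rw [← list_sum_get]
      have e1 : (∑ i, (List.ofFn (fun i => φ (φ.support.orderEmbOfFin rfl i))).get i) =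
          ∑ j : Fin φ.support.card, φ (φ.support.orderEmbOfFin rfl j) := by
        rw [← (finCongr hlen).sum_comp (fun j : Fin φ.support.card =>
          φ (φ.support.orderEmbOfFin rfl j))]
        exact Finset.sum_congr rfl fun i _ => hlget i
      have hsup : (∑ j : Fin φ.support.card, φ (φ.support.orderEmbOfFin rfl j)) =
          ∑ v ∈ φ.support, φ v := by
        conv_rhs => rw [← himg]
        rw [Finset.sum_image (fun a _ b _ hab => hfmono.injective hab)]
      rw [e1, hsup, ← w_eq_sum_support, hφ2]
    have hne : List.ofFn (fun i => φ (φ.support.orderEmbOfFin rfl i)) ≠ [] := by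
      intro hcon
      rw [hcon] at hsum
      exact hk hsum.symm
    refine ⟨⟨⟨List.ofFn (fun i => φ (φ.support.orderEmbOfFin rfl i)), hne, hmem, hsum⟩,
      ⟨fun i => φ.support.orderEmbOfFin rfl (Fin.cast hlen i), ?_⟩⟩, ?_⟩
    · exact fun a b hab => hfmono hab
    · apply Subtype.ext
      show (∑ i : Fin (List.ofFn fun i => φ ((φ.support.orderEmbOfFin rfl) i)).length,
        Finsupp.single ((φ.support.orderEmbOfFin rfl) (Fin.cast hlen i))
          ((List.ofFn fun i => φ ((φ.support.orderEmbOfFin rfl) i)).get i)) = φ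
      have e2 : (∑ i, Finsupp.single (φ.support.orderEmbOfFin rfl (Fin.cast hlen i))
            ((List.ofFn (fun i => φ (φ.support.orderEmbOfFin rfl i))).get i)) =
          ∑ j : Fin φ.support.card, Finsupp.single (φ.support.orderEmbOfFin rfl j)
            (φ (φ.support.orderEmbOfFin rfl j)) := by
        rw [← (finCongr hlen).sum_comp (fun j : Fin φ.support.card =>
          Finsupp.single (φ.support.orderEmbOfFin rfl j) (φ (φ.support.orderEmbOfFin rfl j)))]
        exact Finset.sum_congr rfl fun i _ => by rw [hlget i]; rfl
      rw [e2]
      ext v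
      by_cases hv : v ∈ φ.support
      · rw [← himg] at hv
        obtain ⟨j, _, rfl⟩ := Finset.mem_image.mp hv
        rw [sum_single_apply_eq hfmono.injective]
      · rw [sum_single_apply_ne]
        · exact (Finsupp.notMem_support_iff.mp hv).symm
        · intro i hcon
          exact hv (hcon ▸ Finset.orderEmbOfFin_mem _ rfl i)

/-! ### Part B : the right-hand side -/

def Q (k : ℕ) (cs : (ℕ+ →₀ ℕ) × Finset ℕ+) : Prop :=
  2 * w cs.1 + 3 * cs.2.card = k

noncomputable def W (cs : (ℕ+ →₀ ℕ) × Finset ℕ+) : ℝ≥0∞ :=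
  (∏ v ∈ cs.1.support, et v (2 * cs.1 v)) * ∏ v ∈ cs.2, et v 3

def idxB (k : ℕ) := Σ ab : {ab : ℕ × ℕ // 2 * ab.1 + 3 * ab.2 = k},
  {g : Fin (List.replicate ab.1.1 2).length → ℕ+ // Monotone g} ×
  {h : Fin (List.replicate ab.1.2 3).length → ℕ+ // StrictMono h}

lemma count_apply {n : ℕ} (g : Fin n → ℕ+) (v : ℕ+) :
    (∑ i, Finsupp.single (g i) 1) v = (Finset.univ.filter (fun i => g i = v)).card := by
  rw [sum_single_apply]
  exact (Finset.card_filter _ _).symm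

lemma support_sum_single_ones {n : ℕ} (g : Fin n → ℕ+) :
    (∑ i, Finsupp.single (g i) 1).support = Finset.image g Finset.univ := by
  ext v
  simp only [Finsupp.mem_support_iff, count_apply, Finset.mem_image, Finset.mem_univ, true_and]
  rw [Ne, Finset.card_eq_zero, ← Ne, ← Finset.nonempty_iff_ne_empty, Finset.filter_nonempty_iff]
  simp

lemma w_sum_single_ones {n : ℕ} (g : Fin n → ℕ+) : w (∑ i, Finsupp.single (g i) 1) = n := by
  rw [w_sum]
  simp

lemma toMultiset_sum_single {n : ℕ} (g : Fin n → ℕ+) :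
    Finsupp.toMultiset (∑ i, Finsupp.single (g i) 1) = ↑(List.ofFn g) := by
  rw [map_sum]
  have h1 : ∀ i : Fin n, Finsupp.toMultiset (Finsupp.single (g i) 1) = ({g i} : Multiset ℕ+) :=
    fun i => by rw [Finsupp.toMultiset_single, one_nsmul]
  rw [Finset.sum_congr rfl (fun i _ => h1 i)]
  rw [Finset.sum_eq_multiset_sum]
  have h2 : Multiset.map (fun i => ({g i} : Multiset ℕ+)) Finset.univ.val =
      Multiset.map (fun a => ({a} : Multiset ℕ+)) (Multiset.map g Finset.univ.val) := by
    rw [Multiset.map_map]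
    rfl
  rw [h2, Multiset.sum_map_singleton]
  rw [Fin.univ_val_map]

lemma sorted_ofFn {n : ℕ} {g : Fin n → ℕ+} (hg : Monotone g) :
    List.Pairwise (· ≤ ·) (List.ofFn g) :=
  List.pairwise_ofFn.mpr fun _ _ hij => hg hij.le

lemma mono_eq_of_sum_single_eq {n : ℕ} {g g' : Fin n → ℕ+} (hg : Monotone g) (hg' : Monotone g')
    (h : (∑ i, Finsupp.single (g i) 1) = ∑ i, Finsupp.single (g' i) 1) : g = g' := by
  have hm : (↑(List.ofFn g) : Multiset ℕ+) = ↑(List.ofFn g') := by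
    rw [← toMultiset_sum_single, ← toMultiset_sum_single, h]
  have hperm := Multiset.coe_eq_coe.mp hm
  exact List.ofFn_injective (List.Perm.eq_of_pairwise' (sorted_ofFn hg) (sorted_ofFn hg') hperm)

lemma phiB_mem (k : ℕ) (x : idxB k) :
    Q k (∑ i, Finsupp.single (x.2.1.1 i) 1, Finset.image x.2.2.1 Finset.univ) := by
  obtain ⟨⟨⟨a, b⟩, hab⟩, ⟨g, hg⟩, ⟨h, hh⟩⟩ := x
  show 2 * w (∑ i, Finsupp.single (g i) 1) + 3 * (Finset.image h Finset.univ).card = k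
  rw [w_sum_single_ones, Finset.card_image_of_injective _ hh.injective, Finset.card_univ,
    Fintype.card_fin, List.length_replicate, List.length_replicate]
  exact hab

noncomputable def phiB (k : ℕ) (x : idxB k) : {cs : (ℕ+ →₀ ℕ) × Finset ℕ+ // Q k cs} :=
  ⟨(∑ i, Finsupp.single (x.2.1.1 i) 1, Finset.image x.2.2.1 Finset.univ), phiB_mem k x⟩

lemma strictmono_eq_of_image_eq {n : ℕ} {f f' : Fin n → ℕ+} (hf : StrictMono f)
    (hf' : StrictMono f')
    (h : Finset.image f Finset.univ = Finset.image f' Finset.univ) : f = f' := by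
  have hs : (Finset.image f Finset.univ).card = n := by
    rw [Finset.card_image_of_injective _ hf.injective, Finset.card_univ, Fintype.card_fin]
  have he₁ : f = ⇑((Finset.image f Finset.univ).orderEmbOfFin hs) :=
    Finset.orderEmbOfFin_unique hs (fun i => Finset.mem_image_of_mem _ (Finset.mem_univ i)) hf
  have he₂ : f' = ⇑((Finset.image f Finset.univ).orderEmbOfFin hs) :=
    Finset.orderEmbOfFin_unique hs
      (fun i => by rw [h]; exact Finset.mem_image_of_mem _ (Finset.mem_univ i)) hf'
  rw [he₁, he₂]

lemma phiB_bij (k : ℕ) : Function.Bijective (phiB k) := by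
  constructor
  · rintro ⟨⟨⟨a₁, b₁⟩, hab₁⟩, ⟨g₁, hg₁⟩, ⟨h₁, hh₁⟩⟩ ⟨⟨⟨a₂, b₂⟩, hab₂⟩, ⟨g₂, hg₂⟩, ⟨h₂, hh₂⟩⟩ h
    have hcs : ((∑ i, Finsupp.single (g₁ i) 1 : ℕ+ →₀ ℕ), Finset.image h₁ Finset.univ) =
        ((∑ i, Finsupp.single (g₂ i) 1 : ℕ+ →₀ ℕ), Finset.image h₂ Finset.univ) :=
      congrArg Subtype.val h
    have hc : (∑ i, Finsupp.single (g₁ i) 1 : ℕ+ →₀ ℕ) = ∑ i, Finsupp.single (g₂ i) 1 :=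
      congrArg Prod.fst hcs
    have hS : Finset.image h₁ Finset.univ = Finset.image h₂ Finset.univ :=
      congrArg Prod.snd hcs
    have ha : a₁ = a₂ := by
      have e1 := w_sum_single_ones g₁
      have e2 := w_sum_single_ones g₂
      rw [hc] at e1
      rw [e1] at e2
      simpa [List.length_replicate] using e2
    have hb : b₁ = b₂ := by
      have e1 : (Finset.image h₁ Finset.univ).card = (List.replicate b₁ 3).length := by
        rw [Finset.card_image_of_injective _ hh₁.injective, Finset.card_univ, Fintype.card_fin]
      have e2 : (Finset.image h₂ Finset.univ).card = (List.replicate b₂ 3).length := by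
        rw [Finset.card_image_of_injective _ hh₂.injective, Finset.card_univ, Fintype.card_fin]
      rw [hS, e2] at e1
      simpa [List.length_replicate] using e1.symm
    subst ha; subst hb
    have hgg : g₁ = g₂ := mono_eq_of_sum_single_eq hg₁ hg₂ hc
    have hhh : h₁ = h₂ := strictmono_eq_of_image_eq hh₁ hh₂ hS
    subst hgg; subst hhh
    rfl
  · rintro ⟨⟨c, S⟩, hQ⟩
    have hQ' : 2 * w c + 3 * S.card = k := hQ
    -- construct the monotone function from c
    have hlen : (Multiset.sort (Finsupp.toMultiset c) (· ≤ ·)).length =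
        (List.replicate (w c) 2).length := by
      rw [Multiset.length_sort, Finsupp.card_toMultiset, List.length_replicate]
      rfl
    set L := Multiset.sort (Finsupp.toMultiset c) (· ≤ ·) with hL
    set g : Fin (List.replicate (w c) 2).length → ℕ+ :=
      fun i => L.get (Fin.cast hlen.symm i) with hgdef
    have hgmono : Monotone g := by
      intro i j hij
      exact (Multiset.pairwise_sort _ _).rel_get_of_le hij
    have hgsum : (∑ i, Finsupp.single (g i) 1) = c := by
      have hm : Finsupp.toMultiset (∑ i, Finsupp.single (g i) 1) = Finsupp.toMultiset c := by
        rw [toMultiset_sum_single]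
        have hofn : List.ofFn g = L := by
          apply List.ext_get
          · rw [List.length_ofFn]; exact hlen.symm
          · intro i hi1 hi2
            rw [List.get_ofFn]
            rfl
        rw [hofn, hL, Multiset.sort_eq]
      have : ∀ v, (∑ i, Finsupp.single (g i) 1) v = c v := by
        intro v
        rw [← Finsupp.count_toMultiset, ← Finsupp.count_toMultiset, hm]
      exact Finsupp.ext this
    -- construct the strictmono function from S
    have hScard : S.card = (List.replicate S.card 3).length := List.length_replicate.symm
    set f : Fin (List.replicate S.card 3).length → ℕ+ := fun i => S.orderEmbOfFin hScard i
      with hfdef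
    have hfmono : StrictMono f := (S.orderEmbOfFin hScard).strictMono
    have himg : Finset.image f Finset.univ = S := by
      apply Finset.coe_injective
      rw [Finset.coe_image, Finset.coe_univ, Set.image_univ]
      exact Finset.range_orderEmbOfFin S hScard
    refine ⟨⟨⟨(w c, S.card), by omega⟩, ⟨g, hgmono⟩, ⟨f, hfmono⟩⟩, ?_⟩
    apply Subtype.ext
    show ((∑ i, Finsupp.single (g i) 1 : ℕ+ →₀ ℕ), Finset.image f Finset.univ) = (c, S)
    rw [hgsum, himg]

lemma valB (k : ℕ) (x : idxB k) :
    (∏ i, et (x.2.1.1 i) 2) * (∏ i, et (x.2.2.1 i) 3) = W (phiB k x).1 := by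
  obtain ⟨⟨⟨a, b⟩, hab⟩, ⟨g, hg⟩, ⟨h, hh⟩⟩ := x
  show (∏ i, et (g i) 2) * (∏ i, et (h i) 3) =
    (∏ v ∈ (∑ i, Finsupp.single (g i) 1).support, et v (2 * (∑ i, Finsupp.single (g i) 1) v)) *
      ∏ v ∈ Finset.image h Finset.univ, et v 3
  congr 1
  · rw [support_sum_single_ones]
    rw [Finset.prod_comp (fun v => et v 2) g]
    refine Finset.prod_congr rfl fun v hv => ?_
    rw [count_apply, et, et, ← pow_mul, mul_comm 2]
  · rw [Finset.prod_image (fun i _ j _ hij => hh.injective hij)]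

/-! ### Part C : the bijection between the two encodings -/

lemma phiC_apply (c : ℕ+ →₀ ℕ) (S : Finset ℕ+) (v : ℕ+) :
    ((2 • c + ∑ u ∈ S, Finsupp.single u 3 : ℕ+ →₀ ℕ)) v = 2 * c v + (if v ∈ S then 3 else 0) := by
  rw [Finsupp.add_apply, Finsupp.smul_apply, smul_eq_mul]
  congr 1
  rw [Finsupp.finset_sum_apply]
  rw [Finset.sum_congr rfl (fun u _ => Finsupp.single_apply)]
  exact Finset.sum_ite_eq' S v (fun _ => 3)

lemma w_sum_single_const (S : Finset ℕ+) (m : ℕ) :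
    w (∑ u ∈ S, Finsupp.single u m) = m * S.card := by
  rw [w_sum S (fun u => u) (fun _ => m), Finset.sum_const, smul_eq_mul, mul_comm]

lemma w_phiC (c : ℕ+ →₀ ℕ) (S : Finset ℕ+) :
    w (2 • c + ∑ u ∈ S, Finsupp.single u 3) = 2 * w c + 3 * S.card := by
  rw [two_smul, w_add, w_add, w_sum_single_const]
  ring

lemma phiC_mem (k : ℕ) (cs : {cs : (ℕ+ →₀ ℕ) × Finset ℕ+ // Q k cs}) :
    P k (2 • cs.1.1 + ∑ u ∈ cs.1.2, Finsupp.single u 3) := by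
  constructor
  · intro v
    rw [phiC_apply]
    split_ifs <;> omega
  · rw [w_phiC]
    exact cs.2

noncomputable def phiC (k : ℕ) (cs : {cs : (ℕ+ →₀ ℕ) × Finset ℕ+ // Q k cs}) :
    {φ : ℕ+ →₀ ℕ // P k φ} :=
  ⟨2 • cs.1.1 + ∑ u ∈ cs.1.2, Finsupp.single u 3, phiC_mem k cs⟩

lemma phiC_bij (k : ℕ) : Function.Bijective (phiC k) := by
  constructor
  · rintro ⟨⟨c₁, S₁⟩, hQ₁⟩ ⟨⟨c₂, S₂⟩, hQ₂⟩ h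
    have hφ : (2 • c₁ + ∑ u ∈ S₁, Finsupp.single u 3 : ℕ+ →₀ ℕ) =
        2 • c₂ + ∑ u ∈ S₂, Finsupp.single u 3 := congrArg Subtype.val h
    have happ : ∀ v, 2 * c₁ v + (if v ∈ S₁ then 3 else 0) =
        2 * c₂ v + (if v ∈ S₂ then 3 else 0) := by
      intro v
      rw [← phiC_apply, ← phiC_apply, hφ]
    have hS : S₁ = S₂ := by
      ext v
      have h3 := happ v
      constructor <;> intro hv
      · by_contra hv2
        rw [if_pos hv, if_neg hv2] at h3
        omega
      · by_contra hv2
        rw [if_neg hv2, if_pos hv] at h3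
        omega
    subst hS
    have hc : c₁ = c₂ := by
      apply Finsupp.ext
      intro v
      have h3 := happ v
      split_ifs at h3 <;> omega
    subst hc
    rfl
  · rintro ⟨φ, hφ1, hφ2⟩
    set c : ℕ+ →₀ ℕ := Finsupp.mapRange (fun n => (n - 3 * (n % 2)) / 2) (by norm_num) φ
      with hcdef
    set S : Finset ℕ+ := φ.support.filter (fun v => φ v % 2 = 1) with hSdef
    have hSm : ∀ v, v ∈ S ↔ φ v % 2 = 1 := by
      intro v
      rw [hSdef]
      simp only [Finset.mem_filter, Finsupp.mem_support_iff]
      constructor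
      · exact And.right
      · intro hv
        exact ⟨by omega, hv⟩
    have hcv : ∀ v, c v = (φ v - 3 * (φ v % 2)) / 2 := fun v => Finsupp.mapRange_apply
    have happ : ∀ v, (2 • c + ∑ u ∈ S, Finsupp.single u 3 : ℕ+ →₀ ℕ) v = φ v := by
      intro v
      rw [phiC_apply, hcv v]
      have h1 := hφ1 v
      by_cases hv : φ v % 2 = 1
      · rw [if_pos ((hSm v).mpr hv)]
        omega
      · rw [if_neg (fun hin => hv ((hSm v).mp hin))]
        omega
    have hwc : w c = ∑ v ∈ φ.support, (φ v - 3 * (φ v % 2)) / 2 := by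
      rw [w]
      rw [Finsupp.sum_of_support_subset c Finsupp.support_mapRange _ (fun _ _ => rfl)]
      exact Finset.sum_congr rfl fun v _ => hcv v
    have hcard : S.card = ∑ v ∈ φ.support, (φ v % 2) := by
      rw [hSdef, Finset.card_filter]
      refine Finset.sum_congr rfl fun v _ => ?_
      split_ifs with h <;> omega
    have hQc : Q k (c, S) := by
      show 2 * w c + 3 * S.card = k
      rw [hwc, hcard, Finset.mul_sum, Finset.mul_sum, ← Finset.sum_add_distrib]
      rw [← hφ2, w_eq_sum_support]
      refine Finset.sum_congr rfl fun v _ => ?_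
      have h1 := hφ1 v
      omega
    exact ⟨⟨(c, S), hQc⟩, Subtype.ext (Finsupp.ext happ)⟩

lemma valC (k : ℕ) (cs : {cs : (ℕ+ →₀ ℕ) × Finset ℕ+ // Q k cs}) :
    W cs.1 = eterm (phiC k cs).1 := by
  obtain ⟨⟨c, S⟩, hQ⟩ := cs
  show (∏ v ∈ c.support, et v (2 * c v)) * (∏ v ∈ S, et v 3) =
    ∏ v ∈ (2 • c + ∑ u ∈ S, Finsupp.single u 3 : ℕ+ →₀ ℕ).support,
      et v ((2 • c + ∑ u ∈ S, Finsupp.single u 3 : ℕ+ →₀ ℕ) v)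
  have hsub : (2 • c + ∑ u ∈ S, Finsupp.single u 3 : ℕ+ →₀ ℕ).support ⊆ c.support ∪ S := by
    intro v hv
    rw [Finset.mem_union]
    by_contra hcon
    push_neg at hcon
    have h1 : c v = 0 := Finsupp.notMem_support_iff.mp hcon.1
    have h2 := Finsupp.mem_support_iff.mp hv
    rw [phiC_apply, h1, if_neg hcon.2] at h2
    omega
  have hstep1 : (∏ v ∈ (2 • c + ∑ u ∈ S, Finsupp.single u 3 : ℕ+ →₀ ℕ).support,
      et v ((2 • c + ∑ u ∈ S, Finsupp.single u 3 : ℕ+ →₀ ℕ) v)) =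
      ∏ v ∈ c.support ∪ S, et v ((2 • c + ∑ u ∈ S, Finsupp.single u 3 : ℕ+ →₀ ℕ) v) := by
    refine Finset.prod_subset hsub fun v _ hv => ?_
    rw [Finsupp.notMem_support_iff.mp hv]
    exact pow_zero _
  rw [hstep1]
  have hstep2 : ∀ v ∈ c.support ∪ S,
      et v ((2 • c + ∑ u ∈ S, Finsupp.single u 3 : ℕ+ →₀ ℕ) v) =
      et v (2 * c v) * et v (if v ∈ S then 3 else 0) := by
    intro v _
    rw [phiC_apply, et, et, et, pow_add]
  rw [Finset.prod_congr rfl hstep2, Finset.prod_mul_distrib]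
  congr 1
  · exact Finset.prod_subset Finset.subset_union_left fun v _ hv => by
      rw [Finsupp.notMem_support_iff.mp hv, Nat.mul_zero]; exact pow_zero _
  · have e1 : ∏ v ∈ S, et v 3 = ∏ v ∈ S, et v (if v ∈ S then 3 else 0) :=
      Finset.prod_congr rfl fun v hv => by rw [if_pos hv]
    rw [e1]
    exact Finset.prod_subset Finset.subset_union_right fun v _ hv => by
      rw [if_neg hv]; exact pow_zero _

/-! ### Assembly -/

noncomputable def eT (k : ℕ) : ℝ≥0∞ :=
  ∑' l : {l : List ℕ // l ≠ [] ∧ (∀ i ∈ l, 2 ≤ i) ∧ l.sum = k}, eZ l.1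

lemma T_eq (k : ℕ) : T k = (eT k).toReal := by
  rw [T, eT, ENNReal.tsum_toReal_eq (fun l => eZ_ne_top l.2.2.1)]
  exact tsum_congr fun l => mzeta_eq l.1

lemma replicate_mem {a m : ℕ} (hm : 2 ≤ m) : ∀ i ∈ List.replicate a m, 2 ≤ i := by
  intro i hi
  rw [List.eq_of_mem_replicate hi]
  exact hm

lemma eZs_replicate (a : ℕ) : eZs (List.replicate a 2) =
    ∑' g : {g : Fin (List.replicate a 2).length → ℕ+ // Monotone g}, ∏ i, et (g.1 i) 2 :=
  tsum_congr fun g => Finset.prod_congr rfl fun i _ => by rw [List.get_eq_getElem, List.getElem_replicate]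

lemma eZ_replicate (b : ℕ) : eZ (List.replicate b 3) =
    ∑' h : {h : Fin (List.replicate b 3).length → ℕ+ // StrictMono h}, ∏ i, et (h.1 i) 3 :=
  tsum_congr fun h => Finset.prod_congr rfl fun i _ => by rw [List.get_eq_getElem, List.getElem_replicate]

lemma tsum_prod_mul {α β : Type*} (f : α → ℝ≥0∞) (g : β → ℝ≥0∞) :
    ∑' p : α × β, f p.1 * g p.2 = (∑' a, f a) * ∑' b, g b := by
  rw [ENNReal.tsum_prod']
  have h1 : ∀ a, (∑' b, f (a, b).1 * g (a, b).2) = f a * ∑' b, g b :=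
    fun a => by exact ENNReal.tsum_mul_left (a := f a) (f := g)
  rw [tsum_congr h1]
  exact ENNReal.tsum_mul_right

set_option maxHeartbeats 1000000 in
lemma eT_eq_phi {k : ℕ} (hk : k ≠ 0) : eT k = ∑' φ : {φ : ℕ+ →₀ ℕ // P k φ}, eterm φ.1 := by
  have h1 : eT k = ∑' x : idxA k, ∏ i, et (x.2.1 i) (x.1.1.get i) :=
    (ENNReal.tsum_sigma (β := fun l : {l : List ℕ // l ≠ [] ∧ (∀ i ∈ l, 2 ≤ i) ∧ l.sum = k} =>
      {f : Fin l.1.length → ℕ+ // StrictMono f})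
      (fun l f => ∏ i, et (f.1 i) (l.1.get i))).symm
  rw [h1, ← (Equiv.ofBijective (phiA k) (phiA_bij k hk)).tsum_eq (fun φ => eterm φ.1)]
  refine tsum_congr fun x => ?_
  have hc : ∀ i, x.1.1.get i ≠ 0 := fun i => by have := list_get_ge2 x.1.2.2.1 i; omega
  exact (eterm_sum_single x.2.2.injective hc).symm

lemma eT_eq_cs {k : ℕ} (hk : k ≠ 0) :
    eT k = ∑' cs : {cs : (ℕ+ →₀ ℕ) × Finset ℕ+ // Q k cs}, W cs.1 := by
  rw [eT_eq_phi hk, ← (Equiv.ofBijective (phiC k) (phiC_bij k)).tsum_eq (fun φ => eterm φ.1)]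
  exact tsum_congr fun cs => (valC k cs).symm

set_option maxHeartbeats 1000000 in
lemma cs_eq_ab (k : ℕ) :
    (∑' cs : {cs : (ℕ+ →₀ ℕ) × Finset ℕ+ // Q k cs}, W cs.1) =
      ∑' ab : {ab : ℕ × ℕ // 2 * ab.1 + 3 * ab.2 = k},
        eZs (List.replicate ab.1.1 2) * eZ (List.replicate ab.1.2 3) := by
  have h1 : ∀ x : idxB k, W ((Equiv.ofBijective (phiB k) (phiB_bij k)) x).1 =
      (∏ i, et (x.2.1.1 i) 2) * (∏ i, et (x.2.2.1 i) 3) := fun x => (valB k x).symm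
  calc (∑' cs : {cs : (ℕ+ →₀ ℕ) × Finset ℕ+ // Q k cs}, W cs.1)
      = ∑' x : idxB k, W ((Equiv.ofBijective (phiB k) (phiB_bij k)) x).1 :=
        ((Equiv.ofBijective (phiB k) (phiB_bij k)).tsum_eq (fun cs => W cs.1)).symm
    _ = ∑' x : idxB k, (∏ i, et (x.2.1.1 i) 2) * (∏ i, et (x.2.2.1 i) 3) := tsum_congr h1
    _ = ∑' ab : {ab : ℕ × ℕ // 2 * ab.1 + 3 * ab.2 = k},
        ∑' gh : {g : Fin (List.replicate ab.1.1 2).length → ℕ+ // Monotone g} ×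
          {h : Fin (List.replicate ab.1.2 3).length → ℕ+ // StrictMono h},
          (∏ i, et (gh.1.1 i) 2) * (∏ i, et (gh.2.1 i) 3) :=
        ENNReal.tsum_sigma (fun (ab : {ab : ℕ × ℕ // 2 * ab.1 + 3 * ab.2 = k})
          (gh : {g : Fin (List.replicate ab.1.1 2).length → ℕ+ // Monotone g} ×
            {h : Fin (List.replicate ab.1.2 3).length → ℕ+ // StrictMono h}) =>
          (∏ i, et (gh.1.1 i) 2) * (∏ i, et (gh.2.1 i) 3))
    _ = ∑' ab : {ab : ℕ × ℕ // 2 * ab.1 + 3 * ab.2 = k},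
        eZs (List.replicate ab.1.1 2) * eZ (List.replicate ab.1.2 3) := by
        refine tsum_congr fun ab => ?_
        have h2 : (∑' gh : {g : Fin (List.replicate ab.1.1 2).length → ℕ+ // Monotone g} ×
            {h : Fin (List.replicate ab.1.2 3).length → ℕ+ // StrictMono h},
            (∏ i, et (gh.1.1 i) 2) * (∏ i, et (gh.2.1 i) 3)) =
            (∑' g : {g : Fin (List.replicate ab.1.1 2).length → ℕ+ // Monotone g},
              ∏ i, et (g.1 i) 2) *
            ∑' h : {h : Fin (List.replicate ab.1.2 3).length → ℕ+ // StrictMono h},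
              ∏ i, et (h.1 i) 3 :=
          tsum_prod_mul (fun g : {g : Fin (List.replicate ab.1.1 2).length → ℕ+ // Monotone g} =>
              ∏ i, et (g.1 i) 2)
            (fun h : {h : Fin (List.replicate ab.1.2 3).length → ℕ+ // StrictMono h} =>
              ∏ i, et (h.1 i) 3)
        rw [h2, eZs_replicate, eZ_replicate]

lemma ab_eq_sum (k : ℕ) :
    (∑' ab : {ab : ℕ × ℕ // 2 * ab.1 + 3 * ab.2 = k},
        eZs (List.replicate ab.1.1 2) * eZ (List.replicate ab.1.2 3)) =
      ∑ a ∈ Finset.range (k+1), ∑ b ∈ Finset.range (k+1),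
        if 2*a+3*b = k then eZs (List.replicate a 2) * eZ (List.replicate b 3) else 0 := by
  have h0 : (∑' ab : {ab : ℕ × ℕ // 2 * ab.1 + 3 * ab.2 = k},
      eZs (List.replicate ab.1.1 2) * eZ (List.replicate ab.1.2 3))
      = ∑' p : ℕ × ℕ, Set.indicator {q : ℕ × ℕ | 2 * q.1 + 3 * q.2 = k}
          (fun p => eZs (List.replicate p.1 2) * eZ (List.replicate p.2 3)) p :=
    tsum_subtype {q : ℕ × ℕ | 2 * q.1 + 3 * q.2 = k}
      (fun p => eZs (List.replicate p.1 2) * eZ (List.replicate p.2 3))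
  rw [h0]
  have hind : ∀ p : ℕ × ℕ, Set.indicator {q : ℕ × ℕ | 2 * q.1 + 3 * q.2 = k}
      (fun p => eZs (List.replicate p.1 2) * eZ (List.replicate p.2 3)) p =
      if 2 * p.1 + 3 * p.2 = k then eZs (List.replicate p.1 2) * eZ (List.replicate p.2 3)
      else 0 := by
    intro p
    by_cases hp : 2 * p.1 + 3 * p.2 = k
    · rw [Set.indicator_of_mem (show p ∈ {q : ℕ × ℕ | 2 * q.1 + 3 * q.2 = k} from hp),
        if_pos hp]
    · rw [Set.indicator_of_notMem (show p ∉ {q : ℕ × ℕ | 2 * q.1 + 3 * q.2 = k} from hp),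
        if_neg hp]
  rw [tsum_congr hind, ENNReal.tsum_prod']
  have hb : ∀ a : ℕ, (∑' b : ℕ, if 2 * a + 3 * b = k then
      eZs (List.replicate a 2) * eZ (List.replicate b 3) else 0)
      = ∑ b ∈ Finset.range (k+1), if 2 * a + 3 * b = k then
        eZs (List.replicate a 2) * eZ (List.replicate b 3) else 0 :=
    fun a => tsum_eq_sum (fun b hbm => if_neg (by rw [Finset.mem_range] at hbm; omega))
  rw [tsum_congr hb]
  exact tsum_eq_sum (fun a ha => Finset.sum_eq_zero fun b _ =>
    if_neg (by rw [Finset.mem_range] at ha; omega))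

end MHS

open MHS in
/-- T(k) = ∑_{2a+3b=k} ζ*(2,…,2) (a twos) · ζ(3,…,3) (b threes). -/
theorem maximal_height_sum_formula_coeff (k : ℕ) (hk : 2 ≤ k) :
    T k = ∑ a ∈ Finset.range (k + 1), ∑ b ∈ Finset.range (k + 1),
      if 2 * a + 3 * b = k then
        mzetaStar (List.replicate a 2) * mzeta (List.replicate b 3)
      else 0 := by
  have hne : ∀ (a b : ℕ),
      (if 2*a+3*b = k then eZs (List.replicate a 2) * eZ (List.replicate b 3) else 0) ≠ ⊤ := by
    intro a b
    split_ifs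
    · exact ENNReal.mul_ne_top (eZs_ne_top (replicate_mem (le_refl 2)))
        (eZ_ne_top (replicate_mem (by norm_num)))
    · exact ENNReal.zero_ne_top
  rw [T_eq, eT_eq_cs (show k ≠ 0 by omega), cs_eq_ab, ab_eq_sum]
  rw [ENNReal.toReal_sum (fun a _ => ENNReal.sum_ne_top.mpr (fun b _ => hne a b))]
  refine Finset.sum_congr rfl fun a _ => ?_
  rw [ENNReal.toReal_sum (fun b _ => hne a b)]
  refine Finset.sum_congr rfl fun b _ => ?_
  split_ifs
  · rw [ENNReal.toReal_mul, mzetaStar_eq, mzeta_eq]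
  · exact ENNReal.toReal_zero
end
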